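/- arXiv:math/0210470 — 4 statements merged into one kernel-verified Lean document; each statement's English description precedes it below -/
import Mathlib

section
/- Suppose Condition 𝒜 holds. Then for every c with 0 < c < 1/K², the expected optimal value satisfies sup_n E[LP(n,c)] < ∞; that is, E[LP(n,c)] = O(1) as n → ∞. -/
open MeasureTheory ProbabilityTheory Filter

noncomputable section

/-- The sample space for a random instance of the K-LSAT problem with `n` variables and
`m` constraints, over a family of `N` prototype constraints in `K` variables: for each of the
`m` constraints we record the ordered `K`-tuple of chosen variable indices and the index of the
chosen prototype constraint. -/
abbrev LPInst (K N n m : ℕ) : Type := Fin m → (Fin K → Fin n) × Fin N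

/-- The law of a random instance: for each of the `m` constraints, independently, the `K`-tuple
of variable indices and the constraint type are chosen uniformly at random. -/
def lpMeasure (K N n m : ℕ) : Measure (LPInst K N n m) :=
  uniformOn (Set.univ : Set (LPInst K N n m))

/-- The optimal value `LP(n,c)` of the random linear program:
minimize `Σ_j ψ_j` subject to `Σ_k a_{r_j,k} x_{i_k(j)} ≤ b_{r_j} + ψ_j` for each constraint `j`,
`x_i ∈ [B¹ₓ, B²ₓ]` and `ψ_j ≥ 0`. -/
def LPval {K N n m : ℕ} (A : Fin N → Fin K → ℝ) (bv : Fin N → ℝ)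
    (B1 B2 : ℝ) (ω : LPInst K N n m) : ℝ :=
  sInf { v : ℝ | ∃ (x : Fin n → ℝ) (ψ : Fin m → ℝ),
    (∀ i, x i ∈ Set.Icc B1 B2) ∧ (∀ j, 0 ≤ ψ j) ∧
    (∀ j, ∑ k, A ((ω j).2) k * x ((ω j).1 k) ≤ bv ((ω j).2) + ψ j) ∧
    v = ∑ j, ψ j }

/-- Condition 𝒜: for every prototype constraint `a_r·y ≤ b_r`, every coordinate `k`, and every
`z ∈ [B¹ₓ, B²ₓ]`, there are `y₁,…,y_K ∈ [B¹ₓ, B²ₓ]` with `y_k = z` satisfying the constraint. -/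
def ConditionA {K N : ℕ} (A : Fin N → Fin K → ℝ) (bv : Fin N → ℝ) (B1 B2 : ℝ) : Prop :=
  ∀ r : Fin N, ∀ k : Fin K, ∀ z ∈ Set.Icc B1 B2,
    ∃ y : Fin K → ℝ, (∀ k', y k' ∈ Set.Icc B1 B2) ∧ y k = z ∧
      ∑ k', A r k' * y k' ≤ bv r

/-- Condition ℬ with explicit parameters `l` and `ν`: for every `K`-dimensional cube
`I = Π_k [t_k/l, (t_k+1)/l]` with `t_k` integer and `B¹ₓ ≤ t_k/l < B²ₓ`, some prototype
constraint `a_r·y ≤ b_r` satisfies `Σ_k a_{r,k} y_k − b_r ≥ ν` for every `y ∈ I`. -/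
def ConditionBWith {K N : ℕ} (A : Fin N → Fin K → ℝ) (bv : Fin N → ℝ) (B1 B2 : ℝ)
    (l : ℕ) (ν : ℝ) : Prop :=
  0 < l ∧ 0 < ν ∧
    ∀ t : Fin K → ℤ, (∀ k, B1 ≤ (t k : ℝ) / l ∧ (t k : ℝ) / l < B2) →
      ∃ r : Fin N, ∀ y : Fin K → ℝ,
        (∀ k, y k ∈ Set.Icc ((t k : ℝ) / l) (((t k : ℝ) + 1) / l)) →
        ν ≤ ∑ k, A r k * y k - bv r

/-- Condition ℬ: there exist a positive integer `l` and `ν > 0` as in `ConditionBWith`. -/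
def ConditionB {K N : ℕ} (A : Fin N → Fin K → ℝ) (bv : Fin N → ℝ) (B1 B2 : ℝ) : Prop :=
  ∃ (l : ℕ) (ν : ℝ), ConditionBWith A bv B1 B2 l ν

namespace LPaux

open Finset

variable {K N n m : ℕ}

def vts (ω : LPInst K N n m) (j : Fin m) (k : Fin K) : Fin n := (ω j).1 k

/-- connectivity by a chain of hyperedges from `s` -/
def Con (ω : LPInst K N n m) (s : Finset (Fin m)) (u v : Fin n) : Prop :=
  ∃ (T : ℕ) (w : ℕ → Fin n) (E : ℕ → Fin m) (ka kb : ℕ → Fin K),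
    w 0 = u ∧ w T = v ∧
    ∀ i < T, E i ∈ s ∧ vts ω (E i) (ka i) = w i ∧ vts ω (E i) (kb i) = w (i+1)

lemma con_mono {ω : LPInst K N n m} {s s' : Finset (Fin m)} (hss : s ⊆ s')
    {u v : Fin n} (h : Con ω s u v) : Con ω s' u v := by
  obtain ⟨T, w, E, ka, kb, h1, h2, h3⟩ := h
  exact ⟨T, w, E, ka, kb, h1, h2, fun i hi => ⟨hss (h3 i hi).1, (h3 i hi).2⟩⟩

lemma con_refl {ω : LPInst K N n m} (j₀ : Fin m) (k₀ : Fin K) (s : Finset (Fin m)) (u : Fin n) :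
    Con ω s u u :=
  ⟨0, fun _ => u, fun _ => j₀, fun _ => k₀, fun _ => k₀,
    rfl, rfl, fun i hi => absurd hi (Nat.not_lt_zero i)⟩

def Good (ω : LPInst K N n m) (j : Fin m) : Prop :=
  ∀ k k' : Fin K, k ≠ k' → ¬ Con ω (Finset.univ.erase j) (vts ω j k) (vts ω j k')

/-- leaf existence -/
lemma exists_leaf (ω : LPInst K N n m) (s : Finset (Fin m)) (hne : s.Nonempty) (hK : 0 < K)
    (hs : ∀ j ∈ s, ∀ k k' : Fin K, k ≠ k' → ¬ Con ω (s.erase j) (vts ω j k) (vts ω j k')) :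
    ∃ j ∈ s, ∃ k₀ : Fin K, ∀ k : Fin K, k ≠ k₀ →
      ∀ j' ∈ s.erase j, ∀ k' : Fin K, vts ω j' k' ≠ vts ω j k := by
  classical
  by_contra hcon
  push_neg at hcon
  -- a step of the walk
  have step : ∀ a : {p : Fin m × Fin K // p.1 ∈ s}, ∃ b : {p : Fin m × Fin K // p.1 ∈ s},
      b.1.1 ≠ a.1.1 ∧ ∃ ko : Fin K, ko ≠ a.1.2 ∧ vts ω b.1.1 b.1.2 = vts ω a.1.1 ko := by
    rintro ⟨⟨j, kin⟩, hj⟩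
    obtain ⟨ko, hko, j', hj', k', hk'⟩ := hcon j hj kin
    exact ⟨⟨(j', k'), (Finset.mem_erase.mp hj').2⟩, (Finset.mem_erase.mp hj').1, ko, hko, hk'⟩
  choose nxt hnxt1 hnxt2 using step
  obtain ⟨j₀, hj₀⟩ := hne
  let f : ℕ → {p : Fin m × Fin K // p.1 ∈ s} :=
    fun t => Nat.rec ⟨(j₀, ⟨0, hK⟩), hj₀⟩ (fun _ a => nxt a) t
  have hf : ∀ t, f (t+1) = nxt (f t) := fun t => rfl
  set js : ℕ → Fin m := fun t => (f t).1.1 with hjs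
  set ki : ℕ → Fin K := fun t => (f t).1.2 with hki
  choose ko hko1 hko2 using fun t => hnxt2 (f t)
  have hmem : ∀ t, js t ∈ s := fun t => (f t).2
  have hstep1 : ∀ t, js (t+1) ≠ js t := by
    intro t; have := hnxt1 (f t); rw [hjs]; simp only [hf t]; exact this
  have hstep2 : ∀ t, ko t ≠ ki t := hko1
  have hstep3 : ∀ t, vts ω (js (t+1)) (ki (t+1)) = vts ω (js t) (ko t) := by
    intro t; have := hko2 t; rw [hjs, hki]; simp only [hf t]; exact this
  -- pigeonhole
  obtain ⟨x, y, hxy, hjxy⟩ := Finite.exists_ne_map_eq_of_infinite js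
  have hP : ∃ d, 0 < d ∧ ∃ i, js i = js (i + d) := by
    rcases hxy.lt_or_gt with h | h
    · exact ⟨y - x, by omega, x, by rw [show x + (y-x) = y by omega]; exact hjxy⟩
    · exact ⟨x - y, by omega, y, by rw [show y + (x-y) = x by omega]; exact hjxy.symm⟩
  have hdec : DecidablePred fun d => 0 < d ∧ ∃ i, js i = js (i + d) :=
    fun _ => Classical.propDecidable _
  set d := Nat.find hP with hd
  obtain ⟨hdpos, i, hi⟩ := Nat.find_spec hP
  rw [← hd] at hdpos hi
  have window : ∀ a b, i ≤ a → a < b → b < i + d → js a ≠ js b := by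
    intro a b ha hab hbd heq
    have : ¬ (0 < b - a ∧ ∃ i', js i' = js (i' + (b - a))) :=
      Nat.find_min hP (by omega)
    exact this ⟨by omega, a, by rw [show a + (b-a) = b by omega]; exact heq⟩
  have hd2 : 2 ≤ d := by
    by_cases h1 : d = 1
    · rw [h1] at hi; exact absurd hi.symm (hstep1 i)
    · omega
  by_cases hcc : ko i = ki (i + d)
  · -- degenerate: the exit coordinate of the first visit equals the entry of the second
    have heq : vts ω (js (i+1)) (ki (i+1)) = vts ω (js (i+d-1)) (ko (i+d-1)) := by
      calc vts ω (js (i+1)) (ki (i+1)) = vts ω (js i) (ko i) := hstep3 i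
        _ = vts ω (js (i+d)) (ki (i+d)) := by rw [hcc, hi]
        _ = vts ω (js (i+d-1)) (ko (i+d-1)) := by
            have := hstep3 (i+d-1); rw [show i+d-1+1 = i+d by omega] at this; exact this
    by_cases hdd : d = 2
    · have h11 : i + d - 1 = i + 1 := by omega
      rw [h11] at heq
      exact hs (js (i+1)) (hmem (i+1)) (ki (i+1)) (ko (i+1)) (Ne.symm (hstep2 (i+1)))
        (heq ▸ con_refl j₀ ⟨0, hK⟩ _ _)
    · -- d ≥ 3 : cycle avoiding js (i+1)
      have hd3 : 3 ≤ d := by omega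
      apply hs (js (i+1)) (hmem (i+1)) (ko (i+1)) (ki (i+1)) (hstep2 (i+1))
      refine ⟨d - 2,
        (fun t => if t = d - 2 then vts ω (js (i+1)) (ki (i+1))
          else vts ω (js (i+2+t)) (ki (i+2+t))),
        (fun t => js (i+2+t)), (fun t => ki (i+2+t)), (fun t => ko (i+2+t)), ?_, ?_, ?_⟩
      · beta_reduce
        rw [if_neg (by omega)]
        exact hstep3 (i+1)
      · beta_reduce
        rw [if_pos rfl]
      · intro t ht
        refine ⟨Finset.mem_erase.mpr ⟨?_, hmem (i+2+t)⟩, ?_, ?_⟩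
        · exact fun h => window (i+1) (i+2+t) (by omega) (by omega) (by omega) h.symm
        · beta_reduce
          rw [if_neg (by omega)]
        · beta_reduce
          by_cases htt : t + 1 = d - 2
          · rw [if_pos htt]
            have : i+2+t = i+d-1 := by omega
            rw [this]
            exact heq.symm
          · rw [if_neg htt]
            have := hstep3 (i+2+t)
            rw [show i+2+t+1 = i+2+(t+1) by omega] at this
            exact this.symm
  · -- main case: contradiction at the repeated edge js i
    apply hs (js i) (hmem i) (ko i) (ki (i+d)) hcc
    refine ⟨d - 1,
      (fun t => vts ω (js (i+1+t)) (ki (i+1+t))),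
      (fun t => js (i+1+t)), (fun t => ki (i+1+t)), (fun t => ko (i+1+t)), ?_, ?_, ?_⟩
    · exact hstep3 i
    · show vts ω (js (i+1+(d-1))) (ki (i+1+(d-1))) = _
      rw [show i+1+(d-1) = i+d by omega, ← hi]
    · intro t ht
      refine ⟨Finset.mem_erase.mpr ⟨?_, hmem (i+1+t)⟩, rfl, ?_⟩
      · exact fun h => window i (i+1+t) le_rfl (by omega) (by omega) h.symm
      · have := hstep3 (i+1+t)
        rw [show i+1+t+1 = i+1+(t+1) by omega] at this
        exact this.symm

/-- the deterministic satisfiability lemma -/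
theorem exists_good_x {A : Fin N → Fin K → ℝ} {bv : Fin N → ℝ} {B1 B2 : ℝ}
    (hA : ConditionA A bv B1 B2) (hB : B1 ≤ B2) (hK : 0 < K)
    (ω : LPInst K N n m) (s : Finset (Fin m))
    (hs : ∀ j ∈ s, ∀ k k' : Fin K, k ≠ k' → ¬ Con ω (s.erase j) (vts ω j k) (vts ω j k')) :
    ∃ x : Fin n → ℝ, (∀ i, x i ∈ Set.Icc B1 B2) ∧
      ∀ j ∈ s, ∑ k, A ((ω j).2) k * x (vts ω j k) ≤ bv ((ω j).2) := by
  classical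
  induction s using Finset.strongInduction with
  | _ s ih =>
  rcases s.eq_empty_or_nonempty with rfl | hne
  · exact ⟨fun _ => B1, fun _ => Set.mem_Icc.mpr ⟨le_rfl, hB⟩, by simp⟩
  · obtain ⟨j, hj, k₀, hleaf⟩ := exists_leaf ω s hne hK hs
    have hsub : s.erase j ⊂ s := Finset.erase_ssubset hj
    have hs' : ∀ j' ∈ s.erase j, ∀ k k' : Fin K, k ≠ k' →
        ¬ Con ω ((s.erase j).erase j') (vts ω j' k) (vts ω j' k') := by
      intro j' hj' k k' hkk hc
      exact hs j' (Finset.mem_of_mem_erase hj') k k' hkk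
        (con_mono (Finset.erase_subset_erase j' (Finset.erase_subset j s)) hc)
    obtain ⟨x, hx, hxcon⟩ := ih (s.erase j) hsub hs'
    obtain ⟨y, hy, hyk, hycon⟩ := hA ((ω j).2) k₀ (x (vts ω j k₀)) (hx _)
    have hinj : ∀ k k' : Fin K, k ≠ k' → vts ω j k ≠ vts ω j k' := by
      intro k k' hkk heq
      exact hs j hj k k' hkk (heq ▸ con_refl j k₀ _ _)
    set x2 : Fin n → ℝ := fun v => if h : ∃ k, vts ω j k = v then y h.choose else x v with hx2
    have hx21 : ∀ k, x2 (vts ω j k) = y k := by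
      intro k
      have h : ∃ k', vts ω j k' = vts ω j k := ⟨k, rfl⟩
      rw [hx2]
      beta_reduce
      rw [dif_pos h]
      by_contra hne'
      have : h.choose ≠ k := fun hh => hne' (by rw [hh])
      exact hinj _ _ this h.choose_spec
    have hagree : ∀ j' ∈ s.erase j, ∀ k', x2 (vts ω j' k') = x (vts ω j' k') := by
      intro j' hj' k'
      by_cases hv : ∃ k, vts ω j k = vts ω j' k'
      · obtain ⟨k, hk⟩ := hv
        have hk0 : k = k₀ := by
          by_contra hkne
          exact hleaf k hkne j' hj' k' hk.symm
        rw [← hk, hk0, hx21 k₀, hyk]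
      · rw [hx2]
        beta_reduce
        rw [dif_neg hv]
    refine ⟨x2, ?_, ?_⟩
    · intro v
      rw [hx2]
      beta_reduce
      by_cases h : ∃ k, vts ω j k = v
      · rw [dif_pos h]; exact hy _
      · rw [dif_neg h]; exact hx v
    · intro j2 hj2
      rcases eq_or_ne j2 j with rfl | hne2
      · calc ∑ k, A ((ω j2).2) k * x2 (vts ω j2 k)
            = ∑ k, A ((ω j2).2) k * y k := by
              refine Finset.sum_congr rfl fun k _ => ?_
              rw [hx21 k]
          _ ≤ bv ((ω j2).2) := hycon
      · have hj3 : j2 ∈ s.erase j := Finset.mem_erase.mpr ⟨hne2, hj2⟩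
        calc ∑ k, A ((ω j2).2) k * x2 (vts ω j2 k)
            = ∑ k, A ((ω j2).2) k * x (vts ω j2 k) := by
              refine Finset.sum_congr rfl fun k _ => ?_
              rw [hagree j2 hj3 k]
          _ ≤ bv ((ω j2).2) := hxcon j2 hj3

/-- witness data for a path certifying `Con` -/
def Fits (j : Fin m) (k k' : Fin K) (L : ℕ) (e : Fin L → Fin m) (a b : Fin L → Fin K)
    (ω : LPInst K N n m) : Prop :=
  (∀ i, e i ≠ j) ∧ Function.Injective e ∧ (∀ i, a i ≠ b i) ∧
  (∀ (i : ℕ) (h : i < L), vts ω (e ⟨i, h⟩) (a ⟨i, h⟩) =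
    if i = 0 then vts ω j k else vts ω (e ⟨i - 1, by omega⟩) (b ⟨i - 1, by omega⟩)) ∧
  (vts ω j k' = if h : 0 < L then vts ω (e ⟨L - 1, by omega⟩) (b ⟨L - 1, by omega⟩)
    else vts ω j k)

lemma extract (ω : LPInst K N n m) (j : Fin m) (k k' : Fin K)
    (hcon : Con ω (Finset.univ.erase j) (vts ω j k) (vts ω j k')) :
    ∃ (L : ℕ), L ≤ m ∧ ∃ (e : Fin L → Fin m) (a b : Fin L → Fin K), Fits j k k' L e a b ω := by
  classical
  set u := vts ω j k with hu
  set v := vts ω j k' with hv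
  have hdec : DecidablePred fun T =>
      ∃ (w : ℕ → Fin n) (E : ℕ → Fin m) (ka kb : ℕ → Fin K), w 0 = u ∧ w T = v ∧
      ∀ i < T, E i ∈ Finset.univ.erase j ∧ vts ω (E i) (ka i) = w i ∧
        vts ω (E i) (kb i) = w (i+1) := fun _ => Classical.propDecidable _
  have hex : ∃ T, ∃ (w : ℕ → Fin n) (E : ℕ → Fin m) (ka kb : ℕ → Fin K), w 0 = u ∧ w T = v ∧
      ∀ i < T, E i ∈ Finset.univ.erase j ∧ vts ω (E i) (ka i) = w i ∧
        vts ω (E i) (kb i) = w (i+1) := hcon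
  set T₀ := Nat.find hex with hT0
  obtain ⟨w, E, ka, kb, hw0, hwT, hstep⟩ := Nat.find_spec hex
  rw [← hT0] at hwT hstep
  have c1 : ∀ p q, p < q → q ≤ T₀ → w p ≠ w q := by
    intro p q hpq hq heq
    have hlt : T₀ - (q - p) < T₀ := by omega
    refine Nat.find_min hex hlt ⟨(fun i => if i ≤ p then w i else w (i + (q-p))),
      (fun i => if i < p then E i else E (i + (q-p))),
      (fun i => if i < p then ka i else ka (i + (q-p))),
      (fun i => if i < p then kb i else kb (i + (q-p))), ?_, ?_, ?_⟩
    · beta_reduce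
      rw [if_pos (Nat.zero_le p)]; exact hw0
    · beta_reduce
      by_cases hc : T₀ - (q - p) ≤ p
      · rw [if_pos hc]
        have : T₀ - (q - p) = p := by omega
        rw [this, heq]
        have : q = T₀ := by omega
        rw [this]; exact hwT
      · rw [if_neg hc, show T₀ - (q-p) + (q-p) = T₀ by omega]; exact hwT
    · intro i hi
      beta_reduce
      by_cases hip : i < p
      · rw [if_pos hip, if_pos hip, if_pos hip, if_pos (by omega : i ≤ p),
          if_pos (by omega : i + 1 ≤ p)]
        exact hstep i (by omega)
      · rw [if_neg hip, if_neg hip, if_neg hip, if_neg (by omega : ¬ i + 1 ≤ p)]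
        have hs' := hstep (i + (q-p)) (by omega)
        refine ⟨hs'.1, ?_, ?_⟩
        · rcases Nat.lt_or_ge p i with h | h
          · rw [if_neg (by omega : ¬ i ≤ p)]; exact hs'.2.1
          · rw [if_pos (by omega : i ≤ p)]
            have hww : w i = w (i + (q - p)) := by
              rw [show i = p by omega, heq, show p + (q - p) = q by omega]
            rw [hww]; exact hs'.2.1
        · rw [show i + (q-p) + 1 = i + 1 + (q-p) by omega] at hs'
          exact hs'.2.2
  have c2 : ∀ p q, p < q → q < T₀ → E p ≠ E q := by
    intro p q hpq hq heq
    have hlt : T₀ - (q - p) < T₀ := by omega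
    refine Nat.find_min hex hlt ⟨(fun i => if i ≤ p then w i else w (i + (q-p))),
      (fun i => if i ≤ p then E i else E (i + (q-p))),
      (fun i => if i ≤ p then ka i else ka (i + (q-p))),
      (fun i => if i < p then kb i else kb (i + (q-p))), ?_, ?_, ?_⟩
    · beta_reduce
      rw [if_pos (Nat.zero_le p)]; exact hw0
    · beta_reduce
      rw [if_neg (by omega : ¬ T₀ - (q - p) ≤ p),
        show T₀ - (q-p) + (q-p) = T₀ by omega]
      exact hwT
    · intro i hi
      beta_reduce
      rcases Nat.lt_trichotomy i p with hip | hip | hip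
      · rw [if_pos hip, if_pos (le_of_lt hip), if_pos (le_of_lt hip),
          if_pos (by omega : i ≤ p), if_pos (by omega : i + 1 ≤ p)]
        exact hstep i (by omega)
      · subst hip
        rw [if_pos le_rfl, if_pos le_rfl, if_neg (lt_irrefl i),
          if_pos le_rfl, if_neg (by omega : ¬ i + 1 ≤ i)]
        have hsi := hstep i (by omega)
        have hsq := hstep q (by omega)
        refine ⟨hsi.1, hsi.2.1, ?_⟩
        rw [show i + 1 + (q - i) = q + 1 by omega, show i + (q - i) = q by omega,
          heq, hsq.2.2]
      · rw [if_neg (by omega : ¬ i ≤ p), if_neg (by omega : ¬ i ≤ p),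
          if_neg (by omega : ¬ i < p), if_neg (by omega : ¬ i ≤ p),
          if_neg (by omega : ¬ i + 1 ≤ p)]
        have hs' := hstep (i + (q-p)) (by omega)
        refine ⟨hs'.1, hs'.2.1, ?_⟩
        rw [show i + (q-p) + 1 = i + 1 + (q-p) by omega] at hs'
        exact hs'.2.2
  have c3 : T₀ ≤ m := by
    have hinj : Function.Injective (fun i : Fin T₀ => E i) := by
      intro p q hpq
      by_contra hne
      rcases Ne.lt_or_gt (fun h : (p:ℕ) = q => hne (Fin.ext h)) with h | h
      · exact c2 p q h q.isLt hpq
      · exact c2 q p h p.isLt hpq.symm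
    simpa using Fintype.card_le_of_injective _ hinj
  refine ⟨T₀, c3, (fun i => E i), (fun i => ka i), (fun i => kb i), ?_, ?_, ?_, ?_, ?_⟩
  · intro i
    exact (Finset.mem_erase.mp (hstep i i.isLt).1).1
  · intro p q hpq
    by_contra hne
    rcases Ne.lt_or_gt (fun h : (p:ℕ) = q => hne (Fin.ext h)) with h | h
    · exact c2 p q h q.isLt hpq
    · exact c2 q p h p.isLt hpq.symm
  · intro i heq
    beta_reduce at heq
    refine c1 i (i+1) (by omega) i.isLt ?_
    rw [← (hstep i i.isLt).2.1, ← (hstep i i.isLt).2.2, heq]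
  · intro i h
    by_cases h0 : i = 0
    · subst h0
      rw [if_pos rfl]
      beta_reduce
      rw [(hstep 0 h).2.1, hw0]
    · rw [if_neg h0]
      beta_reduce
      have h1 := (hstep i h).2.1
      have h2 := (hstep (i-1) (by omega)).2.2
      rw [show i - 1 + 1 = i by omega] at h2
      rw [h1, h2]
  · by_cases h0 : 0 < T₀
    · rw [dif_pos h0]
      have h2 := (hstep (T₀-1) (by omega)).2.2
      rw [show T₀ - 1 + 1 = T₀ by omega] at h2
      show v = vts ω (E (T₀ - 1)) (kb (T₀ - 1))
      rw [h2, hwT]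
    · rw [dif_neg h0]
      show v = u
      rw [← hwT, show T₀ = 0 by omega, hw0]

open scoped Classical

lemma fits_card_le (j : Fin m) (k k' : Fin K) (hkk : k ≠ k')
    (L : ℕ) (e : Fin L → Fin m) (a b : Fin L → Fin K) :
    (Finset.univ.filter (fun ω : LPInst K N n m => Fits j k k' L e a b ω)).card
      ≤ n ^ (K * m - (L+1)) * N ^ m := by
  by_cases hcond : (∀ i, e i ≠ j) ∧ Function.Injective e ∧ (∀ i, a i ≠ b i)
  swap
  · have hemp : (Finset.univ.filter (fun ω : LPInst K N n m => Fits j k k' L e a b ω)) = ∅ :=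
      Finset.filter_eq_empty_iff.mpr (fun {ω} _ hF => hcond ⟨hF.1, hF.2.1, hF.2.2.1⟩)
    rw [hemp]
    simp
  obtain ⟨hej, hinj, hab⟩ := hcond
  set S : Finset (Fin m × Fin K) :=
    (Finset.image (fun i => (e i, a i)) Finset.univ) ∪ {(j, k')} with hS
  have hpairinj : Function.Injective (fun i : Fin L => (e i, a i)) := by
    intro p q h
    exact hinj (congrArg Prod.fst h)
  have hnotmem : (j, k') ∉ Finset.image (fun i => (e i, a i)) Finset.univ := by
    intro h
    obtain ⟨i, -, hi⟩ := Finset.mem_image.mp h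
    exact hej i (congrArg Prod.fst hi)
  have hcardS : S.card = L + 1 := by
    rw [hS, Finset.card_union_of_disjoint (Finset.disjoint_singleton_right.mpr hnotmem),
      Finset.card_image_of_injective _ hpairinj, Finset.card_singleton, Finset.card_univ,
      Fintype.card_fin]
  have hjk : (j, k) ∉ S := by
    rw [hS]
    intro h
    rcases Finset.mem_union.mp h with h | h
    · obtain ⟨i, -, hi⟩ := Finset.mem_image.mp h
      exact hej i (congrArg Prod.fst hi)
    · have h' := Finset.mem_singleton.mp h
      injection h' with h1 h2
      exact hkk h2
  have hbi : ∀ i : Fin L, (e i, b i) ∉ S := by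
    intro i h
    rcases Finset.mem_union.mp h with h | h
    · obtain ⟨i', -, hi⟩ := Finset.mem_image.mp h
      have : i' = i := hinj (congrArg Prod.fst hi)
      subst this
      exact hab i' (congrArg Prod.snd hi)
    · have h' := Finset.mem_singleton.mp h
      injection h' with h1 h2
      exact hej i h1
  set f : LPInst K N n m → ({p : Fin m × Fin K // p ∉ S} → Fin n) × (Fin m → Fin N) :=
    fun ω => (fun p => vts ω p.1.1 p.1.2, fun j' => (ω j').2) with hf
  have key : (Finset.univ.filter (fun ω : LPInst K N n m => Fits j k k' L e a b ω)).card
      ≤ (Finset.univ : Finset (({p : Fin m × Fin K // p ∉ S} → Fin n) × (Fin m → Fin N))).card := by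
    refine Finset.card_le_card_of_injOn f (fun ω _ => Finset.mem_univ _) ?_
    intro ω hω ω' hω' hq
    have h1 : ∀ p : {p : Fin m × Fin K // p ∉ S}, vts ω p.1.1 p.1.2 = vts ω' p.1.1 p.1.2 :=
      fun p => congrFun (congrArg Prod.fst hq) p
    have htyp : ∀ j', (ω j').2 = (ω' j').2 := fun j' => congrFun (congrArg Prod.snd hq) j'
    have hout : ∀ p : Fin m × Fin K, p ∉ S → vts ω p.1 p.2 = vts ω' p.1 p.2 :=
      fun p hp => h1 ⟨p, hp⟩
    have hF := (Finset.mem_filter.mp hω).2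
    have hF' := (Finset.mem_filter.mp hω').2
    have hall : ∀ j' κ, vts ω j' κ = vts ω' j' κ := by
      intro j' κ
      by_cases hp : (j', κ) ∈ S
      · rcases Finset.mem_union.mp hp with hp | hp
        · obtain ⟨i, -, hi⟩ := Finset.mem_image.mp hp
          injection hi with hi1 hi2
          subst hi1; subst hi2
          have hc := hF.2.2.2.1 i i.isLt
          have hc' := hF'.2.2.2.1 i i.isLt
          rw [Fin.eta] at hc hc'
          rw [hc, hc']
          by_cases h0 : (i : ℕ) = 0
          · rw [if_pos h0, if_pos h0]
            exact hout (j, k) hjk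
          · rw [if_neg h0, if_neg h0]
            exact hout _ (hbi ⟨(i:ℕ) - 1, by omega⟩)
        · have hp' := Finset.mem_singleton.mp hp
          injection hp' with hp1 hp2
          rw [hp1, hp2]
          have hc := hF.2.2.2.2
          have hc' := hF'.2.2.2.2
          rw [hc, hc']
          by_cases h0 : 0 < L
          · rw [dif_pos h0, dif_pos h0]
            exact hout _ (hbi ⟨L - 1, by omega⟩)
          · rw [dif_neg h0, dif_neg h0]
            exact hout (j, k) hjk
      · exact hout (j', κ) hp
    funext j'
    have hfst : (ω j').1 = (ω' j').1 := funext (fun κ => hall j' κ)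
    exact Prod.ext hfst (htyp j')
  calc (Finset.univ.filter (fun ω : LPInst K N n m => Fits j k k' L e a b ω)).card
      ≤ (Finset.univ : Finset (({p : Fin m × Fin K // p ∉ S} → Fin n) × (Fin m → Fin N))).card := key
    _ = n ^ (K * m - (L+1)) * N ^ m := by
        have hcc : Fintype.card {p : Fin m × Fin K // p ∉ S} = K * m - (L + 1) := by
          have h1 : Fintype.card {p : Fin m × Fin K // p ∉ S} = Sᶜ.card := by
            rw [Fintype.card_subtype]
            congr 1
            ext p
            simp
          rw [h1, Finset.card_compl, hcardS]
          simp [Nat.mul_comm]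
        rw [Finset.card_univ, Fintype.card_prod, Fintype.card_fun, Fintype.card_fun,
          Fintype.card_fin, Fintype.card_fin, Fintype.card_fin, hcc]

def Dconst {K N : ℕ} (A : Fin N → Fin K → ℝ) (bv : Fin N → ℝ) (B1 B2 : ℝ) : ℝ :=
  (∑ r, ∑ k, |A r k| * (|B1| + |B2|)) + ∑ r, |bv r|

lemma Dconst_nonneg {A : Fin N → Fin K → ℝ} {bv : Fin N → ℝ} {B1 B2 : ℝ} :
    0 ≤ Dconst A bv B1 B2 := by
  unfold Dconst
  positivity

lemma sum_le_D {A : Fin N → Fin K → ℝ} {bv : Fin N → ℝ} {B1 B2 : ℝ}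
    (r : Fin N) (u : Fin K → ℝ) (hu : ∀ k, u k ∈ Set.Icc B1 B2) :
    ∑ k, A r k * u k ≤ bv r + Dconst A bv B1 B2 := by
  have h1 : ∑ k, A r k * u k ≤ ∑ k, |A r k| * (|B1| + |B2|) := by
    refine Finset.sum_le_sum fun k _ => ?_
    have hk := Set.mem_Icc.mp (hu k)
    have habs : |u k| ≤ |B1| + |B2| := by
      refine abs_le.mpr ⟨?_, ?_⟩
      · nlinarith [neg_abs_le B1, abs_nonneg B2, hk.1]
      · nlinarith [le_abs_self B2, abs_nonneg B1, hk.2]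
    calc A r k * u k ≤ |A r k * u k| := le_abs_self _
      _ = |A r k| * |u k| := abs_mul _ _
      _ ≤ |A r k| * (|B1| + |B2|) := mul_le_mul_of_nonneg_left habs (abs_nonneg _)
  have h2 : ∑ k, |A r k| * (|B1| + |B2|) ≤ ∑ r', ∑ k, |A r' k| * (|B1| + |B2|) :=
    Finset.single_le_sum (f := fun r' => ∑ k, |A r' k| * (|B1| + |B2|))
      (fun r' _ => by positivity) (Finset.mem_univ r)
  have h3 : -bv r ≤ ∑ r', |bv r'| :=
    le_trans (neg_le_abs _) (Finset.single_le_sum (f := fun r' => |bv r'|)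
      (fun r' _ => abs_nonneg _) (Finset.mem_univ r))
  unfold Dconst
  linarith

lemma lpval_le_bad {A : Fin N → Fin K → ℝ} {bv : Fin N → ℝ} {B1 B2 : ℝ}
    (hA : ConditionA A bv B1 B2) (hB : B1 ≤ B2) (hK : 0 < K) (ω : LPInst K N n m) :
    LPval A bv B1 B2 ω ≤ Dconst A bv B1 B2 *
      ((Finset.univ.filter fun j => ¬ Good ω j).card : ℝ) := by
  set G := Finset.univ.filter (fun j => Good ω j) with hG
  have hsG : ∀ j ∈ G, ∀ k k' : Fin K, k ≠ k' →
      ¬ Con ω (G.erase j) (vts ω j k) (vts ω j k') := by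
    intro j hj k k' hkk hc
    exact (Finset.mem_filter.mp hj).2 k k' hkk
      (con_mono (Finset.erase_subset_erase j (Finset.subset_univ G)) hc)
  obtain ⟨x, hx, hxcon⟩ := exists_good_x hA hB hK ω G hsG
  apply csInf_le
  · refine ⟨0, fun v hv => ?_⟩
    obtain ⟨x', ψ, hx', hψ, hcon, rfl⟩ := hv
    exact Finset.sum_nonneg fun j _ => hψ j
  · refine ⟨x, (fun j => if Good ω j then 0 else Dconst A bv B1 B2), hx, ?_, ?_, ?_⟩
    · intro j
      beta_reduce
      by_cases h : Good ω j
      · rw [if_pos h]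
      · rw [if_neg h]; exact Dconst_nonneg
    · intro j
      beta_reduce
      by_cases h : Good ω j
      · rw [if_pos h, add_zero]
        have := hxcon j (Finset.mem_filter.mpr ⟨Finset.mem_univ _, h⟩)
        simpa [vts] using this
      · rw [if_neg h]
        exact sum_le_D _ (fun k => x ((ω j).1 k)) (fun k => hx _)
    · rw [Finset.sum_ite, Finset.sum_const_zero, Finset.sum_const, zero_add,
        nsmul_eq_mul, mul_comm]

lemma geom_le {q : ℝ} (h0 : 0 ≤ q) (h1 : q < 1) (M : ℕ) :
    ∑ L ∈ Finset.range M, q^L ≤ 1 / (1 - q) := by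
  rw [geom_sum_eq (by linarith : q ≠ 1)]
  have h2 : (q ^ M - 1) / (q - 1) = (1 - q ^ M) / (1 - q) := by
    rw [← neg_div_neg_eq]
    ring_nf
  rw [h2]
  have h4 : (0:ℝ) < 1 - q := by linarith
  rw [div_le_div_iff₀ h4 h4]
  nlinarith [pow_nonneg h0 M]

lemma bad_card_le (j : Fin m) :
    (Finset.univ.filter fun ω : LPInst K N n m => ¬ Good ω j).card
      ≤ K^2 * ∑ L ∈ Finset.range (m+1),
          (m^L * (K^L * K^L)) * (n ^ (K*m - (L+1)) * N ^ m) := by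
  have cover : (Finset.univ.filter fun ω : LPInst K N n m => ¬ Good ω j) ⊆
      ((Finset.univ : Finset (Fin K × Fin K)).filter fun kk => kk.1 ≠ kk.2).biUnion (fun kk =>
        (Finset.range (m+1)).biUnion (fun L =>
          (Finset.univ : Finset ((Fin L → Fin m) × (Fin L → Fin K) × (Fin L → Fin K))).biUnion
            (fun eab => Finset.univ.filter (fun ω =>
              Fits j kk.1 kk.2 L eab.1 eab.2.1 eab.2.2 ω)))) := by
    intro ω hω
    have hbad := (Finset.mem_filter.mp hω).2
    unfold Good at hbad
    push_neg at hbad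
    obtain ⟨k, k', hkk, hcon⟩ := hbad
    obtain ⟨L, hL, e, a, b, hfits⟩ := extract ω j k k' hcon
    exact Finset.mem_biUnion.mpr ⟨(k, k'), Finset.mem_filter.mpr ⟨Finset.mem_univ _, hkk⟩,
      Finset.mem_biUnion.mpr ⟨L, Finset.mem_range.mpr (by omega),
      Finset.mem_biUnion.mpr ⟨(e, a, b), Finset.mem_univ _,
      Finset.mem_filter.mpr ⟨Finset.mem_univ _, hfits⟩⟩⟩⟩
  calc (Finset.univ.filter fun ω : LPInst K N n m => ¬ Good ω j).card
      ≤ _ := Finset.card_le_card cover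
    _ ≤ ∑ kk ∈ ((Finset.univ : Finset (Fin K × Fin K)).filter fun kk => kk.1 ≠ kk.2),
        ((Finset.range (m+1)).biUnion (fun L =>
          (Finset.univ : Finset ((Fin L → Fin m) × (Fin L → Fin K) × (Fin L → Fin K))).biUnion
            (fun eab => Finset.univ.filter (fun ω : LPInst K N n m =>
              Fits j kk.1 kk.2 L eab.1 eab.2.1 eab.2.2 ω)))).card := Finset.card_biUnion_le
    _ ≤ ∑ kk ∈ ((Finset.univ : Finset (Fin K × Fin K)).filter fun kk => kk.1 ≠ kk.2),
        ∑ L ∈ Finset.range (m+1),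
          ((Finset.univ : Finset ((Fin L → Fin m) × (Fin L → Fin K) × (Fin L → Fin K))).biUnion
            (fun eab => Finset.univ.filter (fun ω : LPInst K N n m =>
              Fits j kk.1 kk.2 L eab.1 eab.2.1 eab.2.2 ω))).card :=
        Finset.sum_le_sum fun kk _ => Finset.card_biUnion_le
    _ ≤ ∑ kk ∈ ((Finset.univ : Finset (Fin K × Fin K)).filter fun kk => kk.1 ≠ kk.2),
        ∑ L ∈ Finset.range (m+1),
          ∑ eab ∈ (Finset.univ : Finset ((Fin L → Fin m) × (Fin L → Fin K) × (Fin L → Fin K))),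
            (Finset.univ.filter (fun ω : LPInst K N n m =>
              Fits j kk.1 kk.2 L eab.1 eab.2.1 eab.2.2 ω)).card :=
        Finset.sum_le_sum fun kk _ => Finset.sum_le_sum fun L _ => Finset.card_biUnion_le
    _ ≤ ∑ kk ∈ ((Finset.univ : Finset (Fin K × Fin K)).filter fun kk => kk.1 ≠ kk.2),
        ∑ L ∈ Finset.range (m+1),
          ∑ _eab ∈ (Finset.univ : Finset ((Fin L → Fin m) × (Fin L → Fin K) × (Fin L → Fin K))),
            n ^ (K*m - (L+1)) * N ^ m := by
        refine Finset.sum_le_sum fun kk hkk => Finset.sum_le_sum fun L _ =>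
          Finset.sum_le_sum fun eab _ => ?_
        exact fits_card_le j kk.1 kk.2 (Finset.mem_filter.mp hkk).2 L eab.1 eab.2.1 eab.2.2
    _ = ∑ kk ∈ ((Finset.univ : Finset (Fin K × Fin K)).filter fun kk => kk.1 ≠ kk.2),
        ∑ L ∈ Finset.range (m+1),
          (m^L * (K^L * K^L)) * (n ^ (K*m - (L+1)) * N ^ m) := by
        refine Finset.sum_congr rfl fun kk _ => Finset.sum_congr rfl fun L _ => ?_
        rw [Finset.sum_const, Finset.card_univ, smul_eq_mul]
        congr 1
        simp [Fintype.card_prod, Fintype.card_fun]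
    _ ≤ K^2 * ∑ L ∈ Finset.range (m+1),
          (m^L * (K^L * K^L)) * (n ^ (K*m - (L+1)) * N ^ m) := by
        rw [Finset.sum_const, smul_eq_mul]
        have hc : ((Finset.univ : Finset (Fin K × Fin K)).filter fun kk => kk.1 ≠ kk.2).card
            ≤ K^2 := by
          calc ((Finset.univ : Finset (Fin K × Fin K)).filter fun kk => kk.1 ≠ kk.2).card
              ≤ (Finset.univ : Finset (Fin K × Fin K)).card := Finset.card_filter_le _ _
            _ = K^2 := by
                rw [Finset.card_univ, Fintype.card_prod, Fintype.card_fin, pow_two]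
        exact Nat.mul_le_mul_right _ hc

lemma per_edge_real (hK2 : 2 ≤ K) {q₀ : ℝ} (hq0 : 0 ≤ q₀) (hq1 : q₀ < 1)
    (hn : 0 < n) (hq : (m:ℝ) * (K:ℝ)^2 ≤ q₀ * n) (j : Fin m) :
    ((Finset.univ.filter fun ω : LPInst K N n m => ¬ Good ω j).card : ℝ)
      ≤ (Fintype.card (LPInst K N n m) : ℝ) * ((K:ℝ)^2 / ((n:ℝ) * (1 - q₀))) := by
  have hm1 : 0 < m := j.pos
  have hnR : (0:ℝ) < n := by exact_mod_cast hn
  have hΩ : (Fintype.card (LPInst K N n m) : ℝ) = (n:ℝ)^(K*m) * (N:ℝ)^m := by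
    have h : Fintype.card (LPInst K N n m) = (n^K * N)^m := by
      simp [Fintype.card_fun]
    rw [h]
    push_cast
    rw [mul_pow, ← pow_mul]
  have step2 : ∀ L ∈ Finset.range (m+1),
      ((m:ℝ)^L * ((K:ℝ)^L * (K:ℝ)^L)) * ((n:ℝ)^(K*m - (L+1)) * (N:ℝ)^m)
        ≤ (((n:ℝ)^(K*m) * (N:ℝ)^m) * ((K:ℝ)^2/(n:ℝ))) * q₀^L / (K:ℝ)^2 := by
    intro L hL
    have hLm : L ≤ m := Nat.lt_succ_iff.mp (Finset.mem_range.mp hL)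
    have h2m : 2*m ≤ K * m := Nat.mul_le_mul_right m hK2
    have hexp : L + 1 ≤ K * m := by omega
    have hpow : (n:ℝ)^(K*m - (L+1)) = (n:ℝ)^(K*m) / (n:ℝ)^(L+1) := by
      rw [pow_sub₀ _ (ne_of_gt hnR) hexp, div_eq_mul_inv]
    rw [hpow]
    have h1 : ((m:ℝ) * (K:ℝ)^2)^L ≤ (q₀ * n)^L := pow_le_pow_left₀ (by positivity) hq L
    have hKR : (0:ℝ) < (K:ℝ)^2 := by
      have : (0:ℕ) < K := by omega
      positivity
    calc ((m:ℝ)^L * ((K:ℝ)^L * (K:ℝ)^L)) * ((n:ℝ)^(K*m) / (n:ℝ)^(L+1) * (N:ℝ)^m)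
        = ((m:ℝ) * (K:ℝ)^2)^L * ((n:ℝ)^(K*m) / (n:ℝ)^(L+1) * (N:ℝ)^m) := by
          rw [mul_pow, ← pow_mul, two_mul, pow_add]
          ring
      _ ≤ (q₀ * n)^L * ((n:ℝ)^(K*m) / (n:ℝ)^(L+1) * (N:ℝ)^m) := by
          refine mul_le_mul_of_nonneg_right h1 (by positivity)
      _ = (((n:ℝ)^(K*m) * (N:ℝ)^m) * ((K:ℝ)^2/(n:ℝ))) * q₀^L / (K:ℝ)^2 := by
          rw [mul_pow, pow_succ]
          field_simp
  have hsum : ∑ L ∈ Finset.range (m+1), q₀^L ≤ 1/(1-q₀) := geom_le hq0 hq1 _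
  have hKR : (0:ℝ) < (K:ℝ)^2 := by
    have : (0:ℕ) < K := by omega
    positivity
  calc ((Finset.univ.filter fun ω : LPInst K N n m => ¬ Good ω j).card : ℝ)
      ≤ ((K^2 * ∑ L ∈ Finset.range (m+1),
          (m^L * (K^L * K^L)) * (n ^ (K*m - (L+1)) * N ^ m) : ℕ) : ℝ) := by
        exact_mod_cast bad_card_le j
    _ = (K:ℝ)^2 * ∑ L ∈ Finset.range (m+1),
          ((m:ℝ)^L * ((K:ℝ)^L * (K:ℝ)^L)) * ((n:ℝ)^(K*m - (L+1)) * (N:ℝ)^m) := by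
        push_cast
        ring
    _ ≤ (K:ℝ)^2 * ∑ L ∈ Finset.range (m+1),
          (((n:ℝ)^(K*m) * (N:ℝ)^m) * ((K:ℝ)^2/(n:ℝ))) * q₀^L / (K:ℝ)^2 :=
        mul_le_mul_of_nonneg_left (Finset.sum_le_sum step2) (by positivity)
    _ = (((n:ℝ)^(K*m) * (N:ℝ)^m) * ((K:ℝ)^2/(n:ℝ))) * ∑ L ∈ Finset.range (m+1), q₀^L := by
        rw [Finset.mul_sum, Finset.mul_sum]
        refine Finset.sum_congr rfl fun L _ => ?_
        field_simp
    _ ≤ (((n:ℝ)^(K*m) * (N:ℝ)^m) * ((K:ℝ)^2/(n:ℝ))) * (1/(1-q₀)) := by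
        refine mul_le_mul_of_nonneg_left hsum (by positivity)
    _ = (Fintype.card (LPInst K N n m) : ℝ) * ((K:ℝ)^2 / ((n:ℝ) * (1 - q₀))) := by
        rw [hΩ]
        field_simp

end LPaux

open LPaux

/-- **Under Condition 𝒜, for `c < 1/K²` the expected optimal value is `O(1)`:**
`sup_n E[LP(n,c)] < ∞`. -/
theorem lp_expectation_bounded_of_conditionA
    (K N : ℕ) (hK : 2 ≤ K) (hN : 1 ≤ N)
    (A : Fin N → Fin K → ℝ) (bv : Fin N → ℝ)
    (B1 B2 : ℝ) (hB : B1 ≤ B2)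
    (hA : ConditionA A bv B1 B2)
    (c : ℝ) (hc : 0 < c) (hcK : c < 1 / (K : ℝ) ^ 2) :
    ∃ C : ℝ, ∀ n : ℕ,
      ∫ ω, LPval A bv B1 B2 ω ∂(lpMeasure K N n ⌊c * n⌋₊) ≤ C := by
  classical
  have hKpos : 0 < K := by omega
  have hKR : (0:ℝ) < (K:ℝ)^2 := by
    have : (0:ℝ) < (K:ℝ) := by exact_mod_cast hKpos
    positivity
  set q₀ : ℝ := c * (K:ℝ)^2 with hq₀def
  have hq₀0 : 0 ≤ q₀ := by positivity
  have hq₀1 : q₀ < 1 := by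
    rw [lt_div_iff₀ hKR] at hcK
    rw [hq₀def]
    linarith
  have h1q : (0:ℝ) < 1 - q₀ := by linarith
  set D := Dconst A bv B1 B2 with hDdef
  have hD0 : 0 ≤ D := Dconst_nonneg
  set C := D * (c * (K:ℝ)^2 / (1 - q₀)) with hCdef
  have hC0 : 0 ≤ C := by
    refine mul_nonneg hD0 (div_nonneg (by positivity) h1q.le)
  refine ⟨C, fun n => ?_⟩
  set m := ⌊c * n⌋₊ with hmdef
  have hint : Integrable (LPval A bv B1 B2) (lpMeasure K N n m) := by
    rw [lpMeasure]
    exact Integrable.of_finite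
  by_cases hn : n = 0
  · -- empty case: m = 0 and LPval ≡ 0
    have hle : ∀ ω : LPInst K N n m, LPval A bv B1 B2 ω ≤ 0 := by
      intro ω
      have hb := lpval_le_bad hA hB hKpos ω
      have hm0 : m = 0 := by
        rw [hmdef, hn]
        simp
      have hcard : (Finset.univ.filter fun j => ¬ Good ω j).card = 0 := by
        have h1 : (Finset.univ.filter fun j => ¬ Good ω j).card
            ≤ (Finset.univ : Finset (Fin m)).card := Finset.card_filter_le _ _
        simp only [Finset.card_univ, Fintype.card_fin] at h1
        omega
      rw [hcard] at hb
      simpa using hb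
    exact le_trans (integral_nonpos hle) hC0
  · have hn1 : 0 < n := Nat.pos_of_ne_zero hn
    have hnR : (0:ℝ) < (n:ℝ) := by exact_mod_cast hn1
    have hmn : (m:ℝ) ≤ c * n := by
      rw [hmdef]
      exact Nat.floor_le (by positivity)
    have hq : (m:ℝ) * (K:ℝ)^2 ≤ q₀ * n := by
      rw [hq₀def]
      nlinarith
    have hne : Nonempty (LPInst K N n m) :=
      ⟨fun _ => (fun _ => ⟨0, hn1⟩, ⟨0, by omega⟩)⟩
    have hΩpos : 0 < Fintype.card (LPInst K N n m) := Fintype.card_pos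
    have hΩR : (0:ℝ) < (Fintype.card (LPInst K N n m) : ℝ) := by exact_mod_cast hΩpos
    have hμ : ∀ ω : LPInst K N n m, ((lpMeasure K N n m) {ω}).toReal
        = 1 / (Fintype.card (LPInst K N n m) : ℝ) := by
      intro ω
      rw [lpMeasure, uniformOn_univ, Measure.count_singleton]
      rw [ENNReal.toReal_div]
      simp
    rw [integral_fintype hint]
    have hXpos : (0:ℝ) ≤ (K:ℝ)^2 / ((n:ℝ) * (1 - q₀)) :=
      div_nonneg (by positivity) (mul_nonneg hnR.le h1q.le)
    calc ∑ ω : LPInst K N n m, ((lpMeasure K N n m) {ω}).toReal • LPval A bv B1 B2 ω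
        = ∑ ω : LPInst K N n m,
            (1 / (Fintype.card (LPInst K N n m) : ℝ)) * LPval A bv B1 B2 ω := by
          exact Finset.sum_congr rfl fun ω _ => by rw [hμ ω, smul_eq_mul]
      _ ≤ ∑ ω : LPInst K N n m, (1 / (Fintype.card (LPInst K N n m) : ℝ)) *
            (D * ((Finset.univ.filter fun j => ¬ Good ω j).card : ℝ)) := by
          refine Finset.sum_le_sum fun ω _ => ?_
          exact mul_le_mul_of_nonneg_left (lpval_le_bad hA hB hKpos ω) (by positivity)
      _ = (D / (Fintype.card (LPInst K N n m) : ℝ)) *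
            ∑ ω : LPInst K N n m, ((Finset.univ.filter fun j => ¬ Good ω j).card : ℝ) := by
          rw [Finset.mul_sum]
          exact Finset.sum_congr rfl fun ω _ => by ring
      _ = (D / (Fintype.card (LPInst K N n m) : ℝ)) *
            ∑ j : Fin m, ((Finset.univ.filter fun ω : LPInst K N n m => ¬ Good ω j).card : ℝ) := by
          congr 1
          simp_rw [Finset.card_filter]
          push_cast
          rw [Finset.sum_comm]
      _ ≤ (D / (Fintype.card (LPInst K N n m) : ℝ)) *
            ∑ _j : Fin m, (Fintype.card (LPInst K N n m) : ℝ) *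
              ((K:ℝ)^2 / ((n:ℝ) * (1 - q₀))) := by
          refine mul_le_mul_of_nonneg_left
            (Finset.sum_le_sum fun j _ => per_edge_real hK hq₀0 hq₀1 hn1 hq j)
            (by positivity)
      _ = D * ((m:ℝ) * ((K:ℝ)^2 / ((n:ℝ) * (1 - q₀)))) := by
          rw [Finset.sum_const, Finset.card_univ, Fintype.card_fin, nsmul_eq_mul]
          field_simp
      _ ≤ C := by
          rw [hCdef]
          have h5 : (m:ℝ) * ((K:ℝ)^2 / ((n:ℝ) * (1 - q₀))) ≤ c * (K:ℝ)^2 / (1 - q₀) := by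
            have hdiv : (m:ℝ)/(n:ℝ) ≤ c := by
              rw [div_le_iff₀ hnR]
              linarith
            calc (m:ℝ) * ((K:ℝ)^2 / ((n:ℝ) * (1 - q₀)))
                = ((m:ℝ)/(n:ℝ)) * ((K:ℝ)^2/(1 - q₀)) := by
                  field_simp
              _ ≤ c * ((K:ℝ)^2/(1 - q₀)) :=
                  mul_le_mul_of_nonneg_right hdiv (div_nonneg (by positivity) h1q.le)
              _ = c * (K:ℝ)^2 / (1 - q₀) := by ring
          exact mul_le_mul_of_nonneg_left h5 hD0
end
end

section
/- For every fixed integer r ≥ 1, the expected number of cycles of length r in the random K-LSAT instance is asymptotically at most (K²c)^r; that is, limsup_{n→∞} E[number of cycles of length r] ≤ (K²c)^r. -/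
open MeasureTheory ProbabilityTheory Filter

noncomputable section

/-- The sample space for the combinatorial structure of a random K-LSAT instance with `n`
variables and `m` constraints: for each constraint, the ordered `K`-tuple of chosen variables.
The instance is chosen uniformly at random, i.e. the tuples are uniform and independent. -/
abbrev KInst (K n m : ℕ) : Type := Fin m → Fin K → Fin n

/-- The uniform law of a random K-LSAT instance. -/
def kMeasure (K n m : ℕ) : Measure (KInst K n m) :=
  uniformOn (Set.univ : Set (KInst K n m))

/-- Constraint `j` contains variable `x`. -/
def ContainsVar {K n m : ℕ} (ω : KInst K n m) (j : Fin m) (x : Fin n) : Prop :=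
  ∃ k : Fin K, ω j k = x

/-- Two constraints share at least one variable. -/
def Shares {K n m : ℕ} (ω : KInst K n m) (j j' : Fin m) : Prop :=
  ∃ x : Fin n, ContainsVar ω j x ∧ ContainsVar ω j' x

/-- A cycle of length `r` in the instance `ω`: distinct constraints `p 0, …, p (r−1)` arranged
cyclically, together with distinct variables `x 0, …, x (r−1)` such that `x j` is shared by the
consecutive constraints `p j` and `p (j+1 mod r)` (occurring in two different slots when these
two constraints coincide, which happens only for `r = 1`). -/
def IsCycle {K n m : ℕ} (r : ℕ) (ω : KInst K n m)
    (p : Fin r → Fin m) (x : Fin r → Fin n) : Prop :=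
  ∃ hr : 0 < r,
    Function.Injective p ∧ Function.Injective x ∧
      ∀ j : Fin r, ∃ k k' : Fin K,
        ω (p j) k = x j ∧
        ω (p ⟨((j : ℕ) + 1) % r, Nat.mod_lt _ hr⟩) k' = x j ∧
        (p j = p ⟨((j : ℕ) + 1) % r, Nat.mod_lt _ hr⟩ → k ≠ k')

/-- The number of cycles of length `r` in the instance `ω` (counted with their cyclic
labellings). -/
def numCycles {K n m : ℕ} (r : ℕ) (ω : KInst K n m) : ℕ :=
  Nat.card {pc : (Fin r → Fin m) × (Fin r → Fin n) // IsCycle r ω pc.1 pc.2}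

/-! ### Auxiliary lemmas -/

section Aux

open Finset

variable {K n m r : ℕ}

/-- cyclic successor -/
private def csucc (hr : 0 < r) (j : Fin r) : Fin r :=
  ⟨((j : ℕ) + 1) % r, Nat.mod_lt _ hr⟩

private lemma csucc_val (hr : 0 < r) (j : Fin r) :
    (csucc hr j : ℕ) = if (j : ℕ) + 1 = r then 0 else (j : ℕ) + 1 := by
  simp only [csucc]
  split
  · simp [*, Nat.mod_self]
  · exact Nat.mod_eq_of_lt (by omega)

private lemma csucc_inj (hr : 0 < r) : Function.Injective (csucc hr) := by
  intro i j h
  have hi := csucc_val hr i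
  have hj := csucc_val hr j
  rw [h] at hi
  have hi' := i.isLt
  have hj' := j.isLt
  apply Fin.ext
  split at hi <;> split at hj <;> omega

private lemma eq_csucc_self (hr : 0 < r) (j : Fin r) (h : j = csucc hr j) : r = 1 := by
  have := csucc_val hr j
  rw [← h] at this
  have := j.isLt
  split at * <;> omega

/-- The count of instances satisfying a fixed system of `2r` equations. -/
private lemma count_T_le (hr : 0 < r)
    (p : Fin r → Fin m) (x : Fin r → Fin n) (hp : Function.Injective p)
    (hx : Function.Injective x) (κ : Fin r → Fin K × Fin K)
    (hκ : ∀ j, p j = p (csucc hr j) → (κ j).1 ≠ (κ j).2) :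
    (Finset.univ.filter fun ω : KInst K n m =>
      ∀ j : Fin r, ω (p j) (κ j).1 = x j ∧ ω (p (csucc hr j)) (κ j).2 = x j).card
      ≤ n ^ (m * K - 2 * r) := by
  classical
  set s := (Finset.univ.filter fun ω : KInst K n m =>
      ∀ j : Fin r, ω (p j) (κ j).1 = x j ∧ ω (p (csucc hr j)) (κ j).2 = x j) with hs
  rcases s.eq_empty_or_nonempty with h | ⟨ω₀, hω₀⟩
  · simp [h]
  have hω₀' : ∀ j : Fin r, ω₀ (p j) (κ j).1 = x j ∧ ω₀ (p (csucc hr j)) (κ j).2 = x j := by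
    simpa [hs] using hω₀
  -- the 2r constrained coordinates
  set e : Fin r ⊕ Fin r → Fin m × Fin K :=
    Sum.elim (fun j => (p j, (κ j).1)) (fun j => (p (csucc hr j), (κ j).2)) with he_def
  have key : ∀ i j : Fin r, p i = p (csucc hr j) → (κ i).1 = (κ j).2 → False := by
    intro i j h1 h2
    have hij : i = csucc hr j := hp h1
    have e1 : ω₀ (p i) (κ i).1 = x i := (hω₀' i).1
    rw [h1, h2] at e1
    have hij2 : i = j := hx (e1.symm.trans (hω₀' j).2)
    subst hij2
    exact hκ i (by rw [← hij]) h2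
  have he : Function.Injective e := by
    intro a b hab
    match a, b with
    | .inl i, .inl j =>
        simp only [he_def, Sum.elim_inl, Prod.mk.injEq] at hab
        exact congrArg Sum.inl (hp hab.1)
    | .inr i, .inr j =>
        simp only [he_def, Sum.elim_inr, Prod.mk.injEq] at hab
        exact congrArg Sum.inr (csucc_inj hr (hp hab.1))
    | .inl i, .inr j =>
        simp only [he_def, Sum.elim_inl, Sum.elim_inr, Prod.mk.injEq] at hab
        exact (key i j hab.1 hab.2).elim
    | .inr i, .inl j =>
        simp only [he_def, Sum.elim_inl, Sum.elim_inr, Prod.mk.injEq] at hab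
        exact (key j i hab.1.symm hab.2.symm).elim
  -- injection into functions on the unconstrained coordinates
  have hcard : s.card ≤ Fintype.card ({a : Fin m × Fin K // a ∉ Set.range e} → Fin n) := by
    rw [← Finset.card_univ]
    apply Finset.card_le_card_of_injOn
      (fun ω a => ω a.1.1 a.1.2) (fun _ _ => Finset.mem_univ _)
    intro ω₁ h₁ ω₂ h₂ h12
    simp only [hs, Finset.mem_coe, Finset.mem_filter] at h₁ h₂
    funext j k
    by_cases hjk : (j, k) ∈ Set.range e
    · obtain ⟨z, hz⟩ := hjk
      match z with
      | .inl i =>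
          simp only [he_def, Sum.elim_inl, Prod.mk.injEq] at hz
          rw [← hz.1, ← hz.2, (h₁.2 i).1, (h₂.2 i).1]
      | .inr i =>
          simp only [he_def, Sum.elim_inr, Prod.mk.injEq] at hz
          rw [← hz.1, ← hz.2, (h₁.2 i).2, (h₂.2 i).2]
    · exact congrFun h12 ⟨(j, k), hjk⟩
  have h2 : Fintype.card {a : Fin m × Fin K // a ∈ Set.range e} = 2 * r := by
    rw [← Fintype.card_congr (Equiv.ofInjective e he)]
    simp [two_mul]
  calc s.card ≤ Fintype.card ({a : Fin m × Fin K // a ∉ Set.range e} → Fin n) := hcard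
    _ = n ^ (m * K - 2 * r) := by
        rw [Fintype.card_fun, Fintype.card_fin, Fintype.card_subtype_compl, h2,
          Fintype.card_prod, Fintype.card_fin, Fintype.card_fin]

private lemma card_isCycle_le (hr : 0 < r)
    (p : Fin r → Fin m) (x : Fin r → Fin n)
    [DecidablePred fun ω : KInst K n m => IsCycle r ω p x] :
    (Finset.univ.filter fun ω : KInst K n m => IsCycle r ω p x).card
      ≤ K ^ (2 * r) * n ^ (m * K - 2 * r) := by
  classical
  set s := (Finset.univ.filter fun ω : KInst K n m => IsCycle r ω p x) with hs
  rcases s.eq_empty_or_nonempty with h | ⟨ω₁, hω₁⟩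
  · simp [h]
  obtain ⟨_, hp, hx, -⟩ : IsCycle r ω₁ p x := by simpa [hs] using hω₁
  set G : Finset (Fin r → Fin K × Fin K) :=
    Finset.univ.filter (fun κ => ∀ j, p j = p (csucc hr j) → (κ j).1 ≠ (κ j).2) with hG
  have hsub : s ⊆ G.biUnion (fun κ => Finset.univ.filter fun ω : KInst K n m =>
      ∀ j : Fin r, ω (p j) (κ j).1 = x j ∧ ω (p (csucc hr j)) (κ j).2 = x j) := by
    intro ω hω
    have hcyc : IsCycle r ω p x := by simpa [hs] using hω
    obtain ⟨_, -, -, h4⟩ := hcyc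
    refine Finset.mem_biUnion.2 ⟨fun j => ((h4 j).choose, (h4 j).choose_spec.choose), ?_, ?_⟩
    · rw [hG, Finset.mem_filter]
      exact ⟨Finset.mem_univ _, fun j hj => (h4 j).choose_spec.choose_spec.2.2 hj⟩
    · rw [Finset.mem_filter]
      exact ⟨Finset.mem_univ _, fun j => ⟨(h4 j).choose_spec.choose_spec.1,
        (h4 j).choose_spec.choose_spec.2.1⟩⟩
  calc s.card ≤ _ := Finset.card_le_card hsub
    _ ≤ ∑ κ ∈ G, (Finset.univ.filter fun ω : KInst K n m =>
        ∀ j : Fin r, ω (p j) (κ j).1 = x j ∧ ω (p (csucc hr j)) (κ j).2 = x j).card :=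
      Finset.card_biUnion_le
    _ ≤ ∑ _κ ∈ G, n ^ (m * K - 2 * r) := by
      apply Finset.sum_le_sum
      intro κ hκ
      rw [hG, Finset.mem_filter] at hκ
      exact count_T_le hr p x hp hx κ hκ.2
    _ ≤ K ^ (2 * r) * n ^ (m * K - 2 * r) := by
      rw [Finset.sum_const, smul_eq_mul]
      apply Nat.mul_le_mul_right
      calc G.card ≤ Fintype.card (Fin r → Fin K × Fin K) := Finset.card_le_univ G
        _ = K ^ (2 * r) := by
            simp only [Fintype.card_fun, Fintype.card_prod, Fintype.card_fin]
            rw [← pow_two, ← pow_mul]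

private lemma numCycles_eq (ω : KInst K n m) [DecidablePred fun pc :
      (Fin r → Fin m) × (Fin r → Fin n) => IsCycle r ω pc.1 pc.2] :
    numCycles r ω = (Finset.univ.filter fun pc :
      (Fin r → Fin m) × (Fin r → Fin n) => IsCycle r ω pc.1 pc.2).card := by
  rw [numCycles, Nat.card_eq_fintype_card, Fintype.card_subtype]

private lemma sum_numCycles_le (hr : 0 < r) :
    ∑ ω : KInst K n m, numCycles r ω
      ≤ m ^ r * n ^ r * (K ^ (2 * r) * n ^ (m * K - 2 * r)) := by
  classical
  have : ∀ ω : KInst K n m, numCycles r ω = ∑ pc : (Fin r → Fin m) × (Fin r → Fin n),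
      if IsCycle r ω pc.1 pc.2 then 1 else 0 := by
    intro ω
    rw [numCycles_eq ω, Finset.card_filter]
  simp_rw [this]
  rw [Finset.sum_comm]
  calc ∑ pc : (Fin r → Fin m) × (Fin r → Fin n), ∑ ω : KInst K n m,
        (if IsCycle r ω pc.1 pc.2 then 1 else 0)
      ≤ ∑ _pc : (Fin r → Fin m) × (Fin r → Fin n), K ^ (2 * r) * n ^ (m * K - 2 * r) := by
        apply Finset.sum_le_sum
        intro pc _
        rw [← Finset.card_filter]
        exact card_isCycle_le hr pc.1 pc.2
    _ = m ^ r * n ^ r * (K ^ (2 * r) * n ^ (m * K - 2 * r)) := by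
        rw [Finset.sum_const, smul_eq_mul, Finset.card_univ, Fintype.card_prod,
          Fintype.card_fun, Fintype.card_fun]
        simp

private lemma integral_uniform {α : Type*} [Fintype α] [MeasurableSpace α]
    [MeasurableSingletonClass α] (f : α → ℝ) :
    ∫ x, f x ∂(uniformOn (Set.univ : Set α)) = (Fintype.card α : ℝ)⁻¹ * ∑ x, f x := by
  rw [integral_fintype, Finset.mul_sum]
  congr 1
  funext x
  rw [measureReal_def, uniformOn_univ, Measure.count_singleton]
  simp [ENNReal.toReal_div, smul_eq_mul]
  exact .of_finite

end Aux

/-- **Expected number of cycles of length `r`.**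
For every fixed `r ≥ 1`, the expected number of cycles of length `r` in the random K-LSAT
instance with `m = ⌊cn⌋` constraints is asymptotically at most `(K²c)^r`. -/
theorem expected_cycles_le
    (K : ℕ) (hK : 2 ≤ K) (c : ℝ) (hc : 0 < c) (r : ℕ) (hr : 1 ≤ r) :
    Filter.limsup (fun n : ℕ =>
        ∫ ω, (numCycles r ω : ℝ) ∂(kMeasure K n ⌊c * n⌋₊)) atTop ≤
      ((K : ℝ) ^ 2 * c) ^ r := by
  have key : ∀ n : ℕ, ∫ ω, (numCycles r ω : ℝ) ∂(kMeasure K n ⌊c * n⌋₊)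
      ≤ ((K : ℝ) ^ 2 * c) ^ r := by
    intro n
    classical
    set m := ⌊c * (n : ℝ)⌋₊ with hm
    by_cases hmr : m < r
    · have h0 : ∀ ω : KInst K n m, numCycles r ω = 0 := by
        intro ω
        rw [numCycles, Nat.card_eq_zero]
        refine Or.inl ⟨fun pc => ?_⟩
        obtain ⟨-, hp, -, -⟩ := pc.2
        have := Fintype.card_le_of_injective _ hp
        simp only [Fintype.card_fin] at this
        omega
      simp only [h0, Nat.cast_zero, integral_zero]
      positivity
    · push_neg at hmr
      have hn : 0 < n := by
        rcases Nat.eq_zero_or_pos n with h | h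
        · exfalso
          rw [hm, h] at hmr
          simp at hmr
          omega
        · exact h
      have hN : (0 : ℝ) < (n : ℝ) := by exact_mod_cast hn
      have hA : m * 2 ≤ m * K := Nat.mul_le_mul_left m hK
      have h2r : 2 * r ≤ m * K := by omega
      have hcardKI : Fintype.card (KInst K n m) = n ^ (m * K) := by
        simp only [Fintype.card_fun, Fintype.card_fin]
        rw [← pow_mul, Nat.mul_comm]
      rw [kMeasure, integral_uniform, hcardKI]
      have hsum := sum_numCycles_le (K := K) (n := n) (m := m) (r := r) hr
      have hcast : ∑ ω : KInst K n m, (numCycles r ω : ℝ)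
          = ((∑ ω : KInst K n m, numCycles r ω : ℕ) : ℝ) := by
        push_cast; rfl
      have hstep : ((n ^ (m * K) : ℕ) : ℝ)⁻¹ * ∑ ω : KInst K n m, (numCycles r ω : ℝ)
          ≤ ((n ^ (m * K) : ℕ) : ℝ)⁻¹ *
            ((m ^ r * n ^ r * (K ^ (2 * r) * n ^ (m * K - 2 * r)) : ℕ) : ℝ) := by
        apply mul_le_mul_of_nonneg_left _ (by positivity)
        rw [hcast]
        exact_mod_cast hsum
      refine le_trans hstep ?_
      push_cast
      have ha : ((n : ℝ)) ^ r ≠ 0 := by positivity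
      have hb : ((n : ℝ)) ^ (m * K - 2 * r) ≠ 0 := by positivity
      have hNmK : ((n : ℝ)) ^ (m * K)
          = (n : ℝ) ^ (m * K - 2 * r) * ((n : ℝ) ^ r * (n : ℝ) ^ r) := by
        rw [← pow_add, ← pow_add]
        congr 1
        omega
      have heq : ((n : ℝ) ^ (m * K))⁻¹ *
          ((m : ℝ) ^ r * (n : ℝ) ^ r * ((K : ℝ) ^ (2 * r) * (n : ℝ) ^ (m * K - 2 * r)))
          = ((K : ℝ) ^ 2 * ((m : ℝ) / (n : ℝ))) ^ r := by
        rw [hNmK, mul_pow, div_pow, pow_mul]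
        field_simp
      rw [heq]
      apply pow_le_pow_left₀ (by positivity)
      apply mul_le_mul_of_nonneg_left _ (by positivity)
      rw [div_le_iff₀ hN]
      calc ((m : ℝ)) ≤ c * (n : ℝ) := by
            rw [hm]; exact Nat.floor_le (by positivity)
        _ = c * (n : ℝ) := rfl
  refine Filter.limsup_le_of_le ?_ (Filter.Eventually.of_forall key)
  exact isCoboundedUnder_le_of_le atTop
    (fun i => integral_nonneg fun ω => Nat.cast_nonneg _)
end
end

section
/- Let G be a finite weighted graph with edge weights 0 ≤ w_{ij} ≤ w_max, let b ≥ 1 be an integer, and let d ≥ 3. Let M(d) denote the total number of edges of G that lie on at least one cycle of length less than d. Then ((d−1)/d)·(LPM⁰(G) − M(d)·w_max) ≤ LPM(G) ≤ LPM⁰(G). -/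
open Finset

noncomputable section
open scoped Classical

variable {n : ℕ}


/-- Base case: only pendant edges. -/
lemma pendant_bound (b : ℕ) (x : Sym2 (Fin n) → ℝ)
    (hx0 : ∀ e, 0 ≤ x e) (hx1 : ∀ e, x e ≤ 1) :
    ∀ (V : Finset (Fin n)) (A : Finset (Sym2 (Fin n))),
    (∀ e ∈ A, ∃ u v', e = s(u, v') ∧ u ∈ V ∧ v' ∉ V) →
    (∀ v ∈ V, ∑ e ∈ A.filter (fun e => v ∈ e), x e ≤ (b : ℝ)) →
    ∃ F ⊆ A, (∀ v ∈ V, (F.filter (fun e => v ∈ e)).card ≤ b) ∧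
      ∑ e ∈ A, x e ≤ (F.card : ℝ) := by
  intro V
  induction V using Finset.induction_on with
  | empty =>
    intro A hA _
    have : A = ∅ := by
      rcases A.eq_empty_or_nonempty with h | ⟨e, he⟩
      · exact h
      · obtain ⟨u, v', _, hu, _⟩ := hA e he
        exact absurd hu (by simp)
    subst this
    exact ⟨∅, by simp⟩
  | @insert v V' hv ih =>
    intro A hA hdeg
    set Av := A.filter (fun e => v ∈ e) with hAv
    set A' := A \ Av with hA'
    -- A' satisfies the hypotheses for V'
    have hA'cond : ∀ e ∈ A', ∃ u v', e = s(u, v') ∧ u ∈ V' ∧ v' ∉ V' := by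
      intro e he
      have heA : e ∈ A := (Finset.mem_sdiff.mp he).1
      have henAv : e ∉ Av := (Finset.mem_sdiff.mp he).2
      obtain ⟨u, v', rfl, hu, hv'⟩ := hA e heA
      have huv : u ≠ v := by
        rintro rfl
        exact henAv (Finset.mem_filter.mpr ⟨heA, by simp⟩)
      have hu' : u ∈ V' := by
        rcases Finset.mem_insert.mp hu with h | h
        · exact absurd h huv
        · exact h
      refine ⟨u, v', rfl, hu', fun hc => hv' (Finset.mem_insert_of_mem hc)⟩
    have hdeg' : ∀ v'' ∈ V', ∑ e ∈ A'.filter (fun e => v'' ∈ e), x e ≤ (b : ℝ) := by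
      intro v'' hv''
      refine le_trans (Finset.sum_le_sum_of_subset_of_nonneg ?_ (fun e _ _ => hx0 e))
        (hdeg v'' (Finset.mem_insert_of_mem hv''))
      exact Finset.filter_subset_filter _ (Finset.sdiff_subset)
    obtain ⟨F', hF'sub, hF'deg, hF'sum⟩ := ih A' hA'cond hdeg'
    -- pick min(b, |Av|) edges of Av
    obtain ⟨B, hBsub, hBcard⟩ := Finset.exists_subset_card_eq (min_le_right b Av.card)
    refine ⟨F' ∪ B, ?_, ?_, ?_⟩
    · intro e he
      rcases Finset.mem_union.mp he with h | h
      · exact Finset.sdiff_subset (hF'sub h)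
      · exact Finset.filter_subset _ _ (hBsub h)
    · intro v'' hv''
      rcases Finset.mem_insert.mp hv'' with rfl | hmem
      · -- at v: F' edges don't contain v
        have : (F' ∪ B).filter (fun e => v'' ∈ e) ⊆ B := by
          intro e he
          rcases Finset.mem_filter.mp he with ⟨heU, hve⟩
          rcases Finset.mem_union.mp heU with h | h
          · exact absurd (Finset.mem_filter.mpr ⟨Finset.sdiff_subset (hF'sub h), hve⟩)
              ((Finset.mem_sdiff.mp (hF'sub h)).2)
          · exact h
        calc ((F' ∪ B).filter (fun e => v'' ∈ e)).card ≤ B.card := Finset.card_le_card this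
          _ ≤ b := hBcard.le.trans (min_le_left _ _)
      · -- at v'' ∈ V': B edges don't contain v''
        have hne : v'' ≠ v := fun h => hv (h ▸ hmem)
        have : (F' ∪ B).filter (fun e => v'' ∈ e) ⊆ F'.filter (fun e => v'' ∈ e) := by
          intro e he
          rcases Finset.mem_filter.mp he with ⟨heU, hve⟩
          rcases Finset.mem_union.mp heU with h | h
          · exact Finset.mem_filter.mpr ⟨h, hve⟩
          · exfalso
            have heAv := hBsub h
            have hveAv : v ∈ e := (Finset.mem_filter.mp heAv).2
            obtain ⟨u, w, rfl, hu, hw⟩ := hA e (Finset.filter_subset _ _ heAv)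
            have h1 : v = u := by
              rcases Sym2.mem_iff.mp hveAv with h1 | h1
              · exact h1
              · exact absurd (h1 ▸ Finset.mem_insert_self v V') hw
            have h2 : v'' = u := by
              rcases Sym2.mem_iff.mp hve with h2 | h2
              · exact h2
              · exact absurd (h2 ▸ Finset.mem_insert_of_mem hmem) hw
            exact hne (h2.trans h1.symm)
        exact (Finset.card_le_card this).trans (hF'deg v'' hmem)
    · -- sum bound
      have hsplit : A = A' ∪ Av := by
        rw [hA']; exact (Finset.sdiff_union_of_subset (Finset.filter_subset _ _)).symm
      have hdisj : Disjoint A' Av := Finset.sdiff_disjoint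
      rw [hsplit, Finset.sum_union hdisj]
      have h1 : ∑ e ∈ Av, x e ≤ (min b Av.card : ℝ) := by
        refine le_min ?_ ?_
        · have := hdeg v (Finset.mem_insert_self v V')
          simpa [hAv] using this
        · calc ∑ e ∈ Av, x e ≤ ∑ _e ∈ Av, (1 : ℝ) := Finset.sum_le_sum (fun e _ => hx1 e)
            _ = Av.card := by simp
      have hdisjF : Disjoint F' B := by
        refine Finset.disjoint_left.mpr (fun e heF' heB => ?_)
        exact (Finset.mem_sdiff.mp (hF'sub heF')).2 (hBsub heB)
      rw [Finset.card_union_of_disjoint hdisjF]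
      push_cast [hBcard]
      linarith

/-- Key combinatorial lemma: fractional `b`-matching weight on a forest (plus pendant
crossing edges) is at most the size of some integral `b`-matching. -/
lemma forest_matching_bound (b : ℕ) (hb : 1 ≤ b) (x : Sym2 (Fin n) → ℝ)
    (hx0 : ∀ e, 0 ≤ x e) (hx1 : ∀ e, x e ≤ 1) :
    ∀ (N : ℕ) (S : Finset (Sym2 (Fin n))) (V : Finset (Fin n)) (A : Finset (Sym2 (Fin n))),
    S.card ≤ N →
    (∀ e ∈ S, ¬ e.IsDiag) →
    (∀ e ∈ S, ∀ a ∈ e, a ∈ V) →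
    (∀ e ∈ A, ∃ u v', e = s(u, v') ∧ u ∈ V ∧ v' ∉ V) →
    Disjoint S A →
    (∀ S₀ ⊆ S, S₀.Nonempty → ∃ v, (S₀.filter (fun e => v ∈ e)).card = 1) →
    (∀ v ∈ V, ∑ e ∈ (S ∪ A).filter (fun e => v ∈ e), x e ≤ (b : ℝ)) →
    ∃ F ⊆ S ∪ A, (∀ v ∈ V, (F.filter (fun e => v ∈ e)).card ≤ b) ∧
      ∑ e ∈ S ∪ A, x e ≤ (F.card : ℝ) := by
  intro N
  induction N with
  | zero =>
    intro S V A hcard _ _ hA _ _ hdeg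
    have hS : S = ∅ := Finset.card_eq_zero.mp (Nat.le_zero.mp hcard)
    subst hS
    simp only [Finset.empty_union] at hdeg ⊢
    exact pendant_bound b x hx0 hx1 V A hA hdeg
  | succ N ih =>
    intro S V A hcard hdiag hins hA hdisj hleaf hdeg
    rcases S.eq_empty_or_nonempty with rfl | hSne
    · simp only [Finset.empty_union] at hdeg ⊢
      exact pendant_bound b x hx0 hx1 V A hA hdeg
    -- find a leaf vertex v with unique S-edge e₀ = s(v,u)
    obtain ⟨v, hvcard⟩ := hleaf S (Finset.Subset.refl S) hSne
    obtain ⟨e₀, he₀⟩ := Finset.card_eq_one.mp hvcard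
    have he₀S : e₀ ∈ S := by
      have : e₀ ∈ S.filter (fun e => v ∈ e) := he₀ ▸ Finset.mem_singleton_self e₀
      exact (Finset.mem_filter.mp this).1
    have hve₀ : v ∈ e₀ := by
      have : e₀ ∈ S.filter (fun e => v ∈ e) := he₀ ▸ Finset.mem_singleton_self e₀
      exact (Finset.mem_filter.mp this).2
    have hkey : ∀ e ∈ S, v ∈ e → e = e₀ := by
      intro e heS hvee
      have : e ∈ S.filter (fun e => v ∈ e) := Finset.mem_filter.mpr ⟨heS, hvee⟩
      rw [he₀] at this
      exact Finset.mem_singleton.mp this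
    obtain ⟨u, hu⟩ := Sym2.mem_iff_exists.mp hve₀
    have huv : u ≠ v := by
      intro h
      exact hdiag e₀ he₀S (by rw [hu, h]; exact Sym2.mk_isDiag_iff.mpr rfl)
    have hvV : v ∈ V := hins e₀ he₀S v hve₀
    have huV : u ∈ V := hins e₀ he₀S u (by rw [hu]; simp)
    set Av := A.filter (fun e => v ∈ e) with hAvdef
    have he₀nA : e₀ ∉ A := Finset.disjoint_left.mp hdisj he₀S
    have hAvne₀ : e₀ ∉ Av := fun h => he₀nA (Finset.filter_subset _ _ h)
    -- edges of Av touch V only at v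
    have hAvV : ∀ e ∈ Av, ∀ a ∈ e, a ∈ V → a = v := by
      intro e he a hae haV
      have heA : e ∈ A := Finset.filter_subset _ _ he
      have hvee : v ∈ e := (Finset.mem_filter.mp he).2
      obtain ⟨u₁, w, rfl, hu₁, hw⟩ := hA e heA
      have hvu₁ : v = u₁ := by
        rcases Sym2.mem_iff.mp hvee with h | h
        · exact h
        · exact absurd (h ▸ hvV) hw
      rcases Sym2.mem_iff.mp hae with h | h
      · rw [h, ← hvu₁]
      · exact absurd (h ▸ haV) hw
    rcases le_or_gt b Av.card with hbt | htb
    · -- Case t ≥ b : delete all edges at v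
      set S' := S.erase e₀ with hS'def
      set A' := A \ Av with hA'def
      have hS'card : S'.card ≤ N := by
        have h1 : S'.card = S.card - 1 := by rw [hS'def]; exact Finset.card_erase_of_mem he₀S
        have h2 : 1 ≤ S.card := Finset.card_pos.mpr ⟨e₀, he₀S⟩
        omega
      have hsub' : S' ∪ A' ⊆ S ∪ A :=
        Finset.union_subset_union (Finset.erase_subset _ _) Finset.sdiff_subset
      obtain ⟨F', hF'sub, hF'deg, hF'sum⟩ := ih S' V A' hS'card
        (fun e he => hdiag e (Finset.erase_subset _ _ he))
        (fun e he => hins e (Finset.erase_subset _ _ he))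
        (fun e he => hA e (Finset.mem_sdiff.mp he).1)
        (Finset.disjoint_of_subset_left (Finset.erase_subset _ _)
          (Finset.disjoint_of_subset_right Finset.sdiff_subset hdisj))
        (fun S₀ hS₀ => hleaf S₀ (hS₀.trans (Finset.erase_subset _ _)))
        (fun v' hv' => le_trans (Finset.sum_le_sum_of_subset_of_nonneg
          (Finset.filter_subset_filter _ hsub') (fun e _ _ => hx0 e)) (hdeg v' hv'))
      obtain ⟨B, hBsub, hBcard⟩ := Finset.exists_subset_card_eq hbt
      have hBdisj : Disjoint F' B := by
        refine Finset.disjoint_left.mpr (fun e heF heB => ?_)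
        rcases Finset.mem_union.mp (hF'sub heF) with h | h
        · exact Finset.disjoint_left.mp hdisj (Finset.erase_subset _ _ h)
            (Finset.filter_subset _ _ (hBsub heB))
        · exact (Finset.mem_sdiff.mp h).2 (hBsub heB)
      refine ⟨F' ∪ B, ?_, ?_, ?_⟩
      · intro e he
        rcases Finset.mem_union.mp he with h | h
        · exact hsub' (hF'sub h)
        · exact Finset.mem_union_right _ (Finset.filter_subset _ _ (hBsub h))
      · intro v' hv'
        by_cases hvv' : v' = v
        · subst hvv'
          have hsubB : (F' ∪ B).filter (fun e => v' ∈ e) ⊆ B := by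
            intro e he
            rcases Finset.mem_filter.mp he with ⟨heU, hvee⟩
            rcases Finset.mem_union.mp heU with h | h
            · exfalso
              rcases Finset.mem_union.mp (hF'sub h) with h2 | h2
              · have : e = e₀ := hkey e (Finset.erase_subset _ _ h2) hvee
                exact (Finset.mem_erase.mp h2).1 this
              · exact (Finset.mem_sdiff.mp h2).2
                  (Finset.mem_filter.mpr ⟨(Finset.mem_sdiff.mp h2).1, hvee⟩)
            · exact h
          calc ((F' ∪ B).filter (fun e => v' ∈ e)).card ≤ B.card := Finset.card_le_card hsubB
            _ = b := hBcard
        · have hsubF : (F' ∪ B).filter (fun e => v' ∈ e) ⊆ F'.filter (fun e => v' ∈ e) := by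
            intro e he
            rcases Finset.mem_filter.mp he with ⟨heU, hvee⟩
            rcases Finset.mem_union.mp heU with h | h
            · exact Finset.mem_filter.mpr ⟨h, hvee⟩
            · exact absurd (hAvV e (hBsub h) v' hvee hv') hvv'
          exact (Finset.card_le_card hsubF).trans (hF'deg v' hv')
      · -- sum
        have hsplit : S ∪ A = (S' ∪ A') ∪ insert e₀ Av := by
          ext e
          simp only [Finset.mem_union, Finset.mem_insert, Finset.mem_erase, Finset.mem_sdiff,
            hS'def, hA'def, hAvdef, Finset.mem_filter]
          constructor
          · rintro (h | h)
            · by_cases he : e = e₀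
              · tauto
              · tauto
            · by_cases hv' : v ∈ e
              · tauto
              · tauto
          · rintro ((⟨_, h⟩ | ⟨h, _⟩) | (rfl | ⟨h, _⟩)) <;> tauto
        have hdisj2 : Disjoint (S' ∪ A') (insert e₀ Av) := by
          refine Finset.disjoint_right.mpr (fun e he heU => ?_)
          rcases Finset.mem_insert.mp he with rfl | he2
          · rcases Finset.mem_union.mp heU with h | h
            · exact (Finset.mem_erase.mp h).1 rfl
            · exact he₀nA (Finset.mem_sdiff.mp h).1
          · rcases Finset.mem_union.mp heU with h | h
            · exact Finset.disjoint_left.mp hdisj (Finset.erase_subset _ _ h)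
                (Finset.filter_subset _ _ he2)
            · exact (Finset.mem_sdiff.mp h).2 he2
        rw [hsplit, Finset.sum_union hdisj2, Finset.card_union_of_disjoint hBdisj, hBcard]
        have hins0 : insert e₀ Av ⊆ (S ∪ A).filter (fun e => v ∈ e) := by
          intro e he
          rcases Finset.mem_insert.mp he with rfl | he2
          · exact Finset.mem_filter.mpr ⟨Finset.mem_union_left _ he₀S, hve₀⟩
          · exact Finset.mem_filter.mpr ⟨Finset.mem_union_right _ (Finset.filter_subset _ _ he2),
              (Finset.mem_filter.mp he2).2⟩
        have h2 : ∑ e ∈ insert e₀ Av, x e ≤ (b : ℝ) :=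
          le_trans (Finset.sum_le_sum_of_subset_of_nonneg hins0 (fun e _ _ => hx0 e)) (hdeg v hvV)
        push_cast
        linarith
    · -- Case t < b : move e₀ to the pendant side, delete v
      set V'' := V.erase v with hV''def
      set S'' := S.erase e₀ with hS''def
      set A'' := insert e₀ (A \ Av) with hA''def
      have hS''card : S''.card ≤ N := by
        have h1 : S''.card = S.card - 1 := by rw [hS''def]; exact Finset.card_erase_of_mem he₀S
        have h2 : 1 ≤ S.card := Finset.card_pos.mpr ⟨e₀, he₀S⟩
        omega
      have hsub'' : S'' ∪ A'' ⊆ S ∪ A := by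
        intro e he
        rcases Finset.mem_union.mp he with h | h
        · exact Finset.mem_union_left _ (Finset.erase_subset _ _ h)
        · rcases Finset.mem_insert.mp h with rfl | h2
          · exact Finset.mem_union_left _ he₀S
          · exact Finset.mem_union_right _ (Finset.mem_sdiff.mp h2).1
      have hA''cond : ∀ e ∈ A'', ∃ u₁ v₁, e = s(u₁, v₁) ∧ u₁ ∈ V'' ∧ v₁ ∉ V'' := by
        intro e he
        rcases Finset.mem_insert.mp he with rfl | h2
        · refine ⟨u, v, ?_, Finset.mem_erase.mpr ⟨huv, huV⟩, fun h => (Finset.mem_erase.mp h).1 rfl⟩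
          rw [hu, Sym2.eq_swap]
        · obtain ⟨u₁, w, rfl, hu₁, hw⟩ := hA e (Finset.mem_sdiff.mp h2).1
          have hu₁v : u₁ ≠ v := by
            rintro rfl
            exact (Finset.mem_sdiff.mp h2).2
              (Finset.mem_filter.mpr ⟨(Finset.mem_sdiff.mp h2).1, by simp⟩)
          exact ⟨u₁, w, rfl, Finset.mem_erase.mpr ⟨hu₁v, hu₁⟩,
            fun h => hw (Finset.erase_subset _ _ h)⟩
      obtain ⟨F'', hF''sub, hF''deg, hF''sum⟩ := ih S'' V'' A'' hS''card
        (fun e he => hdiag e (Finset.erase_subset _ _ he))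
        (by
          intro e he a hae
          have heS : e ∈ S := Finset.erase_subset _ _ he
          refine Finset.mem_erase.mpr ⟨?_, hins e heS a hae⟩
          rintro rfl
          exact (Finset.mem_erase.mp he).1 (hkey e heS hae))
        hA''cond
        (by
          refine Finset.disjoint_left.mpr (fun e heS'' heA'' => ?_)
          rcases Finset.mem_insert.mp heA'' with rfl | h2
          · exact (Finset.mem_erase.mp heS'').1 rfl
          · exact Finset.disjoint_left.mp hdisj (Finset.erase_subset _ _ heS'')
              (Finset.mem_sdiff.mp h2).1)
        (fun S₀ hS₀ => hleaf S₀ (hS₀.trans (Finset.erase_subset _ _)))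
        (fun v' hv' => le_trans (Finset.sum_le_sum_of_subset_of_nonneg
          (Finset.filter_subset_filter _ hsub'') (fun e _ _ => hx0 e))
          (hdeg v' (Finset.erase_subset _ _ hv')))
      have hAvdisj : Disjoint F'' Av := by
        refine Finset.disjoint_left.mpr (fun e heF heAv => ?_)
        rcases Finset.mem_union.mp (hF''sub heF) with h | h
        · exact Finset.disjoint_left.mp hdisj (Finset.erase_subset _ _ h)
            (Finset.filter_subset _ _ heAv)
        · rcases Finset.mem_insert.mp h with rfl | h2
          · exact hAvne₀ heAv
          · exact (Finset.mem_sdiff.mp h2).2 heAv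
      refine ⟨F'' ∪ Av, ?_, ?_, ?_⟩
      · intro e he
        rcases Finset.mem_union.mp he with h | h
        · exact hsub'' (hF''sub h)
        · exact Finset.mem_union_right _ (Finset.filter_subset _ _ h)
      · intro v' hv'
        by_cases hvv' : v' = v
        · subst hvv'
          have hsubI : (F'' ∪ Av).filter (fun e => v' ∈ e) ⊆ insert e₀ Av := by
            intro e he
            rcases Finset.mem_filter.mp he with ⟨heU, hvee⟩
            rcases Finset.mem_union.mp heU with h | h
            · rcases Finset.mem_union.mp (hF''sub h) with h2 | h2
              · exact ((Finset.mem_erase.mp h2).1 (hkey e (Finset.erase_subset _ _ h2) hvee)).elim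
              · rcases Finset.mem_insert.mp h2 with rfl | h3
                · exact Finset.mem_insert_self _ _
                · exact absurd (Finset.mem_filter.mpr ⟨(Finset.mem_sdiff.mp h3).1, hvee⟩)
                    (Finset.mem_sdiff.mp h3).2
            · exact Finset.mem_insert_of_mem h
          calc ((F'' ∪ Av).filter (fun e => v' ∈ e)).card ≤ (insert e₀ Av).card :=
                Finset.card_le_card hsubI
            _ ≤ Av.card + 1 := Finset.card_insert_le _ _
            _ ≤ b := by omega
        · have hv'V'' : v' ∈ V'' := Finset.mem_erase.mpr ⟨hvv', hv'⟩
          have hsubF : (F'' ∪ Av).filter (fun e => v' ∈ e) ⊆ F''.filter (fun e => v' ∈ e) := by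
            intro e he
            rcases Finset.mem_filter.mp he with ⟨heU, hvee⟩
            rcases Finset.mem_union.mp heU with h | h
            · exact Finset.mem_filter.mpr ⟨h, hvee⟩
            · exact absurd (hAvV e h v' hvee hv') hvv'
          exact (Finset.card_le_card hsubF).trans (hF''deg v' hv'V'')
      · -- sum
        have hsplit : S ∪ A = (S'' ∪ A'') ∪ Av := by
          ext e
          simp only [Finset.mem_union, Finset.mem_insert, Finset.mem_erase, Finset.mem_sdiff,
            hS''def, hA''def, hAvdef, Finset.mem_filter]
          constructor
          · rintro (h | h)
            · by_cases he : e = e₀ <;> tauto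
            · by_cases hv' : v ∈ e <;> tauto
          · rintro ((⟨_, h⟩ | (rfl | ⟨h, _⟩)) | ⟨h, _⟩) <;> tauto
        have hdisj2 : Disjoint (S'' ∪ A'') Av := by
          refine Finset.disjoint_right.mpr (fun e he heU => ?_)
          rcases Finset.mem_union.mp heU with h | h
          · exact Finset.disjoint_left.mp hdisj (Finset.erase_subset _ _ h)
              (Finset.filter_subset _ _ he)
          · rcases Finset.mem_insert.mp h with rfl | h2
            · exact hAvne₀ he
            · exact (Finset.mem_sdiff.mp h2).2 he
        rw [hsplit, Finset.sum_union hdisj2, Finset.card_union_of_disjoint hAvdisj]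
        have h2 : ∑ e ∈ Av, x e ≤ (Av.card : ℝ) := by
          calc ∑ e ∈ Av, x e ≤ ∑ _e ∈ Av, (1 : ℝ) := Finset.sum_le_sum (fun e _ => hx1 e)
            _ = Av.card := by simp
        push_cast
        linarith

lemma walk_support_mem_edge {G : SimpleGraph (Fin n)} :
    ∀ {u v : Fin n} (p : G.Walk u v) (a : Fin n), a ∈ p.support →
      a = v ∨ ∃ e ∈ p.edges, a ∈ e := by
  intro u v p
  induction p with
  | nil => intro a ha; simp at ha; exact Or.inl ha
  | @cons u' w' v' h q ih =>
    intro a ha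
    rw [SimpleGraph.Walk.support_cons, List.mem_cons] at ha
    rcases ha with rfl | ha
    · exact Or.inr ⟨s(a, w'), by simp, by simp⟩
    · rcases ih a ha with h1 | ⟨e, he, hae⟩
      · exact Or.inl h1
      · exact Or.inr ⟨e, by simp [he], hae⟩

/-- If a nonempty edge set has no vertex of degree exactly one, it contains a cycle. -/
lemma exists_cycle_of_no_leaf (G : SimpleGraph (Fin n)) [DecidableRel G.Adj]
    (S₀ : Finset (Sym2 (Fin n))) (hS : S₀ ⊆ G.edgeFinset) (hne : S₀.Nonempty)
    (hdeg : ∀ v : Fin n, (S₀.filter (fun e => v ∈ e)).card ≠ 1) :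
    ∃ (u : Fin n) (p : G.Walk u u), p.IsCycle ∧ (∀ e ∈ p.edges, e ∈ S₀) ∧
      (∀ a ∈ p.support, ∃ e ∈ S₀, a ∈ e) := by
  set L : Set ℕ := {m | ∃ (u v : Fin n) (p : G.Walk u v), p.IsPath ∧
    (∀ e ∈ p.edges, e ∈ S₀) ∧ p.length = m} with hL
  have hLbdd : BddAbove L := by
    refine ⟨n, fun m hm => ?_⟩
    obtain ⟨u, v, p, hp, _, hlen⟩ := hm
    have := hp.length_lt
    simp only [Fintype.card_fin] at this
    omega
  have hLne : (1 : ℕ) ∈ L := by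
    obtain ⟨e, he⟩ := hne
    have heG : e ∈ G.edgeSet := SimpleGraph.mem_edgeFinset.mp (hS he)
    induction e with
    | _ a b =>
      have hadj : G.Adj a b := heG
      refine ⟨a, b, SimpleGraph.Walk.cons hadj SimpleGraph.Walk.nil, ?_, ?_, rfl⟩
      · simp [SimpleGraph.Walk.isPath_def, hadj.ne]
      · intro e' he'
        simp only [SimpleGraph.Walk.edges_cons, SimpleGraph.Walk.edges_nil,
          List.mem_singleton] at he'
        rwa [he']
  set m := sSup L with hm
  have hmem : m ∈ L := Nat.sSup_mem ⟨1, hLne⟩ hLbdd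
  have hmax : ∀ k ∈ L, k ≤ m := fun k hk => le_csSup hLbdd hk
  have hm1 : 1 ≤ m := hmax 1 hLne
  obtain ⟨u, v, p, hp, hpe, hplen⟩ := hmem
  have H : ∃ (q : G.Walk v u), q.IsPath ∧ (∀ e ∈ q.edges, e ∈ S₀) ∧ q.length = m :=
    ⟨p.reverse, hp.reverse, fun e he => hpe e (by
      rw [SimpleGraph.Walk.edges_reverse, List.mem_reverse] at he; exact he), by
      rw [SimpleGraph.Walk.length_reverse]; exact hplen⟩
  obtain ⟨q, hqp, hqe, hqlen⟩ := H
  cases q with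
  | nil => simp at hqlen; omega
  | @cons _ w₀ _ h₀ q₀ =>
    have hf : s(v, w₀) ∈ (SimpleGraph.Walk.cons h₀ q₀).edges := by simp
    have hfS : s(v, w₀) ∈ S₀ := hqe _ hf
    have hcard : 1 < (S₀.filter (fun e => v ∈ e)).card := by
      have h1 : s(v, w₀) ∈ S₀.filter (fun e => v ∈ e) :=
        Finset.mem_filter.mpr ⟨hfS, by simp⟩
      have h2 : 0 < (S₀.filter (fun e => v ∈ e)).card := Finset.card_pos.mpr ⟨_, h1⟩
      have := hdeg v
      omega
    obtain ⟨e', he', hene⟩ := Finset.exists_mem_ne hcard (s(v, w₀))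
    have he'S : e' ∈ S₀ := (Finset.mem_filter.mp he').1
    have hve' : v ∈ e' := (Finset.mem_filter.mp he').2
    obtain ⟨w, hw⟩ := Sym2.mem_iff_exists.mp hve'
    have hadj : G.Adj v w := by
      have := SimpleGraph.mem_edgeFinset.mp (hS he'S)
      rwa [hw, SimpleGraph.mem_edgeSet] at this
    have he'nq : e' ∉ (SimpleGraph.Walk.cons h₀ q₀).edges := by
      intro hmem'
      rw [SimpleGraph.Walk.edges_cons, List.mem_cons] at hmem'
      rcases hmem' with h | h
      · exact hene h
      · have : v ∈ q₀.support := by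
          rw [hw] at h
          exact q₀.fst_mem_support_of_mem_edges h
        rw [SimpleGraph.Walk.cons_isPath_iff] at hqp
        exact hqp.2 this
    by_cases hwsup : w ∈ (SimpleGraph.Walk.cons h₀ q₀).support
    · -- close a cycle
      set r := (SimpleGraph.Walk.cons h₀ q₀).takeUntil w hwsup with hr
      have hrp : r.IsPath := hqp.takeUntil hwsup
      have hre : ∀ e ∈ r.edges, e ∈ S₀ := fun e he =>
        hqe e (SimpleGraph.Walk.edges_takeUntil_subset _ hwsup he)
      have hcyc : (SimpleGraph.Walk.cons hadj.symm r).IsCycle := by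
        rw [SimpleGraph.Walk.cons_isCycle_iff]
        refine ⟨hrp, fun hc => ?_⟩
        have : s(w, v) = e' := by rw [hw, Sym2.eq_swap]
        rw [this] at hc
        exact he'nq (SimpleGraph.Walk.edges_takeUntil_subset _ hwsup hc)
      refine ⟨w, SimpleGraph.Walk.cons hadj.symm r, hcyc, ?_, ?_⟩
      · intro e he
        rw [SimpleGraph.Walk.edges_cons, List.mem_cons] at he
        rcases he with h | h
        · rw [h, Sym2.eq_swap, ← hw]; exact he'S
        · exact hre e h
      · intro a ha
        rw [SimpleGraph.Walk.support_cons, List.mem_cons] at ha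
        rcases ha with rfl | ha
        · exact ⟨e', he'S, by rw [hw]; simp⟩
        · rcases walk_support_mem_edge r a ha with rfl | ⟨e, he, hae⟩
          · exact ⟨e', he'S, by rw [hw]; simp⟩
          · exact ⟨e, hre e he, hae⟩
    · -- extend the path: contradiction with maximality
      exfalso
      have hext : (m + 1) ∈ L := by
        refine ⟨w, u, SimpleGraph.Walk.cons hadj.symm (SimpleGraph.Walk.cons h₀ q₀), ?_, ?_, ?_⟩
        · rw [SimpleGraph.Walk.cons_isPath_iff]
          exact ⟨hqp, hwsup⟩
        · intro e he
          rw [SimpleGraph.Walk.edges_cons, List.mem_cons] at he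
          rcases he with h | h
          · rw [h, Sym2.eq_swap, ← hw]; exact he'S
          · exact hqe e h
        · simp [hqlen]
      have := hmax _ hext
      omega

lemma cycle_length_le {G : SimpleGraph (Fin n)} {u : Fin n} {c : G.Walk u u}
    (hc : c.IsCycle) (V : Finset (Fin n)) (hsup : ∀ a ∈ c.support, a ∈ V) :
    c.length ≤ V.card := by
  have hnodup : c.support.tail.Nodup := hc.2
  have hlen : c.support.tail.length = c.length := by
    have := SimpleGraph.Walk.length_support c
    have h2 := List.length_tail (l := c.support)
    omega
  have hcard : c.support.tail.toFinset.card = c.length := by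
    rw [List.toFinset_card_of_nodup hnodup, hlen]
  have hsub : c.support.tail.toFinset ⊆ V := by
    intro a ha
    rw [List.mem_toFinset] at ha
    exact hsup a (List.mem_of_mem_tail ha)
  calc c.length = c.support.tail.toFinset.card := hcard.symm
    _ ≤ V.card := Finset.card_le_card hsub

lemma double_count (F : Finset (Sym2 (Fin n))) (V : Finset (Fin n)) :
    ∑ v ∈ V, (F.filter (fun e => v ∈ e)).card = ∑ e ∈ F, (V.filter (fun v => v ∈ e)).card := by
  simp only [Finset.card_filter]
  rw [Finset.sum_comm]

lemma card_filter_mem_of_inside {V : Finset (Fin n)} {e : Sym2 (Fin n)}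
    (hd : ¬ e.IsDiag) (hin : ∀ a ∈ e, a ∈ V) :
    (V.filter (fun v => v ∈ e)).card = 2 := by
  induction e with
  | _ a b =>
    have hab : a ≠ b := fun h => hd (h ▸ Sym2.mk_isDiag_iff.mpr rfl)
    have : V.filter (fun v => v ∈ s(a, b)) = {a, b} := by
      ext v
      simp only [Finset.mem_filter, Sym2.mem_iff, Finset.mem_insert, Finset.mem_singleton]
      constructor
      · rintro ⟨_, h⟩; exact h
      · rintro (rfl | rfl)
        · exact ⟨hin v (by simp), Or.inl rfl⟩
        · exact ⟨hin v (by simp), Or.inr rfl⟩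
    rw [this, Finset.card_insert_of_notMem (by simp [hab]), Finset.card_singleton]

lemma card_filter_mem_of_crossing {V : Finset (Fin n)} {u w : Fin n}
    (hu : u ∈ V) (hw : w ∉ V) :
    (V.filter (fun v => v ∈ s(u, w))).card = 1 := by
  have : V.filter (fun v => v ∈ s(u, w)) = {u} := by
    ext v
    simp only [Finset.mem_filter, Sym2.mem_iff, Finset.mem_singleton]
    constructor
    · rintro ⟨hv, rfl | rfl⟩
      · rfl
      · exact absurd hv hw
    · rintro rfl; exact ⟨hu, Or.inl rfl⟩
  rw [this, Finset.card_singleton]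

/-- Counting bound: an integral `b`-matching in an odd configuration has size `≤ (k-1)/2`. -/
lemma matching_card_bound (b : ℕ) (V : Finset (Fin n)) (S A F : Finset (Sym2 (Fin n)))
    (hdiag : ∀ e ∈ S, ¬ e.IsDiag)
    (hins : ∀ e ∈ S, ∀ a ∈ e, a ∈ V)
    (hA : ∀ e ∈ A, ∃ u v', e = s(u, v') ∧ u ∈ V ∧ v' ∉ V)
    (hdisj : Disjoint S A)
    (hFsub : F ⊆ S ∪ A)
    (hFdeg : ∀ v ∈ V, (F.filter (fun e => v ∈ e)).card ≤ b)
    (hodd : Odd (b * V.card + A.card)) :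
    2 * F.card + 1 ≤ b * V.card + A.card := by
  have hFsplit : F = (F ∩ S) ∪ (F ∩ A) := by
    rw [← Finset.inter_union_distrib_left]
    exact (Finset.inter_eq_left.mpr hFsub).symm
  have hdisjF : Disjoint (F ∩ S) (F ∩ A) :=
    Finset.disjoint_of_subset_left Finset.inter_subset_right
      (Finset.disjoint_of_subset_right Finset.inter_subset_right hdisj)
  have hsum : ∑ e ∈ F, (V.filter (fun v => v ∈ e)).card
      = 2 * (F ∩ S).card + (F ∩ A).card := by
    have h1 : ∀ e ∈ F ∩ S, (V.filter (fun v => v ∈ e)).card = 2 := fun e he =>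
      card_filter_mem_of_inside (hdiag e (Finset.mem_of_mem_inter_right he))
        (hins e (Finset.mem_of_mem_inter_right he))
    have h2 : ∀ e ∈ F ∩ A, (V.filter (fun v => v ∈ e)).card = 1 := by
      intro e he
      obtain ⟨u, w, rfl, hu, hw⟩ := hA e (Finset.mem_of_mem_inter_right he)
      exact card_filter_mem_of_crossing hu hw
    conv_lhs => rw [hFsplit]
    rw [Finset.sum_union hdisjF, Finset.sum_congr rfl h1, Finset.sum_congr rfl h2]
    simp [mul_comm]
  have hdegsum : ∑ v ∈ V, (F.filter (fun e => v ∈ e)).card ≤ b * V.card := by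
    calc ∑ v ∈ V, (F.filter (fun e => v ∈ e)).card ≤ ∑ _v ∈ V, b :=
          Finset.sum_le_sum hFdeg
      _ = b * V.card := by rw [Finset.sum_const, smul_eq_mul, mul_comm]
  have hkey : 2 * (F ∩ S).card + (F ∩ A).card ≤ b * V.card := by
    rw [← hsum, ← double_count]; exact hdegsum
  have hFA : (F ∩ A).card ≤ A.card := Finset.card_le_card Finset.inter_subset_right
  have hFcard : F.card = (F ∩ S).card + (F ∩ A).card := by
    conv_lhs => rw [hFsplit]
    exact Finset.card_union_of_disjoint hdisjF
  obtain ⟨j, hj⟩ := hodd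
  omega
/-- The optimal value `LPM⁰(G)` of the degree-constrained fractional `b`-matching linear program:
maximize `Σ_e w_e x_e` subject to `Σ_{e ∋ i} x_e ≤ b` for every vertex `i` and `0 ≤ x_e ≤ 1`
for every edge `e`. -/
def LPM0 {n : ℕ} (G : SimpleGraph (Fin n)) [DecidableRel G.Adj]
    (w : Sym2 (Fin n) → ℝ) (b : ℕ) : ℝ :=
  sSup { v : ℝ | ∃ x : Sym2 (Fin n) → ℝ,
    (∀ e ∈ G.edgeFinset, 0 ≤ x e ∧ x e ≤ 1) ∧
    (∀ i : Fin n, ∑ e ∈ G.edgeFinset.filter (fun e => i ∈ e), x e ≤ (b : ℝ)) ∧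
    v = ∑ e ∈ G.edgeFinset, w e * x e }

/-- The optimal value `LPM(G)` of the fractional `b`-matching linear program with odd-set
constraints: in addition to the constraints of `LPM⁰`, for every vertex set `V` and every set
`A` of edges with exactly one endpoint in `V` such that `b|V| + |A|` is odd, one requires
`Σ_{e ⊆ V} x_e + Σ_{e ∈ A} x_e ≤ (b|V| + |A| − 1)/2`. -/
def LPM {n : ℕ} (G : SimpleGraph (Fin n)) [DecidableRel G.Adj]
    (w : Sym2 (Fin n) → ℝ) (b : ℕ) : ℝ :=
  sSup { v : ℝ | ∃ x : Sym2 (Fin n) → ℝ,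
    (∀ e ∈ G.edgeFinset, 0 ≤ x e ∧ x e ≤ 1) ∧
    (∀ i : Fin n, ∑ e ∈ G.edgeFinset.filter (fun e => i ∈ e), x e ≤ (b : ℝ)) ∧
    (∀ (V : Finset (Fin n)) (A : Finset (Sym2 (Fin n))),
      A ⊆ G.edgeFinset.filter (fun e => ∃ u v', e = s(u, v') ∧ u ∈ V ∧ v' ∉ V) →
      Odd (b * V.card + A.card) →
      ∑ e ∈ G.edgeFinset.filter (fun e => ∀ a ∈ e, a ∈ V), x e + ∑ e ∈ A, x e ≤
        ((b * V.card + A.card : ℕ) - 1 : ℝ) / 2) ∧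
    v = ∑ e ∈ G.edgeFinset, w e * x e }

/-- The number of edges of `G` lying on at least one cycle of length less than `d`. -/
def edgesOnShortCycles {n : ℕ} (G : SimpleGraph (Fin n)) (d : ℕ) : ℕ :=
  Nat.card {e : Sym2 (Fin n) //
    ∃ (u : Fin n) (p : G.Walk u u), p.IsCycle ∧ p.length < d ∧ e ∈ p.edges}

/-- The predicate: `e` lies on a cycle of length `< d`. -/
def shortPred {n : ℕ} (G : SimpleGraph (Fin n)) (d : ℕ) (e : Sym2 (Fin n)) : Prop :=
  ∃ (u : Fin n) (p : G.Walk u u), p.IsCycle ∧ p.length < d ∧ e ∈ p.edges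

lemma edgesOnShortCycles_eq {n : ℕ} (G : SimpleGraph (Fin n)) (d : ℕ) :
    edgesOnShortCycles G d = (Finset.univ.filter (shortPred G d)).card := by
  unfold edgesOnShortCycles shortPred
  rw [Nat.card_eq_fintype_card, Fintype.card_subtype]
  congr!

/-- **The odd-set constraints cost little when there are few short cycles.**
For a finite weighted graph `G` with edge weights in `[0, w_max]`, an integer `b ≥ 1` and
`d ≥ 3`, with `M(d)` the number of edges on cycles of length `< d`:
`((d−1)/d)·(LPM⁰(G) − M(d)·w_max) ≤ LPM(G) ≤ LPM⁰(G)`. -/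
theorem lpm_vs_lpm0
    {n : ℕ} (G : SimpleGraph (Fin n)) [DecidableRel G.Adj]
    (w : Sym2 (Fin n) → ℝ) (wmax : ℝ)
    (hw : ∀ e ∈ G.edgeFinset, 0 ≤ w e ∧ w e ≤ wmax)
    (b : ℕ) (hb : 1 ≤ b) (d : ℕ) (hd : 3 ≤ d) :
    ((d : ℝ) - 1) / d * (LPM0 G w b - (edgesOnShortCycles G d : ℝ) * wmax) ≤ LPM G w b ∧
    LPM G w b ≤ LPM0 G w b := by
  have hD : (3:ℝ) ≤ (d:ℝ) := by exact_mod_cast hd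
  have hD0 : (0:ℝ) < (d:ℝ) := by linarith
  have hD1 : (0:ℝ) < (d:ℝ) - 1 := by linarith
  set c : ℝ := ((d:ℝ) - 1) / d with hcdef
  have hc0 : 0 ≤ c := by positivity
  have hc1 : c ≤ 1 := by rw [hcdef, div_le_one hD0]; linarith
  set P0 : Set ℝ := { v : ℝ | ∃ x : Sym2 (Fin n) → ℝ,
    (∀ e ∈ G.edgeFinset, 0 ≤ x e ∧ x e ≤ 1) ∧
    (∀ i : Fin n, ∑ e ∈ G.edgeFinset.filter (fun e => i ∈ e), x e ≤ (b : ℝ)) ∧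
    v = ∑ e ∈ G.edgeFinset, w e * x e } with hP0def
  set P1 : Set ℝ := { v : ℝ | ∃ x : Sym2 (Fin n) → ℝ,
    (∀ e ∈ G.edgeFinset, 0 ≤ x e ∧ x e ≤ 1) ∧
    (∀ i : Fin n, ∑ e ∈ G.edgeFinset.filter (fun e => i ∈ e), x e ≤ (b : ℝ)) ∧
    (∀ (V : Finset (Fin n)) (A : Finset (Sym2 (Fin n))),
      A ⊆ G.edgeFinset.filter (fun e => ∃ u v', e = s(u, v') ∧ u ∈ V ∧ v' ∉ V) →
      Odd (b * V.card + A.card) →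
      ∑ e ∈ G.edgeFinset.filter (fun e => ∀ a ∈ e, a ∈ V), x e + ∑ e ∈ A, x e ≤
        ((b * V.card + A.card : ℕ) - 1 : ℝ) / 2) ∧
    v = ∑ e ∈ G.edgeFinset, w e * x e } with hP1def
  have hLPM0 : LPM0 G w b = sSup P0 := rfl
  have hLPM : LPM G w b = sSup P1 := rfl
  have hsub : P1 ⊆ P0 := by
    rintro v ⟨x, h1, h2, _, h4⟩
    exact ⟨x, h1, h2, h4⟩
  have h0P1 : (0:ℝ) ∈ P1 := by
    refine ⟨fun _ => 0, fun e _ => by norm_num, fun i => by simp, ?_, by simp⟩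
    intro V A _ hodd
    have hk1 : 1 ≤ b * V.card + A.card := hodd.pos
    have hk1' : (1:ℝ) ≤ ((b * V.card + A.card : ℕ) : ℝ) := by exact_mod_cast hk1
    simp only [Finset.sum_const_zero]
    linarith
  have h0P0 : (0:ℝ) ∈ P0 := hsub h0P1
  have hbdd0 : BddAbove P0 := by
    refine ⟨∑ e ∈ G.edgeFinset, w e, ?_⟩
    rintro v ⟨x, h1, _, rfl⟩
    refine Finset.sum_le_sum (fun e he => ?_)
    calc w e * x e ≤ w e * 1 :=
          mul_le_mul_of_nonneg_left (h1 e he).2 (hw e he).1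
      _ = w e := mul_one _
  have hbdd1 : BddAbove P1 := hbdd0.mono hsub
  have hupper : LPM G w b ≤ LPM0 G w b := by
    rw [hLPM, hLPM0]
    exact csSup_le_csSup hbdd0 ⟨0, h0P1⟩ hsub
  refine ⟨?_, hupper⟩
  -- the lower bound
  set M : ℝ := (edgesOnShortCycles G d : ℝ) with hMdef
  have hcore : ∀ v ∈ P0, v ≤ M * wmax + ((d:ℝ)/((d:ℝ)-1)) * LPM G w b := by
    rintro v ⟨x, hx01, hxdeg, rfl⟩
    set y : Sym2 (Fin n) → ℝ :=
      fun e => if e ∈ G.edgeFinset ∧ ¬ shortPred G d e then c * x e else 0 with hydef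
    have hy0 : ∀ e, 0 ≤ y e := by
      intro e
      rw [hydef]
      by_cases h : e ∈ G.edgeFinset ∧ ¬ shortPred G d e
      · simp only [if_pos h]
        exact mul_nonneg hc0 (hx01 e h.1).1
      · simp only [if_neg h]; exact le_refl 0
    have hy1 : ∀ e, y e ≤ 1 := by
      intro e
      rw [hydef]
      by_cases h : e ∈ G.edgeFinset ∧ ¬ shortPred G d e
      · simp only [if_pos h]
        calc c * x e ≤ 1 * 1 :=
              mul_le_mul hc1 (hx01 e h.1).2 (hx01 e h.1).1 zero_le_one
          _ = 1 := by norm_num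
      · simp only [if_neg h]; exact zero_le_one
    have hyx : ∀ e ∈ G.edgeFinset, y e ≤ c * x e := by
      intro e he
      rw [hydef]
      by_cases h : e ∈ G.edgeFinset ∧ ¬ shortPred G d e
      · simp only [if_pos h]; exact le_rfl
      · simp only [if_neg h]
        exact mul_nonneg hc0 (hx01 e he).1
    have hyxx : ∀ e ∈ G.edgeFinset, y e ≤ x e := by
      intro e he
      calc y e ≤ c * x e := hyx e he
        _ ≤ 1 * x e := mul_le_mul_of_nonneg_right hc1 (hx01 e he).1
        _ = x e := one_mul _
    have hy01 : ∀ e ∈ G.edgeFinset, 0 ≤ y e ∧ y e ≤ 1 := fun e _ => ⟨hy0 e, hy1 e⟩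
    have hydeg : ∀ i : Fin n, ∑ e ∈ G.edgeFinset.filter (fun e => i ∈ e), y e ≤ (b : ℝ) := by
      intro i
      refine le_trans (Finset.sum_le_sum (fun e he => hyxx e (Finset.filter_subset _ _ he)))
        (hxdeg i)
    -- odd set constraints for y
    have hyodd : ∀ (V : Finset (Fin n)) (A : Finset (Sym2 (Fin n))),
        A ⊆ G.edgeFinset.filter (fun e => ∃ u v', e = s(u, v') ∧ u ∈ V ∧ v' ∉ V) →
        Odd (b * V.card + A.card) →
        ∑ e ∈ G.edgeFinset.filter (fun e => ∀ a ∈ e, a ∈ V), y e + ∑ e ∈ A, y e ≤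
          ((b * V.card + A.card : ℕ) - 1 : ℝ) / 2 := by
      intro V A hA hodd
      set k := b * V.card + A.card with hkdef
      have hAsub : A ⊆ G.edgeFinset := fun e he => (Finset.mem_filter.mp (hA he)).1
      have hAcross : ∀ e ∈ A, ∃ u v', e = s(u, v') ∧ u ∈ V ∧ v' ∉ V :=
        fun e he => (Finset.mem_filter.mp (hA he)).2
      set Inside := G.edgeFinset.filter (fun e => ∀ a ∈ e, a ∈ V) with hInsideDef
      have hdisjIA : Disjoint Inside A := by
        refine Finset.disjoint_left.mpr (fun e heI heA => ?_)
        obtain ⟨u, v', rfl, _, hv'⟩ := hAcross e heA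
        exact hv' ((Finset.mem_filter.mp heI).2 v' (by simp))
      by_cases hdk : d ≤ k
      · -- large odd sets: the vertex constraints suffice
        have hsumV : ∑ v ∈ V, ∑ e ∈ G.edgeFinset.filter (fun e => v ∈ e), x e
            ≤ (b:ℝ) * V.card := by
          calc ∑ v ∈ V, ∑ e ∈ G.edgeFinset.filter (fun e => v ∈ e), x e
              ≤ ∑ _v ∈ V, (b:ℝ) := Finset.sum_le_sum (fun v _ => hxdeg v)
            _ = (b:ℝ) * V.card := by rw [Finset.sum_const, nsmul_eq_mul, mul_comm]
        have hswap : ∑ v ∈ V, ∑ e ∈ G.edgeFinset.filter (fun e => v ∈ e), x e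
            = ∑ e ∈ G.edgeFinset, ((V.filter (fun v => v ∈ e)).card : ℝ) * x e := by
          simp_rw [Finset.sum_filter]
          rw [Finset.sum_comm]
          refine Finset.sum_congr rfl (fun e _ => ?_)
          rw [← Finset.sum_filter, Finset.sum_const, nsmul_eq_mul]
        have hlower : 2 * (∑ e ∈ Inside, x e) + ∑ e ∈ A, x e
            ≤ ∑ e ∈ G.edgeFinset, ((V.filter (fun v => v ∈ e)).card : ℝ) * x e := by
          have hsub2 : Inside ∪ A ⊆ G.edgeFinset :=
            Finset.union_subset (Finset.filter_subset _ _) hAsub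
          have h1 : ∑ e ∈ Inside ∪ A, ((V.filter (fun v => v ∈ e)).card : ℝ) * x e
              ≤ ∑ e ∈ G.edgeFinset, ((V.filter (fun v => v ∈ e)).card : ℝ) * x e := by
            refine Finset.sum_le_sum_of_subset_of_nonneg hsub2 (fun e he _ => ?_)
            exact mul_nonneg (Nat.cast_nonneg _) (hx01 e he).1
          rw [Finset.sum_union hdisjIA] at h1
          have h2 : ∑ e ∈ Inside, ((V.filter (fun v => v ∈ e)).card : ℝ) * x e
              = ∑ e ∈ Inside, 2 * x e := by
            refine Finset.sum_congr rfl (fun e he => ?_)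
            rw [card_filter_mem_of_inside
              (SimpleGraph.not_isDiag_of_mem_edgeFinset (Finset.filter_subset _ _ he))
              ((Finset.mem_filter.mp he).2)]
            norm_num
          have h3 : ∑ e ∈ A, ((V.filter (fun v => v ∈ e)).card : ℝ) * x e
              = ∑ e ∈ A, x e := by
            refine Finset.sum_congr rfl (fun e he => ?_)
            obtain ⟨u, v', rfl, hu, hv'⟩ := hAcross e he
            rw [card_filter_mem_of_crossing hu hv']
            norm_num
          rw [h2, h3, ← Finset.mul_sum] at h1
          exact h1
        have hSAx : ∑ e ∈ A, x e ≤ (A.card : ℝ) := by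
          calc ∑ e ∈ A, x e ≤ ∑ _e ∈ A, (1:ℝ) :=
                Finset.sum_le_sum (fun e he => (hx01 e (hAsub he)).2)
            _ = A.card := by simp
        have hIy : ∑ e ∈ Inside, y e ≤ c * ∑ e ∈ Inside, x e := by
          rw [Finset.mul_sum]
          exact Finset.sum_le_sum (fun e he => hyx e (Finset.filter_subset _ _ he))
        have hAy : ∑ e ∈ A, y e ≤ c * ∑ e ∈ A, x e := by
          rw [Finset.mul_sum]
          exact Finset.sum_le_sum (fun e he => hyx e (hAsub he))
        have hkd : (d:ℝ) ≤ (k:ℝ) := by exact_mod_cast hdk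
        have hhalf : ∑ e ∈ Inside, x e + ∑ e ∈ A, x e ≤ (k:ℝ)/2 := by
          have hkcast : (k:ℝ) = (b:ℝ) * V.card + A.card := by
            rw [hkdef]; push_cast; ring
          rw [← hswap] at hlower
          rw [hkcast]
          linarith
        have hIxnn : 0 ≤ ∑ e ∈ Inside, x e + ∑ e ∈ A, x e := by
          have i1 : 0 ≤ ∑ e ∈ Inside, x e :=
            Finset.sum_nonneg (fun e he => (hx01 e (Finset.filter_subset _ _ he)).1)
          have i2 : 0 ≤ ∑ e ∈ A, x e :=
            Finset.sum_nonneg (fun e he => (hx01 e (hAsub he)).1)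
          linarith
        have hfinal : c * ((k:ℝ)/2) ≤ ((k:ℝ) - 1)/2 := by
          rw [hcdef, div_mul_div_comm, div_le_div_iff₀ (by positivity) two_pos]
          nlinarith
        calc ∑ e ∈ Inside, y e + ∑ e ∈ A, y e
            ≤ c * (∑ e ∈ Inside, x e + ∑ e ∈ A, x e) := by rw [mul_add]; linarith
          _ ≤ c * ((k:ℝ)/2) := mul_le_mul_of_nonneg_left hhalf hc0
          _ ≤ ((k:ℝ) - 1)/2 := hfinal
      · -- small odd sets: use the forest structure
        push_neg at hdk
        have hVd : V.card < d := by
          have h1 : V.card ≤ b * V.card := Nat.le_mul_of_pos_left V.card (by omega)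
          omega
        set S := G.edgeFinset.filter (fun e => (∀ a ∈ e, a ∈ V) ∧ ¬ shortPred G d e)
          with hSdef
        have hSsub : S ⊆ G.edgeFinset := Finset.filter_subset _ _
        have hSInside : S ⊆ Inside := by
          intro e he
          exact Finset.mem_filter.mpr ⟨hSsub he, ((Finset.mem_filter.mp he).2).1⟩
        have hdisjSA : Disjoint S A := Finset.disjoint_of_subset_left hSInside hdisjIA
        have hleaf : ∀ S₀ ⊆ S, S₀.Nonempty →
            ∃ v, (S₀.filter (fun e => v ∈ e)).card = 1 := by
          intro S₀ hS₀ hne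
          by_contra hno
          push_neg at hno
          obtain ⟨u₀, p₀, hcyc, hpe, hpsup⟩ :=
            exists_cycle_of_no_leaf G S₀ (hS₀.trans hSsub) hne hno
          have hsupV : ∀ a ∈ p₀.support, a ∈ V := by
            intro a ha
            obtain ⟨e, heS₀, hae⟩ := hpsup a ha
            exact ((Finset.mem_filter.mp (hS₀ heS₀)).2).1 a hae
          have hlen : p₀.length < d := lt_of_le_of_lt (cycle_length_le hcyc V hsupV) hVd
          have hedne : p₀.edges ≠ [] := by
            intro h
            have h3 := hcyc.three_le_length
            have hle := p₀.length_edges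
            rw [h] at hle
            simp at hle
            omega
          obtain ⟨e₁, he₁⟩ := List.exists_mem_of_ne_nil _ hedne
          have he₁S : e₁ ∈ S := hS₀ (hpe e₁ he₁)
          exact ((Finset.mem_filter.mp he₁S).2).2 ⟨u₀, p₀, hcyc, hlen, he₁⟩
        have hydegV : ∀ v ∈ V, ∑ e ∈ (S ∪ A).filter (fun e => v ∈ e), y e ≤ (b:ℝ) := by
          intro v _
          refine le_trans (Finset.sum_le_sum_of_subset_of_nonneg ?_ (fun e _ _ => hy0 e))
            (hydeg v)
          exact Finset.filter_subset_filter _ (Finset.union_subset hSsub hAsub)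
        have hSdiag : ∀ e ∈ S, ¬ e.IsDiag :=
          fun e he => SimpleGraph.not_isDiag_of_mem_edgeFinset (hSsub he)
        have hSins : ∀ e ∈ S, ∀ a ∈ e, a ∈ V := fun e he => ((Finset.mem_filter.mp he).2).1
        obtain ⟨F, hFsub, hFdeg, hFsum⟩ := forest_matching_bound b hb y hy0 hy1 S.card S V A
          le_rfl hSdiag hSins hAcross hdisjSA hleaf hydegV
        have hcount := matching_card_bound b V S A F hSdiag hSins hAcross hdisjSA hFsub
          hFdeg hodd
        have hIS : ∑ e ∈ Inside, y e = ∑ e ∈ S, y e := by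
          symm
          refine Finset.sum_subset hSInside (fun e heI heS => ?_)
          have hsh : shortPred G d e := by
            by_contra hns
            exact heS (Finset.mem_filter.mpr
              ⟨(Finset.mem_filter.mp heI).1, (Finset.mem_filter.mp heI).2, hns⟩)
          rw [hydef]
          exact if_neg (fun hcon => hcon.2 hsh)
        rw [hIS, ← Finset.sum_union hdisjSA]
        have hcast : (2 * F.card + 1 : ℝ) ≤ (k:ℝ) := by exact_mod_cast hcount
        calc ∑ e ∈ S ∪ A, y e ≤ (F.card : ℝ) := hFsum
          _ ≤ ((k:ℝ) - 1)/2 := by linarith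
    -- y is feasible for LPM; relate the objective values
    have hVymem : (∑ e ∈ G.edgeFinset, w e * y e) ∈ P1 :=
      ⟨y, hy01, hydeg, hyodd, rfl⟩
    have hVyle : (∑ e ∈ G.edgeFinset, w e * y e) ≤ LPM G w b := by
      rw [hLPM]
      exact le_csSup hbdd1 hVymem
    -- split the objective of x
    have hsplit := Finset.sum_filter_add_sum_filter_not G.edgeFinset
      (shortPred G d) (fun e => w e * x e)
    set Sh := G.edgeFinset.filter (shortPred G d) with hShdef
    have hShort : ∑ e ∈ Sh, w e * x e ≤ M * wmax := by
      rcases Sh.eq_empty_or_nonempty with hempty | ⟨e₀, he₀⟩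
      · rw [hempty]
        simp only [Finset.sum_empty]
        have hM0 : (Finset.univ.filter (shortPred G d)).card = 0 := by
          rw [Finset.card_eq_zero, Finset.filter_eq_empty_iff]
          intro e _ hsp
          have hsp2 := hsp
          obtain ⟨u, p, hcyc, _, hep⟩ := hsp2
          have heG : e ∈ G.edgeFinset :=
            SimpleGraph.mem_edgeFinset.mpr (p.edges_subset_edgeSet hep)
          have : e ∈ Sh := Finset.mem_filter.mpr ⟨heG, hsp⟩
          rw [hempty] at this
          simp at this
        rw [hMdef, edgesOnShortCycles_eq, hM0]
        simp
      · have hwmax0 : 0 ≤ wmax := by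
          have := hw e₀ (Finset.filter_subset _ _ he₀)
          linarith [this.1, this.2]
        have h1 : ∑ e ∈ Sh, w e * x e ≤ ∑ _e ∈ Sh, wmax := by
          refine Finset.sum_le_sum (fun e he => ?_)
          have heG := Finset.filter_subset _ _ he
          calc w e * x e ≤ w e * 1 :=
                mul_le_mul_of_nonneg_left (hx01 e heG).2 (hw e heG).1
            _ = w e := mul_one _
            _ ≤ wmax := (hw e heG).2
        have h2 : (Sh.card : ℝ) ≤ M := by
          rw [hMdef, edgesOnShortCycles_eq]
          have : Sh ⊆ Finset.univ.filter (shortPred G d) := by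
            intro e he
            exact Finset.mem_filter.mpr ⟨Finset.mem_univ _, (Finset.mem_filter.mp he).2⟩
          exact_mod_cast Finset.card_le_card this
        calc ∑ e ∈ Sh, w e * x e ≤ ∑ _e ∈ Sh, wmax := h1
          _ = (Sh.card : ℝ) * wmax := by rw [Finset.sum_const, nsmul_eq_mul]
          _ ≤ M * wmax := mul_le_mul_of_nonneg_right h2 hwmax0
    have hVyval : ∑ e ∈ G.edgeFinset, w e * y e
        = c * ∑ e ∈ G.edgeFinset.filter (fun e => ¬ shortPred G d e), w e * x e := by
      rw [← Finset.sum_filter_add_sum_filter_not G.edgeFinset (shortPred G d)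
        (fun e => w e * y e)]
      have hz : ∑ e ∈ G.edgeFinset.filter (shortPred G d), w e * y e = 0 := by
        refine Finset.sum_eq_zero (fun e he => ?_)
        have hsp := (Finset.mem_filter.mp he).2
        simp only [hydef]
        have : (if e ∈ G.edgeFinset ∧ ¬ shortPred G d e then c * x e else 0) = 0 :=
          if_neg (fun hcon => hcon.2 hsp)
        rw [this, mul_zero]
      have hr : ∑ e ∈ G.edgeFinset.filter (fun e => ¬ shortPred G d e), w e * y e
          = c * ∑ e ∈ G.edgeFinset.filter (fun e => ¬ shortPred G d e), w e * x e := by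
        rw [Finset.mul_sum]
        refine Finset.sum_congr rfl (fun e he => ?_)
        rcases Finset.mem_filter.mp he with ⟨heG, hns⟩
        simp only [hydef]
        have : (if e ∈ G.edgeFinset ∧ ¬ shortPred G d e then c * x e else 0) = c * x e :=
          if_pos ⟨heG, hns⟩
        rw [this]
        ring
      rw [hz, hr, zero_add]
    -- combine
    have hcne : c ≠ 0 := by positivity
    have hrest : ∑ e ∈ G.edgeFinset.filter (fun e => ¬ shortPred G d e), w e * x e
        = (1/c) * ∑ e ∈ G.edgeFinset, w e * y e := by
      rw [hVyval]
      field_simp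
    have hinvc : (1:ℝ)/c = (d:ℝ)/((d:ℝ)-1) := by
      rw [hcdef]
      field_simp
    have hmono : (1/c) * (∑ e ∈ G.edgeFinset, w e * y e) ≤ (1/c) * LPM G w b := by
      refine mul_le_mul_of_nonneg_left hVyle ?_
      positivity
    calc ∑ e ∈ G.edgeFinset, w e * x e
        = ∑ e ∈ Sh, w e * x e
          + ∑ e ∈ G.edgeFinset.filter (fun e => ¬ shortPred G d e), w e * x e := by
          rw [hShdef]; exact hsplit.symm
      _ ≤ M * wmax + (1/c) * ∑ e ∈ G.edgeFinset, w e * y e := by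
          rw [← hrest]; linarith
      _ ≤ M * wmax + (1/c) * LPM G w b := by linarith
      _ = M * wmax + ((d:ℝ)/((d:ℝ)-1)) * LPM G w b := by rw [hinvc]
  have hH : LPM0 G w b ≤ M * wmax + ((d:ℝ)/((d:ℝ)-1)) * LPM G w b := by
    rw [hLPM0]
    exact csSup_le ⟨0, h0P0⟩ hcore
  have h1 : LPM0 G w b - M * wmax ≤ ((d:ℝ)/((d:ℝ)-1)) * LPM G w b := by linarith
  calc ((d:ℝ) - 1) / d * (LPM0 G w b - M * wmax)
      ≤ ((d:ℝ) - 1) / d * (((d:ℝ)/((d:ℝ)-1)) * LPM G w b) :=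
        mul_le_mul_of_nonneg_left h1 hc0
    _ = LPM G w b := by field_simp
end
end

section
/- In the random graph G(n, ⌊cn⌋) with i.i.d. bounded edge weights, for every ε > 0, with probability tending to 1 as n → ∞: LPM⁰(n,c) − εn ≤ M_w(n,c,b) ≤ LPM⁰(n,c). In particular M_w(n,c,b) ≤ LPM⁰(n,c) always, and P(M_w(n,c,b) ≥ LPM⁰(n,c) − εn) → 1. -/
open MeasureTheory ProbabilityTheory Filter Finset

noncomputable section
open scoped Classical

/-- The sample space for the weighted sparse random graph on `n` labelled vertices:
an edge set (a finite set of unordered pairs of vertices) together with a weight attached to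
every potential edge. -/
abbrev GraphInst (n : ℕ) : Type := Finset (Sym2 (Fin n)) × (Sym2 (Fin n) → ℝ)

instance (n : ℕ) : MeasurableSpace (Finset (Sym2 (Fin n))) := ⊤

/-- The collection of edge sets of simple graphs on `n` labelled vertices with exactly `m`
edges: `m` unordered pairs of distinct vertices. -/
def validEdgeSets (n m : ℕ) : Set (Finset (Sym2 (Fin n))) :=
  { E | E.card = m ∧ ∀ e ∈ E, ¬ e.IsDiag }

/-- The law of the weighted random graph `G(n, m)`: the edge set is uniform among all simple
graphs on `n` labelled vertices with exactly `m` edges, and the edge weights are i.i.d. with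
law `μW`, independent of the edge set. -/
def graphMeasure (n m : ℕ) (μW : Measure ℝ) : Measure (GraphInst n) :=
  (uniformOn (validEdgeSets n m)).prod (Measure.pi fun _ : Sym2 (Fin n) => μW)

/-- The maximum weight of a `b`-matching of the weighted graph `ω`: a set of edges such that
every vertex is incident to at most `b` of them, of maximal total weight. -/
def bMatchingVal (n b : ℕ) (ω : GraphInst n) : ℝ :=
  sSup { v : ℝ | ∃ M : Finset (Sym2 (Fin n)), M ⊆ ω.1 ∧
    (∀ i : Fin n, (M.filter (fun e => i ∈ e)).card ≤ b) ∧
    v = ∑ e ∈ M, ω.2 e }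

/-- The optimal value `LPM⁰` of the degree-constrained fractional `b`-matching linear program on
the weighted graph `ω`: maximize `Σ_e W_e x_e` subject to `Σ_{e ∋ i} x_e ≤ b` for every vertex
`i` and `0 ≤ x_e ≤ 1` for every edge `e`. -/
def LPM0val (n b : ℕ) (ω : GraphInst n) : ℝ :=
  sSup { v : ℝ | ∃ x : Sym2 (Fin n) → ℝ,
    (∀ e ∈ ω.1, 0 ≤ x e ∧ x e ≤ 1) ∧
    (∀ i : Fin n, ∑ e ∈ ω.1.filter (fun e => i ∈ e), x e ≤ (b : ℝ)) ∧
    v = ∑ e ∈ ω.1, ω.2 e * x e }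

open scoped ENNReal

namespace BM
variable {n : ℕ}

abbrev Edge (n : ℕ) := Sym2 (Fin n)

def vdeg (F : Finset (Edge n)) (i : Fin n) : ℕ := (F.filter (fun e => i ∈ e)).card

def vsum (E : Finset (Edge n)) (x : Edge n → ℝ) (i : Fin n) : ℝ :=
  ∑ e ∈ E.filter (fun e => i ∈ e), x e

def val (E : Finset (Edge n)) (w x : Edge n → ℝ) : ℝ := ∑ e ∈ E, w e * x e

def Feas (b : ℕ) (E : Finset (Edge n)) (x : Edge n → ℝ) : Prop :=
  (∀ e ∈ E, 0 ≤ x e ∧ x e ≤ 1) ∧ ∀ i, vsum E x i ≤ (b : ℝ)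

def fracF (E : Finset (Edge n)) (x : Edge n → ℝ) : Finset (Edge n) :=
  E.filter (fun e => x e ≠ 0 ∧ x e ≠ 1)

def slackF (b : ℕ) (E : Finset (Edge n)) (x : Edge n → ℝ) : Finset (Fin n) :=
  Finset.univ.filter (fun i => vsum E x i < (b : ℝ))

lemma fracF_subset (E : Finset (Edge n)) (x : Edge n → ℝ) : fracF E x ⊆ E :=
  Finset.filter_subset _ _

lemma frac_bounds {b : ℕ} {E : Finset (Edge n)} {x : Edge n → ℝ} (hx : Feas b E x)
    {e : Edge n} (he : e ∈ fracF E x) : 0 < x e ∧ x e < 1 := by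
  rcases Finset.mem_filter.mp he with ⟨heE, h0, h1⟩
  rcases hx.1 e heE with ⟨hl, hr⟩
  exact ⟨lt_of_le_of_ne hl (Ne.symm h0), lt_of_le_of_ne hr h1⟩

lemma vsum_linear (E : Finset (Edge n)) (x d : Edge n → ℝ) (t : ℝ) (i : Fin n) :
    vsum E (fun e => x e + t * d e) i = vsum E x i + t * vsum E d i := by
  simp [vsum, Finset.sum_add_distrib, Finset.mul_sum]

lemma val_linear (E : Finset (Edge n)) (w x d : Edge n → ℝ) (t : ℝ) :
    val E w (fun e => x e + t * d e) = val E w x + t * val E w d := by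
  simp [val, mul_add, Finset.sum_add_distrib, Finset.mul_sum]
  ring_nf
  congr 1
  ext e
  ring

lemma move_aux (b : ℕ) (E : Finset (Edge n)) (w x d : Edge n → ℝ) (hx : Feas b E x)
    (hne : ∃ e, d e ≠ 0)
    (hsupp : ∀ e, d e ≠ 0 → e ∈ fracF E x)
    (hdeg : ∀ i, vsum E d i = 0 ∨ vsum E x i < (b : ℝ))
    (hwd : 0 ≤ val E w d) :
    ∃ y, Feas b E y ∧ val E w x ≤ val E w y ∧ fracF E y ⊆ fracF E x ∧
      slackF b E y ⊆ slackF b E x ∧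
      (fracF E y ⊂ fracF E x ∨ slackF b E y ⊂ slackF b E x) := by
  set TE : Finset ℝ := ((fracF E x).filter (fun e => d e ≠ 0)).image
      (fun e => if 0 < d e then (1 - x e) / d e else x e / (-(d e))) with hTE
  set TV : Finset ℝ := (Finset.univ.filter (fun i => 0 < vsum E d i)).image
      (fun i => ((b : ℝ) - vsum E x i) / vsum E d i) with hTV
  obtain ⟨e₁, he₁⟩ := hne
  have he₁f : e₁ ∈ (fracF E x).filter (fun e => d e ≠ 0) :=
    Finset.mem_filter.mpr ⟨hsupp e₁ he₁, he₁⟩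
  have hTne : (TE ∪ TV).Nonempty :=
    ⟨_, Finset.mem_union_left _ (Finset.mem_image_of_mem _ he₁f)⟩
  set t := (TE ∪ TV).min' hTne with ht
  -- positivity of all candidates
  have hpos : ∀ r ∈ TE ∪ TV, 0 < r := by
    intro r hr
    rcases Finset.mem_union.mp hr with hr | hr
    · rcases Finset.mem_image.mp hr with ⟨e, he, rfl⟩
      rcases Finset.mem_filter.mp he with ⟨hef, hde⟩
      obtain ⟨h0, h1⟩ := frac_bounds hx hef
      by_cases hd : 0 < d e
      · rw [if_pos hd]; exact div_pos (by linarith) hd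
      · rw [if_neg hd]
        have : d e < 0 := lt_of_le_of_ne (not_lt.mp hd) hde
        exact div_pos h0 (by linarith)
    · rcases Finset.mem_image.mp hr with ⟨i, hi, rfl⟩
      have hdi : 0 < vsum E d i := (Finset.mem_filter.mp hi).2
      have hslack : vsum E x i < (b : ℝ) := by
        rcases hdeg i with h | h
        · exact absurd h (ne_of_gt hdi)
        · exact h
      exact div_pos (by linarith) hdi
  have htpos : 0 < t := hpos _ (Finset.min'_mem _ _)
  have htle : ∀ r ∈ TE ∪ TV, t ≤ r := fun r hr => Finset.min'_le _ _ hr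
  set y : Edge n → ℝ := fun e => x e + t * d e with hy
  -- edge bounds
  have hbounds : ∀ e ∈ E, 0 ≤ y e ∧ y e ≤ 1 := by
    intro e heE
    rcases lt_trichotomy (d e) 0 with hd | hd | hd
    · have hef : e ∈ (fracF E x).filter (fun e => d e ≠ 0) :=
        Finset.mem_filter.mpr ⟨hsupp e (ne_of_lt hd), ne_of_lt hd⟩
      have hb : t ≤ x e / (-(d e)) := by
        have := htle _ (Finset.mem_union_left TV
          (Finset.mem_image_of_mem _ hef))
        rwa [if_neg (not_lt.mpr hd.le)] at this
      have h1 : t * (-(d e)) ≤ x e := by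
        rw [← le_div_iff₀ (by linarith : (0:ℝ) < -(d e))] ; exact hb
      constructor
      · simp only [hy]; nlinarith
      · have := (hx.1 e heE).2
        simp only [hy]; nlinarith
    · simp only [hy, hd, mul_zero, add_zero]; exact hx.1 e heE
    · have hef : e ∈ (fracF E x).filter (fun e => d e ≠ 0) :=
        Finset.mem_filter.mpr ⟨hsupp e (ne_of_gt hd), ne_of_gt hd⟩
      have hb : t ≤ (1 - x e) / d e := by
        have := htle _ (Finset.mem_union_left TV
          (Finset.mem_image_of_mem _ hef))
        rwa [if_pos hd] at this
      have h1 : t * d e ≤ 1 - x e := by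
        rw [← le_div_iff₀ hd]; exact hb
      constructor
      · have := (hx.1 e heE).1
        simp only [hy]; nlinarith
      · simp only [hy]; nlinarith
  have hvs : ∀ i, vsum E y i ≤ (b : ℝ) := by
    intro i
    rw [hy, vsum_linear]
    rcases lt_trichotomy (vsum E d i) 0 with hd | hd | hd
    · nlinarith [hx.2 i]
    · rw [hd, mul_zero, add_zero]; exact hx.2 i
    · have hb : t ≤ ((b : ℝ) - vsum E x i) / vsum E d i := by
        refine htle _ (Finset.mem_union_right TE (Finset.mem_image_of_mem _ ?_))
        exact Finset.mem_filter.mpr ⟨Finset.mem_univ i, hd⟩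
      nlinarith [(le_div_iff₀ hd).mp hb]
  have hfsub : fracF E y ⊆ fracF E x := by
    intro e he
    rcases Finset.mem_filter.mp he with ⟨heE, h0, h1⟩
    by_cases hd : d e = 0
    · have hyx : y e = x e := by simp [hy, hd]
      rw [hyx] at h0 h1
      exact Finset.mem_filter.mpr ⟨heE, h0, h1⟩
    · exact hsupp e hd
  have hssub : slackF b E y ⊆ slackF b E x := by
    intro i hi
    have hiy : vsum E y i < (b:ℝ) := (Finset.mem_filter.mp hi).2
    refine Finset.mem_filter.mpr ⟨Finset.mem_univ i, ?_⟩
    rcases hdeg i with h | h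
    · rw [hy, vsum_linear, h, mul_zero, add_zero] at hiy; exact hiy
    · exact h
  refine ⟨y, ⟨hbounds, hvs⟩, ?_, hfsub, hssub, ?_⟩
  · rw [hy, val_linear]; nlinarith
  · -- strictness
    have hmem := Finset.min'_mem (TE ∪ TV) hTne
    rw [← ht] at hmem
    rcases Finset.mem_union.mp hmem with hr | hr
    · left
      rcases Finset.mem_image.mp hr with ⟨e₀, he₀, heq⟩
      rcases Finset.mem_filter.mp he₀ with ⟨he₀f, hde₀⟩
      have hnotin : e₀ ∉ fracF E y := by
        intro hcon
        rcases Finset.mem_filter.mp hcon with ⟨_, h0, h1⟩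
        by_cases hd : 0 < d e₀
        · rw [if_pos hd] at heq
          have htd : t * d e₀ = 1 - x e₀ := by
            rw [← heq]; field_simp
          apply h1
          simp only [hy]; linarith
        · have hdlt : d e₀ < 0 := lt_of_le_of_ne (not_lt.mp hd) hde₀
          rw [if_neg hd] at heq
          have htd : t * d e₀ = - x e₀ := by
            rw [← heq, div_neg, neg_mul, div_mul_cancel₀ _ hde₀]
          apply h0
          simp only [hy]; linarith
      exact Finset.ssubset_iff_of_subset hfsub |>.mpr ⟨e₀, he₀f, hnotin⟩
    · right
      rcases Finset.mem_image.mp hr with ⟨i₀, hi₀, heq⟩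
      have hdi : 0 < vsum E d i₀ := (Finset.mem_filter.mp hi₀).2
      have hslack : vsum E x i₀ < (b : ℝ) := by
        rcases hdeg i₀ with h | h
        · exact absurd h (ne_of_gt hdi)
        · exact h
      have htight : vsum E y i₀ = (b : ℝ) := by
        have htd : t * vsum E d i₀ = (b:ℝ) - vsum E x i₀ := by
          rw [← heq]; field_simp
        rw [hy, vsum_linear]; linarith
      have hnotin : i₀ ∉ slackF b E y := by
        intro hcon
        have := (Finset.mem_filter.mp hcon).2
        rw [htight] at this; exact lt_irrefl _ this
      have hin : i₀ ∈ slackF b E x :=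
        Finset.mem_filter.mpr ⟨Finset.mem_univ _, hslack⟩
      exact Finset.ssubset_iff_of_subset hssub |>.mpr ⟨i₀, hin, hnotin⟩

end BM
namespace BM
variable {n : ℕ}

lemma vsum_neg (E : Finset (Edge n)) (d : Edge n → ℝ) (i : Fin n) :
    vsum E (fun e => -(d e)) i = - vsum E d i := by
  simp [vsum]

lemma val_neg (E : Finset (Edge n)) (w d : Edge n → ℝ) :
    val E w (fun e => -(d e)) = - val E w d := by
  simp [val]

lemma move (b : ℕ) (E : Finset (Edge n)) (w x d : Edge n → ℝ) (hx : Feas b E x)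
    (hne : ∃ e, d e ≠ 0)
    (hsupp : ∀ e, d e ≠ 0 → e ∈ fracF E x)
    (hdeg : ∀ i, vsum E d i = 0 ∨ vsum E x i < (b : ℝ)) :
    ∃ y, Feas b E y ∧ val E w x ≤ val E w y ∧ fracF E y ⊆ fracF E x ∧
      slackF b E y ⊆ slackF b E x ∧
      (fracF E y ⊂ fracF E x ∨ slackF b E y ⊂ slackF b E x) := by
  rcases le_or_gt 0 (val E w d) with hwd | hwd
  · exact move_aux b E w x d hx hne hsupp hdeg hwd
  · refine move_aux b E w x (fun e => -(d e)) hx ?_ ?_ ?_ ?_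
    · obtain ⟨e, he⟩ := hne; exact ⟨e, neg_ne_zero.mpr he⟩
    · intro e he; exact hsupp e (by simpa using he)
    · intro i
      rw [vsum_neg, neg_eq_zero]
      exact hdeg i
    · rw [val_neg]; linarith

def meas (b : ℕ) (E : Finset (Edge n)) (x : Edge n → ℝ) : ℕ :=
  (fracF E x).card * (n + 1) + (slackF b E x).card

def Adm (b : ℕ) (E : Finset (Edge n)) (w : Edge n → ℝ) (v : ℝ) (S : Finset (Edge n))
    (z : Edge n → ℝ) : Prop :=
  Feas b E z ∧ v ≤ val E w z ∧ fracF E z ⊆ S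

lemma slack_card_le (b : ℕ) (E : Finset (Edge n)) (x : Edge n → ℝ) :
    (slackF b E x).card ≤ n := by
  calc (slackF b E x).card ≤ Finset.univ.card := Finset.card_filter_le _ _
    _ = n := by rw [Finset.card_univ, Fintype.card_fin]

lemma meas_lt {b : ℕ} {E : Finset (Edge n)} {x y : Edge n → ℝ}
    (hf : fracF E y ⊆ fracF E x) (hs : slackF b E y ⊆ slackF b E x)
    (h : fracF E y ⊂ fracF E x ∨ slackF b E y ⊂ slackF b E x) :
    meas b E y < meas b E x := by
  have hsy := slack_card_le b E y
  have hfc := Finset.card_le_card hf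
  have hsc := Finset.card_le_card hs
  rcases h with h | h
  · have := Finset.card_lt_card h
    unfold meas
    nlinarith
  · have := Finset.card_lt_card h
    unfold meas
    nlinarith

lemma exists_min (b : ℕ) (E : Finset (Edge n)) (w : Edge n → ℝ) (v : ℝ)
    (S : Finset (Edge n)) (h : ∃ z, Adm b E w v S z) :
    ∃ y, Adm b E w v S y ∧ ∀ z, Adm b E w v S z → meas b E y ≤ meas b E z := by
  have hK : {k | ∃ z, Adm b E w v S z ∧ meas b E z = k}.Nonempty := by
    obtain ⟨z, hz⟩ := h
    exact ⟨meas b E z, z, hz, rfl⟩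
  obtain ⟨z, hz, hzk⟩ := Nat.sInf_mem hK
  refine ⟨z, hz, fun z' hz' => ?_⟩
  rw [hzk]
  exact Nat.sInf_le ⟨z', hz', rfl⟩

lemma no_direction {b : ℕ} {E : Finset (Edge n)} {w : Edge n → ℝ} {v : ℝ}
    {S : Finset (Edge n)} {y : Edge n → ℝ}
    (hy : Adm b E w v S y) (hmin : ∀ z, Adm b E w v S z → meas b E y ≤ meas b E z)
    (d : Edge n → ℝ) (hne : ∃ e, d e ≠ 0)
    (hsupp : ∀ e, d e ≠ 0 → e ∈ fracF E y)
    (hdeg : ∀ i, vsum E d i = 0 ∨ vsum E y i < (b : ℝ)) : False := by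
  obtain ⟨y', hfeas, hval, hf, hs, hlt⟩ := move b E w y d hy.1 hne hsupp hdeg
  have hadm : Adm b E w v S y' := ⟨hfeas, le_trans hy.2.1 hval, hf.trans hy.2.2⟩
  exact absurd (hmin y' hadm) (not_le.mpr (meas_lt hf hs hlt))

lemma card_mem_sym2 {e : Edge n} (he : ¬ e.IsDiag) :
    (Finset.univ.filter (fun i : Fin n => i ∈ e)).card = 2 := by
  induction e using Sym2.ind with
  | _ a b =>
    have hab : a ≠ b := by
      intro h; exact he (by simp [h, Sym2.isDiag_iff_proj_eq])
    have : (Finset.univ.filter (fun i : Fin n => i ∈ s(a, b))) = {a, b} := by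
      ext i; simp [Sym2.mem_iff]
    rw [this, Finset.card_pair hab]

lemma vdeg_sum (F : Finset (Edge n)) (hF : ∀ e ∈ F, ¬ e.IsDiag) :
    ∑ i, vdeg F i = 2 * F.card := by
  unfold vdeg
  calc ∑ i, (F.filter (fun e => i ∈ e)).card
      = ∑ i : Fin n, ∑ e ∈ F, if i ∈ e then 1 else 0 := by
        refine Finset.sum_congr rfl fun i _ => ?_
        rw [Finset.card_filter]
    _ = ∑ e ∈ F, ∑ i : Fin n, if i ∈ e then 1 else 0 := Finset.sum_comm
    _ = ∑ _e ∈ F, 2 := by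
        refine Finset.sum_congr rfl fun e he => ?_
        rw [← Finset.card_filter]
        exact card_mem_sym2 (hF e he)
    _ = 2 * F.card := by rw [Finset.sum_const, smul_eq_mul, mul_comm]

lemma two_le_vdeg_of_tight {b : ℕ} {E : Finset (Edge n)} {y : Edge n → ℝ}
    (hy : Feas b E y) {i : Fin n}
    (ht : vsum E y i = (b : ℝ)) (hdg : vdeg (fracF E y) i ≠ 0) :
    2 ≤ vdeg (fracF E y) i := by
  by_contra hlt
  have h1 : vdeg (fracF E y) i = 1 := by omega
  obtain ⟨e₀, he₀⟩ := Finset.card_eq_one.mp h1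
  have he₀F : e₀ ∈ fracF E y := by
    have : e₀ ∈ (fracF E y).filter (fun e => i ∈ e) := by rw [he₀]; exact Finset.mem_singleton_self e₀
    exact (Finset.mem_filter.mp this).1
  set s := E.filter (fun e => i ∈ e) with hs
  have hsplit : ∑ e ∈ s.filter (fun e => e ∈ fracF E y), y e
      + ∑ e ∈ s.filter (fun e => ¬ (e ∈ fracF E y)), y e = vsum E y i := by
    rw [vsum]; exact Finset.sum_filter_add_sum_filter_not s _ _
  have hsf : s.filter (fun e => e ∈ fracF E y) = (fracF E y).filter (fun e => i ∈ e) := by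
    ext e
    simp only [hs, Finset.mem_filter, fracF]
    tauto
  have h01 : ∀ e ∈ s.filter (fun e => ¬ (e ∈ fracF E y)), y e = 0 ∨ y e = 1 := by
    intro e he
    rcases Finset.mem_filter.mp he with ⟨hes, hnf⟩
    have heE : e ∈ E := (Finset.mem_filter.mp hes).1
    rw [fracF, Finset.mem_filter] at hnf
    push_neg at hnf
    by_cases h0 : y e = 0
    · exact Or.inl h0
    · exact Or.inr (hnf heE h0)
  set K := ((s.filter (fun e => ¬ (e ∈ fracF E y))).filter (fun e => y e = 1)).card with hK
  have hsum2 : ∑ e ∈ s.filter (fun e => ¬ (e ∈ fracF E y)), y e = (K : ℝ) := by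
    rw [hK]
    push_cast
    rw [Finset.card_filter]
    push_cast
    refine Finset.sum_congr rfl fun e he => ?_
    rcases h01 e he with h | h
    · rw [if_neg (by rw [h]; norm_num), h]
    · rw [if_pos h, h]
  have hye : y e₀ = (b : ℝ) - K := by
    have := hsplit
    rw [hsf, he₀, Finset.sum_singleton, hsum2, ht] at this
    linarith
  obtain ⟨hp, hq⟩ := frac_bounds hy he₀F
  rw [hye] at hp hq
  have hKb : (K : ℝ) < (b : ℝ) := by linarith
  have hbK : (b : ℝ) < (K : ℝ) + 1 := by linarith
  have h1' : K < b := by exact_mod_cast hKb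
  have h2' : b < K + 1 := by exact_mod_cast hbK
  omega

end BM
namespace BM
variable {n : ℕ}

lemma min_structure {b : ℕ} {E : Finset (Edge n)} {w : Edge n → ℝ} {v : ℝ}
    {S : Finset (Edge n)} {y : Edge n → ℝ}
    (hE : ∀ e ∈ E, ¬ e.IsDiag)
    (hy : Adm b E w v S y) (hmin : ∀ z, Adm b E w v S z → meas b E y ≤ meas b E z) :
    ∀ i, vdeg (fracF E y) i = 0 ∨ vdeg (fracF E y) i = 2 := by
  classical
  set F := fracF E y with hF
  set tgt := Finset.univ.filter
    (fun i : Fin n => vsum E y i = (b : ℝ) ∧ vdeg F i ≠ 0) with htgt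
  -- No nonzero assignment on fractional edges, degree-neutral at tgt vertices
  have hinj : ∀ g : (↥F) → ℝ,
      (∀ i : ↥tgt, ∑ e ∈ F.attach, (if ((i : Fin n) ∈ (e : Edge n)) then g e else 0) = 0) →
      g = 0 := by
    intro g hg
    by_contra hgne
    obtain ⟨e₀, he₀⟩ : ∃ e : ↥F, g e ≠ 0 := by
      by_contra hcon; push_neg at hcon; exact hgne (funext hcon)
    set d : Edge n → ℝ := fun e => if h : e ∈ F then g ⟨e, h⟩ else 0 with hd
    have hdval : ∀ e : ↥F, d (e : Edge n) = g e := by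
      intro e; rw [hd]; simp only [e.2, dif_pos]
    have hne : ∃ e, d e ≠ 0 := ⟨e₀, by rw [hdval e₀]; exact he₀⟩
    have hsupp : ∀ e, d e ≠ 0 → e ∈ fracF E y := by
      intro e he
      by_contra hcon
      rw [← hF] at hcon
      rw [hd] at he; simp only [hcon, dif_neg, not_false_iff] at he
      exact he rfl
    have hvd : ∀ i : Fin n,
        vsum E d i = ∑ e ∈ F.attach, (if (i ∈ (e : Edge n)) then g e else 0) := by
      intro i
      have step1 : vsum E d i = ∑ e ∈ F.filter (fun e => i ∈ e), d e := by
        rw [vsum]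
        refine (Finset.sum_subset ?_ ?_).symm
        · exact Finset.filter_subset_filter _ (fracF_subset E y)
        · intro e heE henf
          rcases Finset.mem_filter.mp heE with ⟨heE', hie⟩
          have : e ∉ F := fun hcon => henf (Finset.mem_filter.mpr ⟨hcon, hie⟩)
          rw [hd]; simp only [this, dif_neg, not_false_iff]
      rw [step1, Finset.sum_filter,
        ← Finset.sum_attach F (fun e => if i ∈ e then d e else 0)]
      exact Finset.sum_congr rfl fun e _ => by rw [hdval e]
    have hdeg : ∀ i, vsum E d i = 0 ∨ vsum E y i < (b : ℝ) := by
      intro i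
      by_cases hit : i ∈ tgt
      · left; rw [hvd]; exact hg ⟨i, hit⟩
      · rw [htgt, Finset.mem_filter] at hit
        push_neg at hit
        have hit' := hit (Finset.mem_univ i)
        by_cases hvs : vsum E y i = (b : ℝ)
        · left
          have hdz : vdeg F i = 0 := hit' hvs
          rw [hvd]
          refine Finset.sum_eq_zero fun e _ => ?_
          have : (e : Edge n) ∉ F.filter (fun e' => i ∈ e') := by
            rw [vdeg] at hdz
            intro hcon
            have := Finset.card_pos.mpr ⟨_, hcon⟩
            omega
          rw [if_neg (fun hcon => this (Finset.mem_filter.mpr ⟨e.2, hcon⟩))]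
        · right; exact lt_of_le_of_ne (hy.1.2 i) hvs
    exact no_direction hy hmin d hne hsupp hdeg
  -- rank bound
  have hcard : F.card ≤ tgt.card := by
    set M : Matrix (↥tgt) (↥F) ℝ :=
      fun i e => if ((i : Fin n) ∈ (e : Edge n)) then 1 else 0 with hM
    have hmv : ∀ (g : (↥F) → ℝ) (i : ↥tgt),
        M.mulVecLin g i = ∑ e ∈ F.attach, (if ((i : Fin n) ∈ (e : Edge n)) then g e else 0) := by
      intro g i
      show (M.mulVec g) i = _
      rw [Matrix.mulVec, dotProduct]
      refine Finset.sum_congr rfl fun e _ => ?_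
      rw [hM]
      by_cases h : ((i : Fin n) ∈ (e : Edge n))
      · simp [h]
      · simp [h]
    have hΦinj : Function.Injective M.mulVecLin := by
      intro g1 g2 h12
      have hzero : g1 - g2 = 0 := by
        refine hinj (g1 - g2) fun i => ?_
        have : M.mulVecLin (g1 - g2) i = 0 := by
          rw [map_sub, h12]; simp
        rw [hmv] at this
        exact this
      exact sub_eq_zero.mp hzero
    calc F.card = Module.finrank ℝ ((↥F) → ℝ) := by
          rw [Module.finrank_pi, Fintype.card_coe]
      _ ≤ Module.finrank ℝ ((↥tgt) → ℝ) :=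
          LinearMap.finrank_le_finrank_of_injective hΦinj
      _ = tgt.card := by rw [Module.finrank_pi, Fintype.card_coe]
  -- counting
  have hFnd : ∀ e ∈ F, ¬ e.IsDiag := fun e he => hE e (fracF_subset E y he)
  have hsum : ∑ i, vdeg F i = 2 * F.card := vdeg_sum F hFnd
  have htwo : ∀ i ∈ tgt, 2 ≤ vdeg F i := by
    intro i hi
    rcases Finset.mem_filter.mp hi with ⟨_, ht, hdg⟩
    exact two_le_vdeg_of_tight hy.1 ht hdg
  have hge : ∑ i ∈ tgt, vdeg F i ≤ ∑ i, vdeg F i :=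
    Finset.sum_le_sum_of_subset (Finset.subset_univ _)
  have h2t : 2 * tgt.card ≤ ∑ i ∈ tgt, vdeg F i := by
    calc 2 * tgt.card = ∑ _i ∈ tgt, 2 := by rw [Finset.sum_const, smul_eq_mul, mul_comm]
      _ ≤ ∑ i ∈ tgt, vdeg F i := Finset.sum_le_sum htwo
  have heq1 : ∑ i ∈ tgt, vdeg F i = 2 * F.card := by
    refine le_antisymm (hsum ▸ hge) ?_
    calc 2 * F.card ≤ 2 * tgt.card := by omega
      _ ≤ ∑ i ∈ tgt, vdeg F i := h2t
  have houtside : ∀ i, i ∉ tgt → vdeg F i = 0 := by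
    intro i hi
    by_contra h0
    have hsub : insert i tgt ⊆ Finset.univ := Finset.subset_univ _
    have hle : ∑ j ∈ insert i tgt, vdeg F j ≤ ∑ j, vdeg F j :=
      Finset.sum_le_sum_of_subset hsub
    rw [Finset.sum_insert hi, heq1, hsum] at hle
    omega
  have hexact : ∀ i ∈ tgt, vdeg F i = 2 := by
    intro i hi
    by_contra h2
    have h3 : 2 < vdeg F i := by have := htwo i hi; omega
    have hlt : ∑ _j ∈ tgt, 2 < ∑ j ∈ tgt, vdeg F j :=
      Finset.sum_lt_sum htwo ⟨i, hi, h3⟩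
    rw [Finset.sum_const, smul_eq_mul, heq1] at hlt
    omega
  intro i
  by_cases h : i ∈ tgt
  · right; exact hexact i h
  · left; exact houtside i h

end BM
namespace BM
variable {n : ℕ}

def Circ (F : Finset (Edge n)) : Prop := ∀ i, vdeg F i = 0 ∨ vdeg F i = 2

def estep (F : Finset (Edge n)) (a e : Edge n) : Prop :=
  a ∈ F ∧ e ∈ F ∧ ∃ v : Fin n, v ∈ a ∧ v ∈ e

def ereach (F : Finset (Edge n)) (a e : Edge n) : Prop :=
  Relation.ReflTransGen (estep F) a e

def comp (F : Finset (Edge n)) (a : Edge n) : Finset (Edge n) :=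
  F.filter (fun e => ereach F a e)

lemma comp_subset (F : Finset (Edge n)) (a : Edge n) : comp F a ⊆ F :=
  Finset.filter_subset _ _

lemma mem_comp_self {F : Finset (Edge n)} {a : Edge n} (ha : a ∈ F) : a ∈ comp F a :=
  Finset.mem_filter.mpr ⟨ha, Relation.ReflTransGen.refl⟩

lemma estep_symm (F : Finset (Edge n)) : Symmetric (estep F) := by
  rintro a e ⟨h1, h2, v, hv1, hv2⟩
  exact ⟨h2, h1, v, hv2, hv1⟩

lemma ereach_symm {F : Finset (Edge n)} {a e : Edge n} (h : ereach F a e) : ereach F e a :=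
  by haveI : Std.Symm (estep F) := ⟨fun _ _ h' => estep_symm F h'⟩; exact Std.Symm.symm (r := Relation.ReflTransGen (estep F)) _ _ h

lemma comp_eq_or_disjoint {F : Finset (Edge n)} (a a' : Edge n) :
    comp F a = comp F a' ∨ Disjoint (comp F a) (comp F a') := by
  by_cases h : ereach F a a'
  · left
    ext e
    simp only [comp, Finset.mem_filter, and_congr_right_iff]
    intro _
    exact ⟨fun he => (ereach_symm h).trans he, fun he => h.trans he⟩
  · right
    rw [Finset.disjoint_left]
    intro x hx hx'
    exact h ((Finset.mem_filter.mp hx).2.trans (ereach_symm (Finset.mem_filter.mp hx').2))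

lemma comp_closed {F : Finset (Edge n)} {a : Edge n} {v : Fin n} {x e : Edge n}
    (hx : x ∈ comp F a) (he : e ∈ F) (hv1 : v ∈ x) (hv2 : v ∈ e) : e ∈ comp F a := by
  rcases Finset.mem_filter.mp hx with ⟨hxF, hr⟩
  exact Finset.mem_filter.mpr ⟨he, hr.tail ⟨hxF, he, v, hv1, hv2⟩⟩

lemma vdeg_ne_zero {F : Finset (Edge n)} {e : Edge n} {i : Fin n}
    (he : e ∈ F) (hi : i ∈ e) : vdeg F i ≠ 0 := by
  have : e ∈ F.filter (fun e' => i ∈ e') := Finset.mem_filter.mpr ⟨he, hi⟩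
  have := Finset.card_pos.mpr ⟨e, this⟩
  unfold vdeg
  omega

lemma comp_circ {F : Finset (Edge n)} (hC : Circ F) (a : Edge n) : Circ (comp F a) := by
  intro i
  by_cases h : vdeg (comp F a) i = 0
  · exact Or.inl h
  · right
    have hfe : (comp F a).filter (fun e => i ∈ e) = F.filter (fun e => i ∈ e) := by
      refine Finset.Subset.antisymm (Finset.filter_subset_filter _ (comp_subset F a)) ?_
      obtain ⟨x, hx⟩ : ((comp F a).filter (fun e => i ∈ e)).Nonempty := by
        rw [Finset.nonempty_iff_ne_empty]
        intro hcon
        apply h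
        unfold vdeg
        rw [hcon, Finset.card_empty]
      rcases Finset.mem_filter.mp hx with ⟨hxc, hxi⟩
      intro e heF
      rcases Finset.mem_filter.mp heF with ⟨heF', hei⟩
      exact Finset.mem_filter.mpr ⟨comp_closed hxc heF' hxi hei, hei⟩
    have h2 : vdeg (comp F a) i = vdeg F i := by unfold vdeg; rw [hfe]
    rcases hC i with h0 | h0
    · rw [h2] at h; exact absurd h0 h
    · rw [h2, h0]

lemma closed_subset {F F' : Finset (Edge n)} (hC : Circ F) (hC' : Circ F')
    (hsub : F' ⊆ F) {a : Edge n} (ha : a ∈ F') : comp F a ⊆ F' := by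
  intro e he
  have hr : ereach F a e := (Finset.mem_filter.mp he).2
  clear he
  induction hr with
  | refl => exact ha
  | tail _ step ih =>
    rcases step with ⟨hbF, hcF, v, hvb, hvc⟩
    rename_i bmid cend _
    have hdF' : vdeg F' v = 2 := by
      rcases hC' v with h0 | h0
      · exact absurd h0 (vdeg_ne_zero ih hvb)
      · exact h0
    have hdF : vdeg F v = 2 := by
      rcases hC v with h0 | h0
      · exact absurd h0 (vdeg_ne_zero (hsub ih) hvb)
      · exact h0
    have hfeq : F'.filter (fun e' => v ∈ e') = F.filter (fun e' => v ∈ e') := by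
      refine Finset.eq_of_subset_of_card_le (Finset.filter_subset_filter _ hsub) ?_
      unfold vdeg at hdF' hdF
      omega
    have : cend ∈ F.filter (fun e' => v ∈ e') := Finset.mem_filter.mpr ⟨hcF, hvc⟩
    rw [← hfeq] at this
    exact (Finset.mem_filter.mp this).1

def comps (F : Finset (Edge n)) : Finset (Finset (Edge n)) := F.image (fun a => comp F a)

lemma comps_nonempty {F K : Finset (Edge n)} (hK : K ∈ comps F) : K.Nonempty := by
  rcases Finset.mem_image.mp hK with ⟨a, ha, rfl⟩
  exact ⟨a, mem_comp_self ha⟩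

lemma comps_subset {F K : Finset (Edge n)} (hK : K ∈ comps F) : K ⊆ F := by
  rcases Finset.mem_image.mp hK with ⟨a, _, rfl⟩
  exact comp_subset F a

lemma comps_circ {F K : Finset (Edge n)} (hC : Circ F) (hK : K ∈ comps F) : Circ K := by
  rcases Finset.mem_image.mp hK with ⟨a, _, rfl⟩
  exact comp_circ hC a

lemma comps_cover (F : Finset (Edge n)) : F = (comps F).biUnion id := by
  apply Finset.Subset.antisymm
  · intro e he
    exact Finset.mem_biUnion.mpr ⟨comp F e, Finset.mem_image_of_mem _ he, mem_comp_self he⟩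
  · intro e he
    rcases Finset.mem_biUnion.mp he with ⟨K, hK, heK⟩
    exact comps_subset hK heK

lemma sum_comps_card (F : Finset (Edge n)) : ∑ K ∈ comps F, K.card = F.card := by
  rw [comps_cover F, Finset.card_biUnion]
  · simp only [id]
    refine Finset.sum_congr ?_ fun _ _ => rfl
    rw [← comps_cover F]
  · intro K1 h1 K2 h2 hne
    rcases Finset.mem_image.mp h1 with ⟨a1, _, rfl⟩
    rcases Finset.mem_image.mp h2 with ⟨a2, _, rfl⟩
    rcases comp_eq_or_disjoint (F := F) a1 a2 with h | h
    · exact absurd h hne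
    · exact h

def delset (F : Finset (Edge n)) : Finset (Edge n) :=
  (comps F).biUnion (fun K => if h : K.Nonempty then {h.choose} else ∅)

lemma delset_subset (F : Finset (Edge n)) : delset F ⊆ F := by
  intro g hg
  rcases Finset.mem_biUnion.mp hg with ⟨K, hK, hgk⟩
  by_cases h : K.Nonempty
  · rw [dif_pos h, Finset.mem_singleton] at hgk
    rw [hgk]
    exact comps_subset hK h.choose_spec
  · rw [dif_neg h] at hgk
    exact absurd hgk (Finset.notMem_empty g)

lemma delset_card (F : Finset (Edge n)) : (delset F).card ≤ (comps F).card := by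
  refine le_trans Finset.card_biUnion_le ?_
  calc ∑ K ∈ comps F, (if h : K.Nonempty then ({h.choose} : Finset (Edge n)) else ∅).card
      ≤ ∑ _K ∈ comps F, 1 := by
        refine Finset.sum_le_sum fun K _ => ?_
        by_cases h : K.Nonempty
        · rw [dif_pos h, Finset.card_singleton]
        · rw [dif_neg h, Finset.card_empty]; omega
    _ = (comps F).card := by rw [Finset.sum_const, smul_eq_mul, mul_one]

lemma delset_hits {F K : Finset (Edge n)} (hK : K ∈ comps F) :
    ∃ g ∈ delset F, g ∈ K := by
  have h : K.Nonempty := comps_nonempty hK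
  refine ⟨h.choose, ?_, h.choose_spec⟩
  refine Finset.mem_biUnion.mpr ⟨K, hK, ?_⟩
  rw [dif_pos h]
  exact Finset.mem_singleton_self _

lemma circ_sub_empty {F F' : Finset (Edge n)} (hC : Circ F) (hC' : Circ F')
    (hsub : F' ⊆ F \ delset F) : F' = ∅ := by
  by_contra hne
  obtain ⟨a, ha⟩ := Finset.nonempty_iff_ne_empty.mpr hne
  have hsub' : F' ⊆ F := hsub.trans (Finset.sdiff_subset)
  have hcs : comp F a ⊆ F' := closed_subset hC hC' hsub' ha
  have hKm : comp F a ∈ comps F := Finset.mem_image_of_mem _ (hsub' ha)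
  obtain ⟨g, hgD, hgK⟩ := delset_hits hKm
  have : g ∈ F \ delset F := hsub (hcs hgK)
  exact (Finset.mem_sdiff.mp this).2 hgD

def XL (L : ℕ) (E : Finset (Edge n)) : ℕ :=
  ((E.powerset).filter (fun C => Circ C ∧ C.card < L)).card

lemma comps_card_le {F E : Finset (Edge n)} (L : ℕ) (hL : 1 ≤ L)
    (hFE : F ⊆ E) (hC : Circ F) :
    ((comps F).card : ℝ) ≤ (XL L E : ℝ) + (E.card : ℝ) / L := by
  have hsplit : ((comps F).filter (fun K => K.card < L)).card
      + ((comps F).filter (fun K => ¬ K.card < L)).card = (comps F).card :=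
    Finset.card_filter_add_card_filter_not _
  have hsmall : ((comps F).filter (fun K => K.card < L)).card ≤ XL L E := by
    refine Finset.card_le_card ?_
    intro K hK
    rcases Finset.mem_filter.mp hK with ⟨hKc, hKlt⟩
    refine Finset.mem_filter.mpr ⟨Finset.mem_powerset.mpr ((comps_subset hKc).trans hFE), comps_circ hC hKc, hKlt⟩
  have hlarge : ((comps F).filter (fun K => ¬ K.card < L)).card * L ≤ E.card := by
    calc ((comps F).filter (fun K => ¬ K.card < L)).card * L
        = ∑ _K ∈ (comps F).filter (fun K => ¬ K.card < L), L := by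
          rw [Finset.sum_const, smul_eq_mul]
      _ ≤ ∑ K ∈ (comps F).filter (fun K => ¬ K.card < L), K.card :=
          Finset.sum_le_sum fun K hK => le_of_not_gt (Finset.mem_filter.mp hK).2
      _ ≤ ∑ K ∈ comps F, K.card :=
          Finset.sum_le_sum_of_subset (Finset.filter_subset _ _)
      _ = F.card := sum_comps_card F
      _ ≤ E.card := Finset.card_le_card hFE
  have hLpos : (0 : ℝ) < L := by exact_mod_cast hL
  have hlarge' : (((comps F).filter (fun K => ¬ K.card < L)).card : ℝ) ≤ (E.card : ℝ) / L := by
    rw [le_div_iff₀ hLpos]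
    exact_mod_cast hlarge
  have hsmall' : (((comps F).filter (fun K => K.card < L)).card : ℝ) ≤ (XL L E : ℝ) := by
    exact_mod_cast hsmall
  have : ((comps F).card : ℝ) = (((comps F).filter (fun K => K.card < L)).card : ℝ)
      + (((comps F).filter (fun K => ¬ K.card < L)).card : ℝ) := by
    exact_mod_cast hsplit.symm
  rw [this]
  linarith

end BM
namespace BM
variable {n : ℕ}

lemma sum_zero_one (s : Finset (Edge n)) (z : Edge n → ℝ)
    (h : ∀ e ∈ s, z e = 0 ∨ z e = 1) :
    ∑ e ∈ s, z e = ((s.filter (fun e => z e = 1)).card : ℝ) := by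
  rw [Finset.card_filter]
  push_cast
  refine Finset.sum_congr rfl fun e he => ?_
  rcases h e he with h0 | h0
  · rw [if_neg (by rw [h0]; norm_num), h0]
  · rw [if_pos h0, h0]

theorem det (b L : ℕ) (hL : 1 ≤ L) (E : Finset (Edge n)) (hE : ∀ e ∈ E, ¬ e.IsDiag)
    (w : Edge n → ℝ) (B : ℝ) (hB : 0 ≤ B) (hw : ∀ e ∈ E, w e ≤ B)
    (x : Edge n → ℝ) (hx : Feas b E x) :
    ∃ M : Finset (Edge n), M ⊆ E ∧ (∀ i : Fin n, vdeg M i ≤ b) ∧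
      val E w x - B * ((XL L E : ℝ) + (E.card : ℝ) / L) ≤ ∑ e ∈ M, w e := by
  classical
  obtain ⟨y1, hy1, hmin1⟩ := exists_min b E w (val E w x) E
    ⟨x, hx, le_refl _, fracF_subset E x⟩
  have hcirc1 : Circ (fracF E y1) := min_structure hE hy1 hmin1
  set F := fracF E y1 with hFdef
  set D := delset F with hD
  set y2 : Edge n → ℝ := fun e => if e ∈ D then 0 else y1 e with hy2
  have hDF : D ⊆ F := delset_subset F
  have hFE : F ⊆ E := fracF_subset E y1
  have hDE : D ⊆ E := hDF.trans hFE
  have hfeas2 : Feas b E y2 := by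
    constructor
    · intro e he
      by_cases hd : e ∈ D
      · simp only [hy2, if_pos hd]; norm_num
      · simp only [hy2, if_neg hd]; exact hy1.1.1 e he
    · intro i
      refine le_trans ?_ (hy1.1.2 i)
      rw [vsum, vsum]
      refine Finset.sum_le_sum fun e he => ?_
      by_cases hd : e ∈ D
      · simp only [hy2, if_pos hd]
        exact (hy1.1.1 e (Finset.mem_filter.mp he).1).1
      · simp only [hy2, if_neg hd]; exact le_refl _
  have hval2 : val E w y1 - B * D.card ≤ val E w y2 := by
    have hdiff : val E w y1 - val E w y2 = ∑ e ∈ D, w e * y1 e := by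
      rw [val, val, ← Finset.sum_sub_distrib]
      have : ∀ e ∈ E, w e * y1 e - w e * y2 e = if e ∈ D then w e * y1 e else 0 := by
        intro e _
        by_cases hd : e ∈ D
        · simp only [hy2, if_pos hd]; ring
        · simp only [hy2, if_neg hd]; ring
      rw [Finset.sum_congr rfl this, ← Finset.sum_filter,
        Finset.filter_mem_eq_inter, Finset.inter_comm,
        Finset.inter_eq_left.mpr hDE]
    have hbound : ∑ e ∈ D, w e * y1 e ≤ B * D.card := by
      calc ∑ e ∈ D, w e * y1 e ≤ ∑ _e ∈ D, B := by
            refine Finset.sum_le_sum fun e he => ?_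
            obtain ⟨h0, h1⟩ := hy1.1.1 e (hDE he)
            have := hw e (hDE he)
            nlinarith
        _ = B * D.card := by rw [Finset.sum_const, nsmul_eq_mul, mul_comm]
    linarith
  have hfrac2 : fracF E y2 ⊆ F \ D := by
    intro e he
    rcases Finset.mem_filter.mp he with ⟨heE, h0, h1⟩
    by_cases hd : e ∈ D
    · exfalso; apply h0; simp only [hy2, if_pos hd]
    · refine Finset.mem_sdiff.mpr ⟨?_, hd⟩
      simp only [hy2, if_neg hd] at h0 h1
      exact Finset.mem_filter.mpr ⟨heE, h0, h1⟩
  obtain ⟨z, hz, hmin2⟩ := exists_min b E w (val E w y2) (F \ D)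
    ⟨y2, hfeas2, le_refl _, hfrac2⟩
  have hcirc2 : Circ (fracF E z) := min_structure hE hz hmin2
  have hempty : fracF E z = ∅ := circ_sub_empty hcirc1 hcirc2 hz.2.2
  have hint : ∀ e ∈ E, z e = 0 ∨ z e = 1 := by
    intro e he
    by_contra hcon
    push_neg at hcon
    have : e ∈ fracF E z := Finset.mem_filter.mpr ⟨he, hcon.1, hcon.2⟩
    rw [hempty] at this
    exact Finset.notMem_empty e this
  set M := E.filter (fun e => z e = 1) with hM
  have hMsub : M ⊆ E := Finset.filter_subset _ _
  refine ⟨M, hMsub, ?_, ?_⟩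
  · intro i
    have hvs := hz.1.2 i
    have heq : vsum E z i = (vdeg M i : ℝ) := by
      rw [vsum, sum_zero_one _ z (fun e he => hint e (Finset.mem_filter.mp he).1)]
      congr 1
      rw [vdeg, hM, Finset.filter_filter, Finset.filter_filter]
      congr 1
      ext e
      simp only [Finset.mem_filter]
      tauto
    rw [heq] at hvs
    exact_mod_cast hvs
  · have hvalz : val E w z = ∑ e ∈ M, w e := by
      rw [val, hM]
      rw [← Finset.sum_filter_add_sum_filter_not E (fun e => z e = 1)]
      have h2 : ∑ e ∈ E.filter (fun e => ¬ z e = 1), w e * z e = 0 := by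
        refine Finset.sum_eq_zero fun e he => ?_
        rcases Finset.mem_filter.mp he with ⟨heE, hne1⟩
        rcases hint e heE with h0 | h0
        · rw [h0, mul_zero]
        · exact absurd h0 hne1
      have h1 : ∑ e ∈ E.filter (fun e => z e = 1), w e * z e
          = ∑ e ∈ E.filter (fun e => z e = 1), w e := by
        refine Finset.sum_congr rfl fun e he => ?_
        rw [(Finset.mem_filter.mp he).2, mul_one]
      rw [h1, h2, add_zero]
    have hDcard : ((D.card : ℝ)) ≤ (XL L E : ℝ) + (E.card : ℝ) / L := by
      refine le_trans ?_ (comps_card_le L hL hFE hcirc1)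
      exact_mod_cast delset_card F
    have c1 : val E w x ≤ val E w y1 := hy1.2.1
    have c2 : val E w y2 ≤ val E w z := hz.2.1
    have c3 : B * (D.card : ℝ) ≤ B * ((XL L E : ℝ) + (E.card : ℝ) / L) :=
      mul_le_mul_of_nonneg_left hDcard hB
    rw [← hvalz]
    linarith

end BM
namespace BM
variable {n : ℕ}

def pairsF (n : ℕ) : Finset (Edge n) := Finset.univ.filter (fun e => ¬ e.IsDiag)

def validF (n m : ℕ) : Finset (Finset (Edge n)) := (pairsF n).powersetCard m

def circSmall (n L : ℕ) : Finset (Finset (Edge n)) :=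
  ((pairsF n).powerset).filter (fun C => Circ C ∧ C.card < L)

lemma markov (L T m : ℕ) :
    ((validF n m).filter (fun E => T < XL L E)).card * (T + 1) ≤ ∑ E ∈ validF n m, XL L E := by
  calc ((validF n m).filter (fun E => T < XL L E)).card * (T + 1)
      = ∑ _E ∈ (validF n m).filter (fun E => T < XL L E), (T + 1) := by
        rw [Finset.sum_const, smul_eq_mul]
    _ ≤ ∑ E ∈ (validF n m).filter (fun E => T < XL L E), XL L E :=
        Finset.sum_le_sum fun E hE => (Finset.mem_filter.mp hE).2
    _ ≤ ∑ E ∈ validF n m, XL L E :=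
        Finset.sum_le_sum_of_subset (Finset.filter_subset _ _)

lemma double_count (L m : ℕ) :
    ∑ E ∈ validF n m, XL L E
      = ∑ C ∈ circSmall n L, ((validF n m).filter (fun E => C ⊆ E)).card := by
  have h1 : ∀ E ∈ validF n m, XL L E = ∑ C ∈ circSmall n L, if C ⊆ E then 1 else 0 := by
    intro E hEv
    have hEp : E ⊆ pairsF n := (Finset.mem_powersetCard.mp hEv).1
    have hset : (E.powerset).filter (fun C => Circ C ∧ C.card < L)
        = (circSmall n L).filter (fun C => C ⊆ E) := by
      ext C
      simp only [circSmall, Finset.mem_filter, Finset.mem_powerset]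
      constructor
      · rintro ⟨hCE, hP⟩; exact ⟨⟨hCE.trans hEp, hP⟩, hCE⟩
      · rintro ⟨⟨_, hP⟩, hCE⟩; exact ⟨hCE, hP⟩
    rw [XL, hset, Finset.card_filter]
  rw [Finset.sum_congr rfl h1, Finset.sum_comm]
  exact Finset.sum_congr rfl fun C _ => (Finset.card_filter _ _).symm

lemma count_superset (m : ℕ) (C : Finset (Edge n)) (hCp : C ⊆ pairsF n) :
    ((validF n m).filter (fun E => C ⊆ E)).card
      ≤ ((pairsF n).card - C.card).choose (m - C.card) := by
  classical
  have h1 : ((validF n m).filter (fun E => C ⊆ E)).card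
      ≤ ((pairsF n \ C).powersetCard (m - C.card)).card := by
    refine Finset.card_le_card_of_injOn (fun E => E \ C) ?_ ?_
    · intro E hE
      rcases Finset.mem_filter.mp hE with ⟨hEv, hCE⟩
      rcases Finset.mem_powersetCard.mp hEv with ⟨hEp, hEc⟩
      refine Finset.mem_powersetCard.mpr ⟨?_, ?_⟩
      · exact Finset.sdiff_subset_sdiff hEp (le_refl _)
      · rw [Finset.card_sdiff_of_subset hCE, hEc]
    · intro E1 h1' E2 h2' heq
      have hC1 : C ⊆ E1 := (Finset.mem_filter.mp h1').2
      have hC2 : C ⊆ E2 := (Finset.mem_filter.mp h2').2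
      have := congrArg (fun s => s ∪ C) heq
      simpa [Finset.sdiff_union_of_subset hC1, Finset.sdiff_union_of_subset hC2] using this
  rw [Finset.card_powersetCard, Finset.card_sdiff_of_subset hCp] at h1
  exact h1

lemma touched_card {C : Finset (Edge n)} (hnd : ∀ e ∈ C, ¬ e.IsDiag) (hC : Circ C) :
    (Finset.univ.filter (fun i => vdeg C i ≠ 0)).card = C.card := by
  have hsum := vdeg_sum C hnd
  have h1 : ∑ i ∈ Finset.univ.filter (fun i => vdeg C i ≠ 0), vdeg C i = 2 * C.card := by
    rw [← hsum]
    exact Finset.sum_filter_ne_zero _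
  have h2 : ∑ i ∈ Finset.univ.filter (fun i => vdeg C i ≠ 0), vdeg C i
      = 2 * (Finset.univ.filter (fun i => vdeg C i ≠ 0)).card := by
    calc ∑ i ∈ Finset.univ.filter (fun i => vdeg C i ≠ 0), vdeg C i
        = ∑ _i ∈ Finset.univ.filter (fun i => vdeg C i ≠ 0), 2 := by
          refine Finset.sum_congr rfl fun i hi => ?_
          have := (Finset.mem_filter.mp hi).2
          rcases hC i with h | h
          · exact absurd h this
          · exact h
      _ = 2 * (Finset.univ.filter (fun i => vdeg C i ≠ 0)).card := by
          rw [Finset.sum_const, smul_eq_mul, mul_comm]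
  omega

lemma circ_count (L k : ℕ) :
    ((circSmall n L).filter (fun C => C.card = k)).card ≤ n ^ k * ((k * k).choose k) := by
  classical
  set target := (Finset.univ.powersetCard k).biUnion
    (fun V : Finset (Fin n) =>
      ((pairsF n).filter (fun e => ∀ i ∈ e, i ∈ V)).powersetCard k) with htarget
  have hsub : (circSmall n L).filter (fun C => C.card = k) ⊆ target := by
    intro C hC
    rcases Finset.mem_filter.mp hC with ⟨hCs, hCk⟩
    rcases Finset.mem_filter.mp hCs with ⟨hCp', hCirc, _⟩
    have hCp : C ⊆ pairsF n := Finset.mem_powerset.mp hCp'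
    have hnd : ∀ e ∈ C, ¬ e.IsDiag := fun e he => (Finset.mem_filter.mp (hCp he)).2
    set V := Finset.univ.filter (fun i => vdeg C i ≠ 0) with hV
    have hVcard : V.card = k := by rw [hV, touched_card hnd hCirc, hCk]
    refine Finset.mem_biUnion.mpr ⟨V, Finset.mem_powersetCard.mpr ⟨Finset.subset_univ _, hVcard⟩, ?_⟩
    refine Finset.mem_powersetCard.mpr ⟨?_, hCk⟩
    intro e heC
    refine Finset.mem_filter.mpr ⟨hCp heC, ?_⟩
    intro i hi
    exact Finset.mem_filter.mpr ⟨Finset.mem_univ i, vdeg_ne_zero heC hi⟩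
  refine le_trans (Finset.card_le_card hsub) (le_trans Finset.card_biUnion_le ?_)
  have hstep : ∀ V ∈ Finset.univ.powersetCard k,
      (((pairsF n).filter (fun e => ∀ i ∈ e, i ∈ V)).powersetCard k).card
        ≤ ((k * k).choose k) := by
    intro V hV
    have hVk : V.card = k := (Finset.mem_powersetCard.mp hV).2
    rw [Finset.card_powersetCard]
    refine Nat.choose_le_choose k ?_
    have hinj : ((pairsF n).filter (fun e => ∀ i ∈ e, i ∈ V)).card ≤ (V ×ˢ V).card := by
      refine Finset.card_le_card_of_injOn (fun e => e.out) ?_ ?_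
      · intro e he
        rcases Finset.mem_filter.mp he with ⟨_, hiV⟩
        exact Finset.mem_product.mpr ⟨hiV _ (Sym2.out_fst_mem e), hiV _ (Sym2.out_snd_mem e)⟩
      · intro e1 _ e2 _ heq
        have h2 := congrArg (Quot.mk (Sym2.Rel (Fin n))) heq
        rwa [Quot.out_eq, Quot.out_eq] at h2
    rw [Finset.card_product, hVk] at hinj
    exact hinj
  calc ∑ V ∈ Finset.univ.powersetCard k,
        (((pairsF n).filter (fun e => ∀ i ∈ e, i ∈ V)).powersetCard k).card
      ≤ ∑ _V ∈ Finset.univ.powersetCard k, ((k * k).choose k) :=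
        Finset.sum_le_sum hstep
    _ = (Finset.univ.powersetCard k).card * ((k * k).choose k) := by
        rw [Finset.sum_const, smul_eq_mul]
    _ ≤ n ^ k * ((k * k).choose k) := by
        refine Nat.mul_le_mul_right _ ?_
        rw [Finset.card_powersetCard, Finset.card_univ, Fintype.card_fin]
        exact Nat.choose_le_pow _ _

lemma choose_ratio (N m k : ℕ) (hk : k ≤ m) (hm : m ≤ N) :
    (N - k).choose (m - k) * (N - k) ^ k ≤ N.choose m * m ^ k := by
  induction k with
  | zero => simp
  | succ k ih =>
    have hk' : k ≤ m := Nat.le_of_succ_le hk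
    have hB1 : 1 ≤ m - k := by omega
    have hA1 : 1 ≤ N - k := by omega
    have key : (N - k) * (N - k - 1).choose (m - k - 1) = (N - k).choose (m - k) * (m - k) := by
      have h := Nat.add_one_mul_choose_eq (N - k - 1) (m - k - 1)
      have hA : (N - k - 1) + 1 = N - k := by omega
      have hB : (m - k - 1) + 1 = m - k := by omega
      rw [hA, hB] at h
      exact h
    have e1 : N - (k + 1) = N - k - 1 := by omega
    have e2 : m - (k + 1) = m - k - 1 := by omega
    rw [e1, e2]
    calc (N - k - 1).choose (m - k - 1) * (N - k - 1) ^ (k + 1)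
        ≤ (N - k - 1).choose (m - k - 1) * ((N - k) * (N - k - 1) ^ k) := by
          refine Nat.mul_le_mul_left _ ?_
          rw [pow_succ]
          calc (N - k - 1) ^ k * (N - k - 1) ≤ (N - k - 1) ^ k * (N - k) :=
              Nat.mul_le_mul_left _ (by omega)
            _ = (N - k) * (N - k - 1) ^ k := Nat.mul_comm _ _
      _ = ((N - k) * (N - k - 1).choose (m - k - 1)) * (N - k - 1) ^ k := by ring
      _ = ((N - k).choose (m - k) * (m - k)) * (N - k - 1) ^ k := by rw [key]
      _ ≤ ((N - k).choose (m - k) * (m - k)) * (N - k) ^ k :=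
          Nat.mul_le_mul_left _ (Nat.pow_le_pow_left (by omega) k)
      _ = (m - k) * ((N - k).choose (m - k) * (N - k) ^ k) := by ring
      _ ≤ (m - k) * (N.choose m * m ^ k) := Nat.mul_le_mul_left _ (ih hk')
      _ ≤ m * (N.choose m * m ^ k) := Nat.mul_le_mul_right _ (by omega)
      _ = N.choose m * m ^ (k + 1) := by ring

lemma pairs_card (n : ℕ) : (pairsF n).card = n.choose 2 := by
  classical
  rw [pairsF, ← Fintype.card_subtype]
  rw [Sym2.card_subtype_not_diag, Fintype.card_fin]

end BM
namespace BM
variable {n : ℕ}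

lemma bad_ratio (n m L T : ℕ) (c8 : ℝ) (hc8 : 0 ≤ c8) (hLm : L ≤ m)
    (hmN : m ≤ (pairsF n).card)
    (hNk : ∀ k, k < L → 1 ≤ (pairsF n).card - k ∧
      (n : ℝ) * (m : ℝ) ≤ c8 * (((pairsF n).card - k : ℕ) : ℝ)) :
    (((validF n m).filter (fun E => T < XL L E)).card : ℝ) * ((T : ℝ) + 1)
      ≤ (∑ k ∈ Finset.range L, (((k * k).choose k : ℕ) : ℝ) * c8 ^ k)
        * ((validF n m).card : ℝ) := by
  classical
  set N := (pairsF n).card with hN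
  have hnat : ((validF n m).filter (fun E => T < XL L E)).card * (T + 1)
      ≤ ∑ k ∈ Finset.range L, n ^ k * ((k * k).choose k) * ((N - k).choose (m - k)) := by
    refine le_trans (markov L T m) ?_
    rw [double_count]
    have hmap : ∀ C ∈ circSmall n L, C.card ∈ Finset.range L := fun C hC =>
      Finset.mem_range.mpr (Finset.mem_filter.mp hC).2.2
    rw [← Finset.sum_fiberwise_of_maps_to hmap]
    refine Finset.sum_le_sum fun k _ => ?_
    calc ∑ C ∈ (circSmall n L).filter (fun C => C.card = k),
          ((validF n m).filter (fun E => C ⊆ E)).card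
        ≤ ∑ _C ∈ (circSmall n L).filter (fun C => C.card = k), (N - k).choose (m - k) := by
          refine Finset.sum_le_sum fun C hC => ?_
          rcases Finset.mem_filter.mp hC with ⟨hCs, hCk⟩
          have hCp : C ⊆ pairsF n := Finset.mem_powerset.mp (Finset.mem_filter.mp hCs).1
          have h := count_superset m C hCp
          rwa [hCk] at h
      _ = ((circSmall n L).filter (fun C => C.card = k)).card * ((N - k).choose (m - k)) := by
          rw [Finset.sum_const, smul_eq_mul]
      _ ≤ n ^ k * ((k * k).choose k) * ((N - k).choose (m - k)) :=
          Nat.mul_le_mul_right _ (circ_count L k)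
  have hcast : (((validF n m).filter (fun E => T < XL L E)).card : ℝ) * ((T : ℝ) + 1)
      ≤ (∑ k ∈ Finset.range L, (n ^ k * ((k * k).choose k) * ((N - k).choose (m - k)) : ℕ) : ℝ) := by
    push_cast
    exact_mod_cast Nat.cast_le.mpr hnat
  refine le_trans hcast ?_
  rw [Finset.sum_mul]
  push_cast
  refine Finset.sum_le_sum fun k hk => ?_
  obtain ⟨hNk1, hNk2⟩ := hNk k (Finset.mem_range.mp hk)
  have hkm : k ≤ m := le_trans (le_of_lt (Finset.mem_range.mp hk)) hLm
  have hch := choose_ratio N m k hkm hmN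
  have hNv : (validF n m).card = N.choose m := by rw [validF, Finset.card_powersetCard]
  have hNkpos : (0 : ℝ) < (((N - k : ℕ)) : ℝ) := by exact_mod_cast hNk1
  have hposk : (0 : ℝ) < (((N - k : ℕ)) : ℝ) ^ k := pow_pos hNkpos k
  refine le_of_mul_le_mul_right ?_ hposk
  have hpow : ((n : ℝ) * (m : ℝ)) ^ k ≤ (c8 * ((N - k : ℕ) : ℝ)) ^ k :=
    pow_le_pow_left₀ (by positivity) hNk2 k
  have hch' : (((N - k).choose (m - k) : ℕ) : ℝ) * (((N - k : ℕ)) : ℝ) ^ k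
      ≤ ((N.choose m : ℕ) : ℝ) * ((m : ℕ) : ℝ) ^ k := by
    exact_mod_cast hch
  calc (n : ℝ) ^ k * (((k * k).choose k : ℕ) : ℝ) * (((N - k).choose (m - k) : ℕ) : ℝ)
        * (((N - k : ℕ)) : ℝ) ^ k
      = (((k * k).choose k : ℕ) : ℝ) * (n : ℝ) ^ k
        * ((((N - k).choose (m - k) : ℕ) : ℝ) * (((N - k : ℕ)) : ℝ) ^ k) := by ring
    _ ≤ (((k * k).choose k : ℕ) : ℝ) * (n : ℝ) ^ k
        * (((N.choose m : ℕ) : ℝ) * ((m : ℕ) : ℝ) ^ k) := by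
        refine mul_le_mul_of_nonneg_left hch' (by positivity)
    _ = (((k * k).choose k : ℕ) : ℝ) * ((N.choose m : ℕ) : ℝ) * ((n : ℝ) * (m : ℝ)) ^ k := by
        rw [mul_pow]; ring
    _ ≤ (((k * k).choose k : ℕ) : ℝ) * ((N.choose m : ℕ) : ℝ)
        * (c8 * ((N - k : ℕ) : ℝ)) ^ k := by
        refine mul_le_mul_of_nonneg_left hpow (by positivity)
    _ = (((k * k).choose k : ℕ) : ℝ) * c8 ^ k * ((N.choose m : ℕ) : ℝ)
        * (((N - k : ℕ)) : ℝ) ^ k := by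
        rw [mul_pow]; ring
    _ = (((k * k).choose k : ℕ) : ℝ) * c8 ^ k * (((validF n m).card : ℕ) : ℝ)
        * (((N - k : ℕ)) : ℝ) ^ k := by rw [hNv]

end BM

lemma lp_bddAbove (n b : ℕ) (ω : GraphInst n) :
    BddAbove { v : ℝ | ∃ x : Sym2 (Fin n) → ℝ,
    (∀ e ∈ ω.1, 0 ≤ x e ∧ x e ≤ 1) ∧
    (∀ i : Fin n, ∑ e ∈ ω.1.filter (fun e => i ∈ e), x e ≤ (b : ℝ)) ∧
    v = ∑ e ∈ ω.1, ω.2 e * x e } := by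
  refine ⟨∑ e ∈ ω.1, |ω.2 e|, ?_⟩
  rintro v ⟨x, hx, hdeg, rfl⟩
  refine Finset.sum_le_sum fun e he => ?_
  obtain ⟨h0, h1⟩ := hx e he
  calc ω.2 e * x e ≤ |ω.2 e| * x e :=
        mul_le_mul_of_nonneg_right (le_abs_self _) h0
    _ ≤ |ω.2 e| * 1 := mul_le_mul_of_nonneg_left h1 (abs_nonneg _)
    _ = |ω.2 e| := mul_one _

lemma match_subset (n b : ℕ) (ω : GraphInst n) :
    { v : ℝ | ∃ M : Finset (Sym2 (Fin n)), M ⊆ ω.1 ∧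
      (∀ i : Fin n, (M.filter (fun e => i ∈ e)).card ≤ b) ∧
      v = ∑ e ∈ M, ω.2 e }
    ⊆ { v : ℝ | ∃ x : Sym2 (Fin n) → ℝ,
      (∀ e ∈ ω.1, 0 ≤ x e ∧ x e ≤ 1) ∧
      (∀ i : Fin n, ∑ e ∈ ω.1.filter (fun e => i ∈ e), x e ≤ (b : ℝ)) ∧
      v = ∑ e ∈ ω.1, ω.2 e * x e } := by
  rintro v ⟨M, hM, hdeg, rfl⟩
  refine ⟨fun e => if e ∈ M then 1 else 0, ?_, ?_, ?_⟩
  · intro e _; simp only []; split <;> norm_num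
  · intro i
    have hfs : (M.filter (fun e => i ∈ e)) =
        ((ω.1.filter (fun e => i ∈ e)).filter (fun e => e ∈ M)) := by
      ext e
      simp only [Finset.mem_filter, Finset.filter_filter]
      constructor
      · rintro ⟨heM, hie⟩; exact ⟨hM heM, hie, heM⟩
      · rintro ⟨_, hie, heM⟩; exact ⟨heM, hie⟩
    calc ∑ e ∈ ω.1.filter (fun e => i ∈ e), (if e ∈ M then (1:ℝ) else 0)
        = ((ω.1.filter (fun e => i ∈ e)).filter (fun e => e ∈ M)).card := by
          rw [Finset.sum_boole]
      _ ≤ (b : ℝ) := by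
          rw [← hfs]; exact_mod_cast hdeg i
  · have hfil : ω.1.filter (fun e => e ∈ M) = M := by
      ext e; simp only [Finset.mem_filter]
      exact ⟨fun h => h.2, fun h => ⟨hM h, h⟩⟩
    simp only [mul_ite, mul_one, mul_zero]
    rw [← Finset.sum_filter, hfil]

lemma part1 (n b : ℕ) (ω : GraphInst n) : bMatchingVal n b ω ≤ LPM0val n b ω :=
  csSup_le_csSup (lp_bddAbove n b ω) ⟨0, ∅, by simp⟩ (match_subset n b ω)

lemma det' (n b L : ℕ) (hL : 1 ≤ L) (ω : GraphInst n) (hE : ∀ e ∈ ω.1, ¬ e.IsDiag)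
    (B : ℝ) (hB : 0 ≤ B) (hw : ∀ e ∈ ω.1, ω.2 e ≤ B) :
    LPM0val n b ω ≤ bMatchingVal n b ω
      + B * ((BM.XL L ω.1 : ℝ) + (ω.1.card : ℝ) / L) := by
  unfold LPM0val
  refine csSup_le ⟨0, fun _ => 0, fun e _ => by norm_num, fun i => by
    simp only [Finset.sum_const_zero]; positivity, by simp⟩ ?_
  rintro v ⟨x, hx1, hx2, rfl⟩
  obtain ⟨M, hME, hdeg, hval⟩ := BM.det b L hL ω.1 hE ω.2 B hB hw x ⟨hx1, hx2⟩
  have hm : (∑ e ∈ M, ω.2 e) ≤ bMatchingVal n b ω := by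
    refine le_csSup ((lp_bddAbove n b ω).mono (match_subset n b ω)) ?_
    exact ⟨M, hME, fun i => hdeg i, rfl⟩
  have hv : BM.val ω.1 ω.2 x = ∑ e ∈ ω.1, ω.2 e * x e := rfl
  rw [← hv]
  linarith

lemma validEdgeSets_eq (n m : ℕ) :
    validEdgeSets n m = (↑(BM.validF n m) : Set (Finset (Sym2 (Fin n)))) := by
  ext E
  simp only [validEdgeSets, Set.mem_setOf_eq, BM.validF, Finset.mem_coe,
    Finset.mem_powersetCard, BM.pairsF]
  constructor
  · rintro ⟨hc, hd⟩
    exact ⟨fun e he => Finset.mem_filter.mpr ⟨Finset.mem_univ e, hd e he⟩, hc⟩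
  · rintro ⟨hs, hc⟩
    exact ⟨hc, fun e he => (Finset.mem_filter.mp (hs he)).2⟩

set_option maxHeartbeats 1000000 in
/-- **The fractional relaxation is asymptotically tight in `G(n, ⌊cn⌋)`.**
Deterministically `M_w(n,c,b) ≤ LPM⁰(n,c)`, and for every `ε > 0`, with probability tending
to `1`, `LPM⁰(n,c) − εn ≤ M_w(n,c,b)`. -/
theorem bmatching_lp_relaxation_tight
    (c : ℝ) (hc : 0 < c) (b : ℕ) (hb : 1 ≤ b)
    (μW : Measure ℝ) [IsProbabilityMeasure μW]
    (Bw : ℝ) (hBw : 0 ≤ Bw) (hsupp : μW (Set.Icc 0 Bw) = 1) :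
    (∀ (n : ℕ) (ω : GraphInst n), bMatchingVal n b ω ≤ LPM0val n b ω) ∧
    ∀ ε > (0 : ℝ),
      Tendsto (fun n : ℕ =>
          ((graphMeasure n ⌊c * n⌋₊ μW)
            {ω | LPM0val n b ω - ε * n ≤ bMatchingVal n b ω}).toReal)
        atTop (nhds 1) := by
  constructor
  · intro n ω; exact part1 n b ω
  intro ε hε
  set B : ℝ := Bw + 1 with hBdef
  have hB0 : 0 < B := by rw [hBdef]; linarith
  have hB0' : 0 ≤ B := le_of_lt hB0
  set L : ℕ := ⌈(2 * B * c) / ε⌉₊ + 1 with hLdef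
  have hL1 : 1 ≤ L := Nat.le_add_left 1 _
  have hLpos : (0 : ℝ) < L := by exact_mod_cast hL1
  have hLge : 2 * B * c / ε ≤ (L : ℝ) := by
    refine le_trans (Nat.le_ceil _) ?_
    rw [hLdef]; push_cast; linarith
  set Cst : ℝ := ∑ k ∈ Finset.range L, (((k * k).choose k : ℕ) : ℝ) * (8 * c + 1) ^ k
    with hCstdef
  have hCst0 : 0 ≤ Cst := Finset.sum_nonneg fun k _ => by positivity
  set A : ℝ := Cst * (2 * B) / ε with hAdef
  have hA0 : 0 ≤ A := by positivity
  have hlow : Tendsto (fun N : ℕ => 1 - A / (N : ℝ)) atTop (nhds 1) := by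
    have h0 := tendsto_const_div_atTop_nhds_zero_nat A
    have h1 := (tendsto_const_nhds (x := (1 : ℝ)) (f := (atTop : Filter ℕ))).sub h0
    simpa using h1
  obtain ⟨n₀, hn₀⟩ := exists_nat_ge
    (max (((L : ℝ) + 1) / c) (max (8 * (L : ℝ) + 8) (8 * c + 8)))
  have hev : ∀ᶠ (n : ℕ) in atTop,
      (1 - A / (n : ℝ) ≤ ((graphMeasure n ⌊c * n⌋₊ μW)
          {ω | LPM0val n b ω - ε * n ≤ bMatchingVal n b ω}).toReal ∧
        ((graphMeasure n ⌊c * n⌋₊ μW)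
          {ω | LPM0val n b ω - ε * n ≤ bMatchingVal n b ω}).toReal ≤ 1) := by
    filter_upwards [Filter.eventually_ge_atTop (max n₀ 3)] with n hn
    have hn3 : (3 : ℕ) ≤ n := le_trans (le_max_right _ _) hn
    have hn0' : n₀ ≤ n := le_trans (le_max_left _ _) hn
    have hnR : (max (((L : ℝ) + 1) / c) (max (8 * (L : ℝ) + 8) (8 * c + 8))) ≤ (n : ℝ) :=
      le_trans hn₀ (by exact_mod_cast hn0')
    have hr1 : ((L : ℝ) + 1) / c ≤ (n : ℝ) := le_trans (le_max_left _ _) hnR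
    have hr2 : 8 * (L : ℝ) + 8 ≤ (n : ℝ) :=
      le_trans (le_trans (le_max_left _ _) (le_max_right _ _)) hnR
    have hr3 : 8 * c + 8 ≤ (n : ℝ) :=
      le_trans (le_trans (le_max_right _ _) (le_max_right _ _)) hnR
    have hn3R : (3 : ℝ) ≤ (n : ℝ) := by exact_mod_cast hn3
    have hnpos : (0 : ℝ) < (n : ℝ) := by linarith
    have hcnL : (L : ℝ) + 1 ≤ c * n := by
      rw [div_le_iff₀ hc] at hr1; linarith
    set m := ⌊c * (n : ℝ)⌋₊ with hmdef
    have hmle : (m : ℝ) ≤ c * n := Nat.floor_le (by positivity)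
    have hLm : L ≤ m := Nat.le_floor (by linarith)
    have hNval : ((BM.pairsF n).card : ℝ) = (n : ℝ) * ((n : ℝ) - 1) / 2 := by
      rw [BM.pairs_card, Nat.cast_choose_two]
    have hLR : (0:ℝ) ≤ (L : ℝ) := le_of_lt hLpos
    have hNk : ∀ k : ℕ, k < L →
        (n : ℝ) * (n : ℝ) / 8 ≤ ((BM.pairsF n).card : ℝ) - (k : ℝ) := by
      intro k hk
      have hkL : (k : ℝ) < (L : ℝ) := by exact_mod_cast hk
      rw [hNval]
      nlinarith [hnpos, hr2, hkL, hn3R]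
    have hcn8 : c * (n : ℝ) ≤ (n : ℝ) * (n : ℝ) / 8 := by nlinarith
    have hmN : m ≤ (BM.pairsF n).card := by
      have h0 := hNk 0 (by omega)
      have : (m : ℝ) ≤ ((BM.pairsF n).card : ℝ) := by push_cast at h0 ⊢; linarith
      exact_mod_cast this
    have hNk' : ∀ k, k < L → 1 ≤ (BM.pairsF n).card - k ∧
        (n : ℝ) * (m : ℝ) ≤ (8 * c + 1) * (((BM.pairsF n).card - k : ℕ) : ℝ) := by
      intro k hk
      have h1 := hNk k hk
      have hkN : k ≤ (BM.pairsF n).card := by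
        have : (k : ℝ) ≤ ((BM.pairsF n).card : ℝ) := by nlinarith
        exact_mod_cast this
      have hcast : (((BM.pairsF n).card - k : ℕ) : ℝ)
          = ((BM.pairsF n).card : ℝ) - (k : ℝ) := Nat.cast_sub hkN
      constructor
      · have : (1 : ℝ) ≤ (((BM.pairsF n).card - k : ℕ) : ℝ) := by
          rw [hcast]; nlinarith
        exact_mod_cast this
      · rw [hcast]
        have h2 : (n : ℝ) * (m : ℝ) ≤ c * ((n : ℝ) * (n : ℝ)) := by nlinarith
        nlinarith
    -- measure-theoretic setup
    haveI hMSC : MeasurableSingletonClass (Finset (Sym2 (Fin n))) :=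
      ⟨fun _ => MeasurableSpace.measurableSet_top⟩
    have hvset : validEdgeSets n m = (↑(BM.validF n m) : Set _) := validEdgeSets_eq n m
    have hNvpos : 0 < (BM.validF n m).card := by
      rw [BM.validF, Finset.card_powersetCard]
      exact Nat.choose_pos hmN
    have hvne : (validEdgeSets n m).Nonempty := by
      rw [hvset]
      exact_mod_cast Finset.card_pos.mp hNvpos
    haveI hPM1 : IsProbabilityMeasure (uniformOn (validEdgeSets n m)) :=
      uniformOn_isProbabilityMeasure (Set.toFinite _) hvne
    haveI hPM : IsProbabilityMeasure (graphMeasure n m μW) := by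
      rw [graphMeasure]; infer_instance
    set T := ⌊ε * (n : ℝ) / (2 * B)⌋₊ with hTdef
    set AF := (BM.validF n m).filter (fun E => ¬ T < BM.XL L E) with hAFdef
    set Wset := Set.univ.pi (fun _ : Sym2 (Fin n) => Set.Icc (0 : ℝ) Bw) with hWsetdef
    have hsub : ((↑AF : Set (Finset (Sym2 (Fin n)))) ×ˢ Wset)
        ⊆ {ω : GraphInst n | LPM0val n b ω - ε * n ≤ bMatchingVal n b ω} := by
      rintro ⟨E, W⟩ ⟨hEmem, hWmem⟩
      have hEF : E ∈ AF := Finset.mem_coe.mp hEmem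
      rcases Finset.mem_filter.mp hEF with ⟨hEv, hXT'⟩
      have hXT : BM.XL L E ≤ T := not_lt.mp hXT'
      rcases Finset.mem_powersetCard.mp hEv with ⟨hEp, hEc⟩
      have hEnd : ∀ e ∈ E, ¬ e.IsDiag := fun e he => (Finset.mem_filter.mp (hEp he)).2
      have hWb : ∀ e ∈ E, W e ≤ B := by
        intro e _
        have hWe := hWmem e (Set.mem_univ e)
        rw [hBdef]
        exact le_trans hWe.2 (by linarith)
      have hdet := det' n b L hL1 (E, W) hEnd B hB0' hWb
      have hXle : (BM.XL L E : ℝ) ≤ (T : ℝ) := by exact_mod_cast hXT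
      have hTle : (T : ℝ) ≤ ε * n / (2 * B) := Nat.floor_le (by positivity)
      have herr : B * ((BM.XL L E : ℝ) + (E.card : ℝ) / L) ≤ ε * n := by
        have e1 : B * (BM.XL L E : ℝ) ≤ ε * n / 2 := by
          have := mul_le_mul_of_nonneg_left (le_trans hXle hTle) hB0'
          calc B * (BM.XL L E : ℝ) ≤ B * (ε * n / (2 * B)) := this
            _ = ε * n / 2 := by field_simp
        have e2 : B * ((E.card : ℝ) / L) ≤ ε * n / 2 := by
          rw [hEc]
          have hL2 : 2 * B * c ≤ ε * L := by
            rw [div_le_iff₀ hε] at hLge; linarith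
          have h5 : 2 * (B * (m : ℝ)) ≤ (ε * n) * L := by nlinarith
          have hq : B * ((m : ℝ) / L) = (B * (m : ℝ)) / L := by ring
          rw [hq, div_le_iff₀ hLpos]
          nlinarith
        calc B * ((BM.XL L E : ℝ) + (E.card : ℝ) / L)
            = B * (BM.XL L E : ℝ) + B * ((E.card : ℝ) / L) := by ring
          _ ≤ ε * n := by linarith
      simp only [Set.mem_setOf_eq]
      have : LPM0val n b (E, W) ≤ bMatchingVal n b (E, W) + ε * n := by
        refine le_trans hdet ?_
        have : bMatchingVal n b (E, W) + B * ((BM.XL L E : ℝ) + (E.card : ℝ) / L)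
            ≤ bMatchingVal n b (E, W) + ε * n := by linarith
        simpa using this
      linarith
    have hmono : (graphMeasure n m μW) ((↑AF : Set _) ×ˢ Wset)
        ≤ (graphMeasure n m μW) {ω : GraphInst n | LPM0val n b ω - ε * n ≤ bMatchingVal n b ω} :=
      measure_mono hsub
    have hrect : (graphMeasure n m μW) ((↑AF : Set _) ×ˢ Wset)
        = (((BM.validF n m).card : ℝ≥0∞))⁻¹ * ((AF.card : ℝ≥0∞)) := by
      rw [graphMeasure, MeasureTheory.Measure.prod_prod]
      have hw1 : (Measure.pi fun _ : Sym2 (Fin n) => μW) Wset = 1 := by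
        rw [hWsetdef, MeasureTheory.Measure.pi_pi]
        simp [hsupp]
      rw [hw1, mul_one]
      have hu : uniformOn (validEdgeSets n m) (↑AF : Set _)
          = (Measure.count (validEdgeSets n m))⁻¹
            * Measure.count (validEdgeSets n m ∩ (↑AF : Set _)) :=
        ProbabilityTheory.cond_apply MeasurableSpace.measurableSet_top Measure.count _
      rw [hu, hvset, ← Finset.coe_inter,
        Finset.inter_eq_right.mpr (Finset.filter_subset _ _),
        MeasureTheory.Measure.count_apply_finset,
        MeasureTheory.Measure.count_apply_finset]
    have hfin : (graphMeasure n m μW)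
        {ω : GraphInst n | LPM0val n b ω - ε * n ≤ bMatchingVal n b ω} ≠ ⊤ :=
      MeasureTheory.measure_ne_top _ _
    have hlowP : ((AF.card : ℝ)) / (((BM.validF n m).card : ℝ))
        ≤ ((graphMeasure n m μW)
          {ω : GraphInst n | LPM0val n b ω - ε * n ≤ bMatchingVal n b ω}).toReal := by
      have h1 := ENNReal.toReal_mono hfin hmono
      rw [hrect, ENNReal.toReal_mul, ENNReal.toReal_inv] at h1
      have hc1 : (((BM.validF n m).card : ℕ) : ℝ≥0∞).toReal = ((BM.validF n m).card : ℝ) := by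
        simp
      have hc2 : (((AF.card : ℕ) : ℝ≥0∞)).toReal = (AF.card : ℝ) := by simp
      rw [hc1, hc2] at h1
      rw [div_eq_inv_mul]
      exact h1
    -- Markov bound
    have hbad := BM.bad_ratio n m L T (8 * c + 1) (by linarith) hLm hmN hNk'
    have hsplitc : ((BM.validF n m).filter (fun E => T < BM.XL L E)).card + AF.card
        = (BM.validF n m).card := by
      rw [hAFdef]
      exact Finset.card_filter_add_card_filter_not _
    have hNvR : (0 : ℝ) < ((BM.validF n m).card : ℝ) := by exact_mod_cast hNvpos
    have hTp : (0 : ℝ) < (T : ℝ) + 1 := by positivity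
    have hbadR : (((BM.validF n m).filter (fun E => T < BM.XL L E)).card : ℝ)
        ≤ Cst * ((BM.validF n m).card : ℝ) / ((T : ℝ) + 1) := by
      rw [le_div_iff₀ hTp, hCstdef]
      exact hbad
    have hTlow : ε * (n : ℝ) / (2 * B) < (T : ℝ) + 1 := Nat.lt_floor_add_one _
    have hεn : (0 : ℝ) < ε * (n : ℝ) / (2 * B) := by positivity
    have h2 : Cst / ((T : ℝ) + 1) ≤ A / (n : ℝ) := by
      calc Cst / ((T : ℝ) + 1) ≤ Cst / (ε * (n : ℝ) / (2 * B)) :=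
            div_le_div_of_nonneg_left hCst0 hεn (le_of_lt hTlow)
        _ = A / (n : ℝ) := by
            rw [hAdef]; field_simp
            try ring
    have hNaR : (AF.card : ℝ)
        = ((BM.validF n m).card : ℝ)
          - (((BM.validF n m).filter (fun E => T < BM.XL L E)).card : ℝ) := by
      have h := congrArg (Nat.cast : ℕ → ℝ) hsplitc
      push_cast at h
      linarith
    constructor
    · -- lower bound
      refine le_trans ?_ hlowP
      rw [hNaR, sub_div]
      have hq1 : ((BM.validF n m).card : ℝ) / ((BM.validF n m).card : ℝ) = 1 :=
        div_self (ne_of_gt hNvR)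
      rw [hq1]
      have hq2 : (((BM.validF n m).filter (fun E => T < BM.XL L E)).card : ℝ)
          / ((BM.validF n m).card : ℝ) ≤ Cst / ((T : ℝ) + 1) := by
        rw [div_le_div_iff₀ hNvR hTp, hCstdef]
        exact hbad
      have := le_trans hq2 h2
      linarith
    · -- upper bound
      have hle1 : (graphMeasure n m μW)
          {ω : GraphInst n | LPM0val n b ω - ε * n ≤ bMatchingVal n b ω} ≤ 1 :=
        MeasureTheory.prob_le_one
      have := ENNReal.toReal_mono (by norm_num : (1 : ℝ≥0∞) ≠ ⊤) hle1
      simpa using this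
  exact tendsto_of_tendsto_of_tendsto_of_le_of_le' hlow tendsto_const_nhds
    (hev.mono fun n h => h.1) (hev.mono fun n h => h.2)
end
end
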